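/- arXiv:2603.12490 — 7 statements merged into one kernel-verified Lean document; each statement's English description precedes it below -/
import Mathlib

section
/- For a finite group G, a prime p, and an integer h ≥ 1, the rational number |Hom(ℤ_p^h, G)| / |G| is a p-local integer (i.e., its denominator is coprime to p). Here Hom(ℤ_p^h, G) denotes continuous homomorphisms, equivalently h-tuples of pairwise commuting elements of G each of p-power order. -/
open Subgroup Finset

section elts
variable {p : ℕ} {G : Type*} [Group G]

/-- `x` has `p`-power order. -/
def IsPElt (p : ℕ) (x : G) : Prop := ∃ k : ℕ, orderOf x = p ^ k

/-- `x` has order prime to `p`. -/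
def IsQElt (p : ℕ) (x : G) : Prop := ¬ p ∣ orderOf x

lemma isPElt_of_dvd (hp : p.Prime) {x : G} {k : ℕ} (h : orderOf x ∣ p ^ k) : IsPElt p x := by
  obtain ⟨j, _, hj⟩ := (Nat.dvd_prime_pow hp).mp h
  exact ⟨j, hj⟩

lemma IsPElt.mul (hp : p.Prime) {x y : G} (hc : Commute x y) (hx : IsPElt p x)
    (hy : IsPElt p y) : IsPElt p (x * y) := by
  obtain ⟨i, hi⟩ := hx; obtain ⟨j, hj⟩ := hy
  refine isPElt_of_dvd hp (k := i + j) ?_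
  refine dvd_trans hc.orderOf_mul_dvd_lcm ?_
  refine dvd_trans (Nat.lcm_dvd_mul _ _) ?_
  rw [hi, hj, pow_add]

lemma IsPElt.inv {x : G} (hx : IsPElt p x) : IsPElt p x⁻¹ := by
  obtain ⟨i, hi⟩ := hx; exact ⟨i, by rw [orderOf_inv, hi]⟩

lemma isPElt_one : IsPElt p (1 : G) := ⟨0, by simp⟩

lemma isQElt_of_dvd (hp : p.Prime) {x : G} {m : ℕ} (h : orderOf x ∣ m) (hm : ¬ p ∣ m) :
    IsQElt p x := fun hd => hm (hd.trans h)

lemma IsQElt.mul (hp : p.Prime) {x y : G} (hc : Commute x y) (hx : IsQElt p x)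
    (hy : IsQElt p y) : IsQElt p (x * y) := by
  refine isQElt_of_dvd hp (m := orderOf x * orderOf y)
    (dvd_trans hc.orderOf_mul_dvd_lcm (Nat.lcm_dvd_mul _ _)) ?_
  rw [hp.dvd_mul]; tauto

lemma IsQElt.inv {x : G} (hx : IsQElt p x) : IsQElt p x⁻¹ := by
  unfold IsQElt at *; rwa [orderOf_inv]

lemma isQElt_one (hp : p.Prime) : IsQElt p (1 : G) := by
  unfold IsQElt; rw [orderOf_one]; exact Nat.Prime.not_dvd_one hp

lemma eq_one_of_isPElt_isQElt (hp : p.Prime) {x : G} (h1 : IsPElt p x) (h2 : IsQElt p x) :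
    x = 1 := by
  obtain ⟨k, hk⟩ := h1
  rcases Nat.eq_zero_or_pos k with rfl | hkpos
  · rw [← orderOf_eq_one_iff, hk, pow_zero]
  · exact absurd (hk ▸ dvd_pow_self p hkpos.ne') h2

lemma exists_decomp (hp : p.Prime) [Finite G] (g : G) :
    ∃ u v : G, u * v = g ∧ u ∈ zpowers g ∧ v ∈ zpowers g ∧ IsPElt p u ∧ IsQElt p v := by
  set n := orderOf g with hn
  have hn0 : n ≠ 0 := (orderOf_pos g).ne'
  set k := n.factorization p with hk
  set m := n / p ^ k with hm
  have hnm : p ^ k * m = n := Nat.ordProj_mul_ordCompl_eq_self n p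
  have hpm : ¬ p ∣ m := Nat.not_dvd_ordCompl hp hn0
  have hco : IsCoprime ((p : ℤ) ^ k) (m : ℤ) := by
    rw [← Int.natCast_pow]
    rw [Int.isCoprime_iff_gcd_eq_one]
    exact_mod_cast (Nat.coprime_ordCompl hp hn0).pow_left k
  obtain ⟨α, β, hab⟩ := hco
  refine ⟨g ^ (β * (m : ℤ)), g ^ (α * (p : ℤ) ^ k), ?_, zpow_mem (mem_zpowers g) _,
    zpow_mem (mem_zpowers g) _, ?_, ?_⟩
  · rw [← zpow_add]
    have : β * (m : ℤ) + α * (p : ℤ) ^ k = 1 := by linarith [hab]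
    rw [this, zpow_one]
  · refine isPElt_of_dvd hp (k := k) (orderOf_dvd_of_pow_eq_one ?_)
    have : (g ^ (β * (m : ℤ))) ^ (p ^ k : ℕ) = g ^ (β * ((m : ℤ) * (p : ℤ) ^ k)) := by
      rw [← zpow_natCast, ← zpow_mul]; congr 1; push_cast; ring
    rw [this]
    have hmn : (m : ℤ) * (p : ℤ) ^ k = (n : ℤ) := by
      push_cast [← hnm]; ring
    rw [hmn, mul_comm, zpow_mul, zpow_natCast, hn, pow_orderOf_eq_one, one_zpow]
  · refine isQElt_of_dvd hp (m := m) (orderOf_dvd_of_pow_eq_one ?_) hpm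
    have : (g ^ (α * (p : ℤ) ^ k)) ^ (m : ℕ) = g ^ (α * ((p : ℤ) ^ k * (m : ℤ))) := by
      rw [← zpow_natCast, ← zpow_mul]; congr 1; push_cast; ring
    rw [this]
    have hmn : (p : ℤ) ^ k * (m : ℤ) = (n : ℤ) := by push_cast [← hnm]; ring
    rw [hmn, mul_comm, zpow_mul, zpow_natCast, hn, pow_orderOf_eq_one, one_zpow]

lemma decomp_eq_canonical (hp : p.Prime) [Finite G] {g u v w w' : G}
    (hw : w ∈ zpowers g) (hw' : w' ∈ zpowers g) (hwc : w * w' = g)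
    (hPw : IsPElt p w) (hQw' : IsQElt p w')
    (hc : Commute u v) (hP : IsPElt p u) (hQ : IsQElt p v) (he : u * v = g) :
    u = w ∧ v = w' := by
  have hug : Commute u g := by
    rw [← he]; exact (Commute.refl u).mul_right hc
  have hvg : Commute v g := by
    rw [← he]; exact hc.symm.mul_right (Commute.refl v)
  obtain ⟨a, ha⟩ := hw
  obtain ⟨b, hb⟩ := hw'
  have huw : Commute u w := by rw [← ha]; exact hug.zpow_right a
  have huw' : Commute u w' := by rw [← hb]; exact hug.zpow_right b
  have hvw : Commute v w := by rw [← ha]; exact hvg.zpow_right a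
  have hvw' : Commute v w' := by rw [← hb]; exact hvg.zpow_right b
  have key : w⁻¹ * u = w' * v⁻¹ := by
    have h2 : u * v = w * w' := by rw [he, hwc]
    calc w⁻¹ * u = w⁻¹ * (u * v) * v⁻¹ := by group
    _ = w⁻¹ * (w * w') * v⁻¹ := by rw [h2]
    _ = w' * v⁻¹ := by group
  have hx1 : IsPElt p (w⁻¹ * u) := IsPElt.mul hp (huw.symm.inv_left) hPw.inv hP
  have hx2 : IsQElt p (w' * v⁻¹) := IsQElt.mul hp (hvw'.symm.inv_right) hQw' hQ.inv
  have : w⁻¹ * u = 1 := eq_one_of_isPElt_isQElt hp hx1 (key ▸ hx2)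
  refine ⟨(inv_mul_eq_one.mp this).symm, ?_⟩
  have h5 : w' * v⁻¹ = 1 := key ▸ this
  exact (mul_inv_eq_one.mp h5).symm

lemma decomp_unique (hp : p.Prime) [Finite G] {u v u' v' : G}
    (hc : Commute u v) (hc' : Commute u' v')
    (hP : IsPElt p u) (hP' : IsPElt p u') (hQ : IsQElt p v) (hQ' : IsQElt p v')
    (he : u * v = u' * v') : u = u' ∧ v = v' := by
  obtain ⟨w, w', hwc, hwz, hw'z, hPw, hQw'⟩ := exists_decomp hp (u * v)
  obtain ⟨h1, h2⟩ := decomp_eq_canonical hp hwz hw'z hwc hPw hQw' hc hP hQ rfl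
  obtain ⟨h3, h4⟩ := decomp_eq_canonical hp hwz hw'z hwc hPw hQw' hc' hP' hQ' he.symm
  exact ⟨h1.trans h3.symm, h2.trans h4.symm⟩

end elts

open Subgroup Finset
open scoped Classical

section counting
variable {p : ℕ}


noncomputable def NP (p : ℕ) (G : Type*) [Group G] : ℕ :=
  Nat.card {x : G // IsPElt p x}

noncomputable def ShC (p : ℕ) (G : Type*) [Group G] (h : ℕ) : ℕ :=
  Nat.card {v : Fin h → G // (∀ i j, Commute (v i) (v j)) ∧
      ∀ i, ∃ k : ℕ, orderOf (v i) = p ^ k}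

variable {G H : Type*} [Group G] [Group H]

lemma orderOf_mulEquiv (e : G ≃* H) (x : G) : orderOf (e x) = orderOf x := by
  simpa using orderOf_injective e.toMonoidHom e.injective x

lemma isPElt'_congr (e : G ≃* H) (x : G) : IsPElt p (e x) ↔ IsPElt p x := by
  unfold IsPElt
  rw [orderOf_mulEquiv e x]

lemma commute_mulEquiv (e : G ≃* H) {x y : G} : Commute (e x) (e y) ↔ Commute x y := by
  unfold Commute SemiconjBy
  rw [← map_mul, ← map_mul]
  exact ⟨fun hh => e.injective hh, fun hh => congrArg e hh⟩

lemma NP_congr (e : G ≃* H) : NP p G = NP p H := by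
  refine Nat.card_congr (Equiv.subtypeEquiv e.toEquiv fun x => ?_)
  exact (isPElt'_congr e x).symm

lemma ShC_congr (e : G ≃* H) (h : ℕ) : ShC p G h = ShC p H h := by
  refine Nat.card_congr (Equiv.subtypeEquiv (Equiv.arrowCongr (Equiv.refl (Fin h)) e.toEquiv)
    fun v => ?_)
  simp only [Equiv.arrowCongr_apply, Equiv.refl_symm, Equiv.coe_refl, Function.comp,
    MulEquiv.coe_toEquiv, id_eq]
  constructor
  · rintro ⟨hcomm, hord⟩
    exact ⟨fun i j => (commute_mulEquiv e).mpr (hcomm i j),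
      fun i => (isPElt'_congr e (v i)).mpr (hord i)⟩
  · rintro ⟨hcomm, hord⟩
    exact ⟨fun i j => (commute_mulEquiv e).mp (hcomm i j),
      fun i => (isPElt'_congr e (v i)).mp (hord i)⟩

lemma centralizer_conj_eq (g x : G) :
    Subgroup.map (MulAut.conj g).toMonoidHom (centralizer {x}) = centralizer {g * x * g⁻¹} := by
  ext y
  simp only [Subgroup.mem_map, mem_centralizer_singleton_iff, MulEquiv.toMonoidHom_eq_coe,
    MonoidHom.coe_coe, MulAut.conj_apply]
  constructor
  · rintro ⟨z, hz, rfl⟩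
    have e1 : (g * z * g⁻¹) * (g * x * g⁻¹) = g * (z * x) * g⁻¹ := by group
    have e2 : (g * x * g⁻¹) * (g * z * g⁻¹) = g * (x * z) * g⁻¹ := by group
    rw [e1, e2, hz]
  · intro hy
    refine ⟨g⁻¹ * y * g, ?_, by group⟩
    have e1 : (g⁻¹ * y * g) * x = g⁻¹ * (y * (g * x * g⁻¹)) * g := by group
    have e2 : x * (g⁻¹ * y * g) = g⁻¹ * ((g * x * g⁻¹) * y) * g := by group
    rw [e1, e2, hy]

/-- conjugation gives a `MulEquiv` between centralizers of conjugate elements -/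
noncomputable def conjCentralizerEquiv (g x : G) :
    ↥(centralizer ({x} : Set G)) ≃* ↥(centralizer ({g * x * g⁻¹} : Set G)) :=
  ((MulAut.conj g).subgroupMap (centralizer {x})).trans
    (MulEquiv.subgroupCongr (centralizer_conj_eq g x))

variable [Fintype G]

lemma conj_orbit_card (x : G) :
    ((univ : Finset G).image fun g => g * x * g⁻¹).card *
      Nat.card ↥(centralizer ({x} : Set G)) = Nat.card G := by
  classical
  set O := (univ : Finset G).image fun g => g * x * g⁻¹ with hO
  have h1 : (univ : Finset G).card = ∑ y ∈ O, (univ.filter fun g => g * x * g⁻¹ = y).card := by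
    refine Finset.card_eq_sum_card_fiberwise fun g _ => ?_
    exact Finset.mem_image_of_mem _ (mem_univ g)
  have h2 : ∀ y ∈ O, (univ.filter fun g => g * x * g⁻¹ = y).card =
      Nat.card ↥(centralizer ({x} : Set G)) := by
    intro y hy
    obtain ⟨g, -, rfl⟩ := Finset.mem_image.mp hy
    rw [Nat.card_eq_fintype_card, Fintype.card_subtype]
    refine Finset.card_nbij' (fun h => g⁻¹ * h) (fun c => g * c) ?_ ?_ ?_ ?_
    · intro h hh
      simp only [Finset.coe_filter, Set.mem_setOf_eq, Finset.mem_filter, mem_univ, true_and] at hh ⊢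
      rw [mem_centralizer_singleton_iff]
      have e1 : (g⁻¹ * h) * x = g⁻¹ * (h * x * h⁻¹) * h := by group
      have e2 : x * (g⁻¹ * h) = g⁻¹ * (g * x * g⁻¹) * h := by group
      rw [e1, e2, hh]
    · intro c hc
      simp only [Finset.coe_filter, Set.mem_setOf_eq, Finset.mem_filter, mem_univ, true_and] at hc ⊢
      rw [mem_centralizer_singleton_iff] at hc
      have e1 : g * c * x * (g * c)⁻¹ = g * (c * x * c⁻¹) * g⁻¹ := by group
      rw [e1, hc]
      group
    · intro h _; group
    · intro c _; group
  rw [Finset.sum_congr rfl h2, Finset.sum_const, smul_eq_mul] at h1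
  rw [← h1, Nat.card_eq_fintype_card, Finset.card_univ]

lemma dvd_sum_orbits (f : G → ℕ) (d : ℕ)
    (hf : ∀ g x, f (g * x * g⁻¹) = f x) :
    ∀ S : Finset G, (∀ g x, x ∈ S → g * x * g⁻¹ ∈ S) →
    (∀ x ∈ S, d ∣ (Nat.card G / Nat.card ↥(centralizer ({x} : Set G))) * f x) →
    d ∣ ∑ x ∈ S, f x := by
  classical
  intro S
  induction S using Finset.strongInduction with
  | _ S ih =>
    intro hcl hd
    rcases S.eq_empty_or_nonempty with rfl | ⟨x, hx⟩
    · simp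
    · set O := (univ : Finset G).image fun g => g * x * g⁻¹ with hOdef
      have hOS : O ⊆ S := by
        intro y hy
        obtain ⟨g, -, rfl⟩ := Finset.mem_image.mp hy
        exact hcl g x hx
      have hxO : x ∈ O := Finset.mem_image.mpr ⟨1, mem_univ 1, by group⟩
      have hsplit : ∑ y ∈ S \ O, f y + ∑ y ∈ O, f y = ∑ y ∈ S, f y :=
        Finset.sum_sdiff hOS
      have hconst : ∑ y ∈ O, f y = O.card * f x := by
        rw [Finset.sum_congr rfl (fun y hy => ?_), Finset.sum_const, smul_eq_mul]
        obtain ⟨g, -, rfl⟩ := Finset.mem_image.mp hy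
        exact hf g x
      have hOcard : O.card = Nat.card G / Nat.card ↥(centralizer ({x} : Set G)) := by
        have hoc := conj_orbit_card x
        have hpos : 0 < Nat.card ↥(centralizer ({x} : Set G)) := Nat.card_pos
        exact (Nat.div_eq_of_eq_mul_left hpos hoc.symm).symm
      have hdO : d ∣ ∑ y ∈ O, f y := by
        rw [hconst, hOcard]; exact hd x hx
      have hdRest : d ∣ ∑ y ∈ S \ O, f y := by
        refine ih (S \ O) (Finset.sdiff_ssubset hOS ⟨x, hxO⟩) ?_ ?_
        · intro g y hy
          rw [Finset.mem_sdiff] at hy ⊢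
          refine ⟨hcl g y hy.1, fun hc => hy.2 ?_⟩
          obtain ⟨a, -, ha⟩ := Finset.mem_image.mp hc
          refine Finset.mem_image.mpr ⟨g⁻¹ * a, mem_univ _, ?_⟩
          have e1 : g⁻¹ * a * x * (g⁻¹ * a)⁻¹ = g⁻¹ * (a * x * a⁻¹) * g := by group
          rw [e1, ha]
          group
        · intro y hy; exact hd y (Finset.mem_sdiff.mp hy).1
      rw [← hsplit]
      exact dvd_add hdRest hdO

end counting
section identities
variable {p : ℕ} {G : Type*} [Group G]

open scoped Classical in
lemma isPElt_coe {K : Subgroup G} (u : K) : IsPElt p (u : G) ↔ IsPElt p u := by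
  unfold IsPElt; rw [orderOf_coe]

lemma commute_subtype {K : Subgroup G} (a b : K) : Commute a b ↔ Commute (a : G) (b : G) := by
  constructor
  · intro hh; exact congrArg Subtype.val hh
  · intro hh; exact Subtype.ext hh

lemma card_fiber_eq_NP (v : G) :
    Nat.card {u : G // u ∈ centralizer ({v} : Set G) ∧ IsPElt p u} =
      NP p ↥(centralizer ({v} : Set G)) := by
  unfold NP
  refine Nat.card_congr
    { toFun := fun u => ⟨⟨u.1, u.2.1⟩, (isPElt_coe (⟨u.1, u.2.1⟩ :
        centralizer ({v} : Set G))).mp u.2.2⟩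
      invFun := fun w => ⟨w.1.1, w.1.2, (isPElt_coe w.1).mpr w.2⟩
      left_inv := fun u => rfl
      right_inv := fun w => rfl }

open scoped Classical in
lemma card_eq_sum_NP (hp : p.Prime) [Fintype G] :
    Nat.card G = ∑ v ∈ univ.filter (fun v : G => IsQElt p v),
      NP p ↥(centralizer ({v} : Set G)) := by
  have E : (Σ v : {v : G // IsQElt p v},
      {u : G // u ∈ centralizer ({v.1} : Set G) ∧ IsPElt p u}) ≃ G := by
    refine Equiv.ofBijective (fun w => w.2.1 * w.1.1) ⟨?_, ?_⟩
    · rintro ⟨⟨v, hv⟩, ⟨u, hu1, hu2⟩⟩ ⟨⟨v', hv'⟩, ⟨u', hu1', hu2'⟩⟩ he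
      simp only at he
      have hc : Commute u v := mem_centralizer_singleton_iff.mp hu1
      have hc' : Commute u' v' := mem_centralizer_singleton_iff.mp hu1'
      obtain ⟨h1, h2⟩ := decomp_unique hp hc hc' hu2 hu2' hv hv' he
      subst h1; subst h2; rfl
    · intro g
      obtain ⟨u, v, huv, hu_z, hv_z, hPu, hQv⟩ := exists_decomp hp g
      obtain ⟨a, ha⟩ := hu_z
      obtain ⟨b, hb⟩ := hv_z
      have hc : Commute u v := by
        rw [← ha, ← hb]; exact Commute.zpow_zpow_self g a b
      exact ⟨⟨⟨v, hQv⟩, ⟨u, mem_centralizer_singleton_iff.mpr hc, hPu⟩⟩, huv⟩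
  have h1 : Nat.card G = ∑ v : {v : G // IsQElt p v},
      Nat.card {u : G // u ∈ centralizer ({v.1} : Set G) ∧ IsPElt p u} := by
    rw [← Nat.card_congr E, Nat.card_eq_fintype_card, Fintype.card_sigma]
    simp [Nat.card_eq_fintype_card]
  rw [h1]
  rw [Finset.sum_congr rfl (fun v _ => card_fiber_eq_NP v.1)]
  rw [← Finset.sum_subtype (univ.filter (fun v : G => IsQElt p v)) (fun x => by simp)
    (fun v => NP p ↥(centralizer ({v} : Set G)))]

open scoped Classical in
lemma ShC_succ (hp : p.Prime) [Fintype G] (h : ℕ) :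
    ShC p G (h + 1) = ∑ x ∈ univ.filter (fun x : G => IsPElt p x),
      ShC p ↥(centralizer ({x} : Set G)) h := by
  have F : (Σ x : {x : G // IsPElt p x},
        {w : Fin h → ↥(centralizer ({x.1} : Set G)) //
          (∀ i j, Commute (w i) (w j)) ∧ ∀ i, ∃ k : ℕ, orderOf (w i) = p ^ k}) ≃
      {v : Fin (h + 1) → G // (∀ i j, Commute (v i) (v j)) ∧
          ∀ i, ∃ k : ℕ, orderOf (v i) = p ^ k} := by
    refine Equiv.ofBijective (fun s => ⟨Fin.cons s.1.1 (fun i => (s.2.1 i : G)), ?_, ?_⟩) ⟨?_, ?_⟩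
    · intro i j
      refine Fin.cases ?_ ?_ i <;> [skip; intro i'] <;> refine Fin.cases ?_ ?_ j <;>
        try intro j'
      · simp
      · simp only [Fin.cons_zero, Fin.cons_succ]
        have := (s.2.1 j').2
        rw [mem_centralizer_singleton_iff] at this
        exact this.symm
      · simp only [Fin.cons_zero, Fin.cons_succ]
        have := (s.2.1 i').2
        rw [mem_centralizer_singleton_iff] at this
        exact this
      · simp only [Fin.cons_succ]
        exact (commute_subtype _ _).mp (s.2.2.1 i' j')
    · intro i
      refine Fin.cases ?_ ?_ i
      · simpa [IsPElt] using s.1.2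
      · intro i'
        simp only [Fin.cons_succ]
        have := s.2.2.2 i'
        rwa [← orderOf_coe (s.2.1 i')] at this
    · rintro ⟨⟨x, hx⟩, ⟨w, hw⟩⟩ ⟨⟨x', hx'⟩, ⟨w', hw'⟩⟩ he
      have hfun : Fin.cons (α := fun _ => G) x (fun i => (w i : G)) =
          Fin.cons x' (fun i => (w' i : G)) := congrArg Subtype.val he
      have h0 : x = x' := by
        have := congrFun hfun 0
        simpa using this
      subst h0
      have hww : w = w' := by
        funext i
        have := congrFun hfun i.succ
        simp only [Fin.cons_succ] at this
        exact Subtype.ext this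
      subst hww
      rfl
    · rintro ⟨v, hv1, hv2⟩
      refine ⟨⟨⟨v 0, hv2 0⟩, ⟨fun i => ⟨v i.succ, ?_⟩, ?_, ?_⟩⟩, ?_⟩
      · exact mem_centralizer_singleton_iff.mpr (hv1 i.succ 0)
      · intro i j
        exact (commute_subtype _ _).mpr (hv1 i.succ j.succ)
      · intro i
        exact (isPElt_coe _).mp (hv2 i.succ)
      · refine Subtype.ext (funext fun i => ?_)
        refine Fin.cases ?_ ?_ i
        · simp
        · intro i'; simp
  have h1 : ShC p G (h + 1) = ∑ x : {x : G // IsPElt p x},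
      ShC p ↥(centralizer ({x.1} : Set G)) h := by
    unfold ShC
    rw [← Nat.card_congr F, Nat.card_eq_fintype_card, Fintype.card_sigma]
    simp [Nat.card_eq_fintype_card]
  rw [h1]
  rw [← Finset.sum_subtype (univ.filter (fun x : G => IsPElt p x)) (fun x => by simp)
    (fun x => ShC p ↥(centralizer ({x} : Set G)) h)]

end identities
section main
universe u
variable {p : ℕ}

lemma orderOf_conj {G : Type*} [Group G] (g x : G) : orderOf (g * x * g⁻¹) = orderOf x := by
  have := orderOf_mulEquiv (MulAut.conj g) x
  simpa [MulAut.conj_apply] using this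

lemma mem_center_of_conj_mem_center {G : Type*} [Group G] {g x : G}
    (hc : g * x * g⁻¹ ∈ Subgroup.center G) : x ∈ Subgroup.center G := by
  have hgy := Subgroup.mem_center_iff.mp hc g
  have hx : g * x * g⁻¹ = x := by
    have : g * (g * x * g⁻¹) = (g * x * g⁻¹) * g := hgy
    calc g * x * g⁻¹ = g⁻¹ * (g * (g * x * g⁻¹)) * g⁻¹ * g := by group
    _ = g⁻¹ * ((g * x * g⁻¹) * g) * g⁻¹ * g := by rw [this]
    _ = x := by group
  rwa [hx] at hc

lemma centralizer_ne_top_of_not_central {G : Type*} [Group G] {x : G}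
    (hx : x ∉ Subgroup.center G) : centralizer ({x} : Set G) ≠ ⊤ := by
  intro htop
  apply hx
  rw [Subgroup.mem_center_iff]
  intro g'
  have hg' : g' ∈ centralizer ({x} : Set G) := htop ▸ Subgroup.mem_top g'
  exact mem_centralizer_singleton_iff.mp hg'

open scoped Classical in
lemma dvd_index_mul_of_dvd {G : Type u} [Group G] [Fintype G] (K : Subgroup G) (N : ℕ)
    (hN : p ^ ((Nat.card ↥K).factorization p) ∣ N) :
    p ^ ((Nat.card G).factorization p) ∣ (Nat.card G / Nat.card ↥K) * N := by
  have hdvdC : Nat.card ↥K ∣ Nat.card G := Subgroup.card_subgroup_dvd_card _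
  have hC0 : Nat.card ↥K ≠ 0 := Nat.card_pos.ne'
  have hG0 : Nat.card G ≠ 0 := Nat.card_pos.ne'
  have hidx : (Nat.card G / Nat.card ↥K) * Nat.card ↥K = Nat.card G :=
    Nat.div_mul_cancel hdvdC
  have hidx0 : Nat.card G / Nat.card ↥K ≠ 0 := by
    intro hh; rw [hh, zero_mul] at hidx; exact hG0 hidx.symm
  have hfac : (Nat.card G).factorization p =
      (Nat.card G / Nat.card ↥K).factorization p + (Nat.card ↥K).factorization p := by
    conv_lhs => rw [← hidx]
    rw [Nat.factorization_mul hidx0 hC0]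
    simp
  rw [hfac, pow_add]
  exact mul_dvd_mul (Nat.ordProj_dvd _ _) hN

open scoped Classical in
theorem frobenius_pelt (hp : p.Prime) :
    ∀ (n : ℕ) (G : Type u) [Group G] [Fintype G], Nat.card G ≤ n →
      p ^ ((Nat.card G).factorization p) ∣ NP p G := by
  intro n
  induction n with
  | zero =>
    intro G _ _ hle
    exact absurd (Nat.card_pos.trans_le hle) (by simp)
  | succ n ih =>
    intro G _ _ hle
    set a := (Nat.card G).factorization p with ha
    have hid := card_eq_sum_NP (G := G) hp
    rw [← Finset.sum_filter_add_sum_filter_not (univ.filter (fun v : G => IsQElt p v))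
      (fun v => v ∈ Subgroup.center G)] at hid
    -- central part
    have hcentral : ∀ v ∈ (univ.filter (fun v : G => IsQElt p v)).filter
        (fun v => v ∈ Subgroup.center G), NP p ↥(centralizer ({v} : Set G)) = NP p G := by
      intro v hv
      rw [Finset.mem_filter] at hv
      have htop : centralizer ({v} : Set G) = ⊤ := by
        rw [eq_top_iff']
        intro y
        rw [mem_centralizer_singleton_iff]
        exact Subgroup.mem_center_iff.mp hv.2 y
      exact NP_congr ((MulEquiv.subgroupCongr htop).trans Subgroup.topEquiv)
    rw [Finset.sum_congr rfl hcentral, Finset.sum_const, smul_eq_mul] at hid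
    set z := ((univ.filter (fun v : G => IsQElt p v)).filter
      (fun v => v ∈ Subgroup.center G)).card with hzdef
    -- p does not divide z
    let QZ : Subgroup G :=
      { carrier := {x : G | IsQElt p x ∧ x ∈ Subgroup.center G}
        one_mem' := ⟨isQElt_one hp, Subgroup.one_mem _⟩
        mul_mem' := by
          rintro x y ⟨hx1, hx2⟩ ⟨hy1, hy2⟩
          refine ⟨IsQElt.mul hp ?_ hx1 hy1, Subgroup.mul_mem _ hx2 hy2⟩
          exact (Subgroup.mem_center_iff.mp hx2 y).symm
        inv_mem' := by
          rintro x ⟨h1, h2⟩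
          exact ⟨h1.inv, Subgroup.inv_mem _ h2⟩ }
    have hzQZ : z = Nat.card ↥QZ := by
      rw [hzdef, Finset.filter_filter, Nat.card_eq_fintype_card, Fintype.card_subtype]
      congr 1
      apply Finset.filter_congr
      intro x _
      constructor
      · rintro ⟨h1, h2⟩; exact ⟨h1, h2⟩
      · rintro ⟨h1, h2⟩; exact ⟨h1, h2⟩
    have hpz : ¬ p ∣ z := by
      rw [hzQZ]
      intro hdvd
      haveI := Fact.mk hp
      haveI : Fintype ↥QZ := Fintype.ofFinite ↥QZ
      obtain ⟨x, hx⟩ := exists_prime_orderOf_dvd_card (G := ↥QZ) p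
        (by rwa [← Nat.card_eq_fintype_card])
      have hQ : IsQElt p (x : G) := x.2.1
      rw [IsQElt, orderOf_coe, hx] at hQ
      exact hQ dvd_rfl
    -- noncentral part
    have hnon : p ^ a ∣ ∑ v ∈ (univ.filter (fun v : G => IsQElt p v)).filter
        (fun v => ¬ v ∈ Subgroup.center G), NP p ↥(centralizer ({v} : Set G)) := by
      refine dvd_sum_orbits _ _ ?_ _ ?_ ?_
      · intro g x
        exact (NP_congr (conjCentralizerEquiv g x)).symm
      · intro g x hxS
        rw [Finset.mem_filter, Finset.mem_filter] at hxS ⊢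
        obtain ⟨⟨-, hQx⟩, hnc⟩ := hxS
        refine ⟨⟨Finset.mem_univ _, ?_⟩, ?_⟩
        · rw [IsQElt, orderOf_conj]; exact hQx
        · intro hc; exact hnc (mem_center_of_conj_mem_center hc)
      · intro x hxS
        rw [Finset.mem_filter, Finset.mem_filter] at hxS
        obtain ⟨⟨-, hQx⟩, hnc⟩ := hxS
        have hne : centralizer ({x} : Set G) ≠ ⊤ := centralizer_ne_top_of_not_central hnc
        have hlt : Nat.card ↥(centralizer ({x} : Set G)) < Nat.card G :=
          lt_of_le_of_ne (Subgroup.card_le_card_group _)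
            (fun hh => hne ((Subgroup.card_eq_iff_eq_top _).mp hh))
        have hC := ih ↥(centralizer ({x} : Set G)) (by omega)
        exact dvd_index_mul_of_dvd _ _ hC
    -- combine
    have hcardG : p ^ a ∣ Nat.card G := Nat.ordProj_dvd _ _
    have hzNP : p ^ a ∣ z * NP p G := by
      have : z * NP p G = Nat.card G - ∑ v ∈ (univ.filter (fun v : G => IsQElt p v)).filter
          (fun v => ¬ v ∈ Subgroup.center G), NP p ↥(centralizer ({v} : Set G)) := by
        omega
      rw [this]
      exact Nat.dvd_sub hcardG hnon
    have hcop : Nat.Coprime (p ^ a) z :=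
      Nat.Coprime.pow_left a ((Nat.Prime.coprime_iff_not_dvd hp).mpr hpz)
    exact (Nat.Coprime.dvd_of_dvd_mul_left hcop hzNP)

lemma ShC_one (G : Type*) [Group G] : ShC p G 1 = NP p G := by
  unfold ShC NP
  refine Nat.card_congr
    { toFun := fun v => ⟨v.1 0, v.2.2 0⟩
      invFun := fun x => ⟨fun _ => x.1, fun i j => Commute.refl _, fun i => x.2⟩
      left_inv := fun v => Subtype.ext (funext fun i => congrArg v.1 (Subsingleton.elim 0 i))
      right_inv := fun x => rfl }

open scoped Classical in
theorem main_dvd (hp : p.Prime) :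
    ∀ (n : ℕ) (G : Type u) [Group G] [Fintype G], Nat.card G ≤ n →
      ∀ h : ℕ, 1 ≤ h → p ^ ((Nat.card G).factorization p) ∣ ShC p G h := by
  intro n
  induction n with
  | zero =>
    intro G _ _ hle
    exact absurd (Nat.card_pos.trans_le hle) (by simp)
  | succ n ih =>
    intro G _ _ hle h
    induction h with
    | zero => omega
    | succ h ihh =>
      intro _
      rcases Nat.eq_zero_or_pos h with rfl | hpos
      · rw [ShC_one]
        exact frobenius_pelt hp (n + 1) G hle
      · rw [ShC_succ hp h]
        refine dvd_sum_orbits _ _ ?_ _ ?_ ?_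
        · intro g x
          exact (ShC_congr (conjCentralizerEquiv g x) h).symm
        · intro g x hxS
          rw [Finset.mem_filter] at hxS ⊢
          refine ⟨Finset.mem_univ _, ?_⟩
          obtain ⟨k, hk⟩ := hxS.2
          exact ⟨k, by rw [orderOf_conj, hk]⟩
        · intro x hxS
          by_cases htop : centralizer ({x} : Set G) = ⊤
          · have hcc : Nat.card ↥(centralizer ({x} : Set G)) = Nat.card G := by
              rw [htop]
              exact Subgroup.card_top
            rw [hcc, Nat.div_self Nat.card_pos, one_mul]
            have heq : ShC p ↥(centralizer ({x} : Set G)) h = ShC p G h :=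
              ShC_congr ((MulEquiv.subgroupCongr htop).trans Subgroup.topEquiv) h
            rw [heq]
            exact ihh hpos
          · have hlt : Nat.card ↥(centralizer ({x} : Set G)) < Nat.card G :=
              lt_of_le_of_ne (Subgroup.card_le_card_group _)
                (fun hh => htop ((Subgroup.card_eq_iff_eq_top _).mp hh))
            have hC := ih ↥(centralizer ({x} : Set G)) (by omega) h hpos
            exact dvd_index_mul_of_dvd _ _ hC

end main
/-- For a finite group `G`, a prime `p`, and `h ≥ 1`, the rational number
`|Hom(ℤ_p^h, G)| / |G|` is a `p`-local integer.  Homomorphisms `ℤ_p^h → G` are encoded as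
`h`-tuples of pairwise commuting elements of `G`, each of `p`-power order. -/
theorem stmt0 (G : Type*) [Group G] [Fintype G] (p : ℕ) (hp : p.Prime) (h : ℕ) (hh : 1 ≤ h) :
    ∃ a b : ℤ, ¬ (p : ℤ) ∣ b ∧
      ((Nat.card {v : Fin h → G // (∀ i j, Commute (v i) (v j)) ∧
          ∀ i, ∃ k : ℕ, orderOf (v i) = p ^ k} : ℚ) / (Fintype.card G : ℚ)) = (a : ℚ) / (b : ℚ) := by
  classical
  obtain ⟨c, hc⟩ : p ^ ((Nat.card G).factorization p) ∣ ShC p G h :=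
    main_dvd hp (Nat.card G) G le_rfl h hh
  set a := (Nat.card G).factorization p with haa
  set b := Nat.card G / p ^ a with hbb
  have hG0 : Nat.card G ≠ 0 := Nat.card_pos.ne'
  have hb : p ^ a * b = Nat.card G := Nat.ordProj_mul_ordCompl_eq_self _ p
  have hpb : ¬ p ∣ b := Nat.not_dvd_ordCompl hp hG0
  have hb0 : b ≠ 0 := by
    intro hb0; rw [hb0, mul_zero] at hb; exact hG0 hb.symm
  refine ⟨(c : ℤ), (b : ℤ), ?_, ?_⟩
  · exact_mod_cast hpb
  · show ((ShC p G h : ℕ) : ℚ) / (Fintype.card G : ℚ) = ((c : ℤ) : ℚ) / ((b : ℤ) : ℚ)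
    have hFG : (Fintype.card G : ℚ) = ((Nat.card G : ℕ) : ℚ) := by
      rw [Nat.card_eq_fintype_card]
    rw [hFG, hc, ← hb]
    push_cast
    have hpa : ((p : ℚ)) ^ a ≠ 0 := pow_ne_zero a (by exact_mod_cast hp.ne_zero)
    rw [mul_div_mul_left _ _ hpa]
end

section
/- For any finite group G and any positive integer m, the number of elements g ∈ G with g^m = 1 is divisible by gcd(m, |G|). In particular, if m divides |G|, then m divides |{g ∈ G : g^m = 1}| (Frobenius' theorem). -/
open Subgroup MulAction

attribute [local instance] Classical.propDecidable

noncomputable section FrobeniusProof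

/-- The number of solutions of `x ^ n = 1` in `G`. -/
def Fcount (G : Type*) [Group G] (n : ℕ) : ℕ := Nat.card {x : G // x ^ n = 1}

lemma Fcount_congr {G H : Type*} [Group G] [Group H] (e : G ≃* H) (n : ℕ) :
    Fcount G n = Fcount H n :=
  Nat.card_congr <| Equiv.subtypeEquiv e.toEquiv <| fun x => by
    rw [show e.toEquiv x = e x from rfl, ← map_pow, MulEquiv.map_eq_one_iff]

lemma Fcount_gcd (G : Type*) [Group G] [Fintype G] (n : ℕ) :
    Fcount G n = Fcount G (Nat.gcd n (Fintype.card G)) :=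
  Nat.card_congr <| Equiv.subtypeEquiv (Equiv.refl G) fun _ => by
    rw [pow_gcd_eq_one]; exact ⟨fun h => ⟨h, pow_card_eq_one⟩, fun h => h.1⟩

/-- Bezout-type lemma. -/
lemma bezout_nat {k q : ℕ} (h : Nat.Coprime k q) (hq : 1 < q) : ∃ t s : ℕ, k * t = 1 + q * s := by
  haveI : NeZero q := ⟨by omega⟩
  set j := ZMod.unitOfCoprime k h
  have h1 : ((k * ((j⁻¹ : (ZMod q)ˣ) : ZMod q).val : ℕ) : ZMod q) = 1 := by
    push_cast
    rw [ZMod.natCast_val, ZMod.cast_id, ← ZMod.coe_unitOfCoprime k h, ← Units.val_mul,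
      mul_inv_cancel, Units.val_one]
  obtain ⟨s, hs⟩ := (ZMod.natCast_eq_iff q _ 1).mp h1
  have hv1 : (1 : ZMod q).val = 1 := by haveI : Fact (1 < q) := ⟨hq⟩; exact ZMod.val_one q
  exact ⟨((j⁻¹ : (ZMod q)ˣ) : ZMod q).val, s, by omega⟩

lemma L3 {m a c f : ℕ} (h1 : m ∣ a * c) (h2 : Nat.gcd m c ∣ f) : m ∣ a * f := by
  rcases eq_or_ne m 0 with rfl | hm
  · rcases mul_eq_zero.mp (zero_dvd_iff.mp h1) with rfl | rfl
    · simp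
    · have : f = 0 := by simpa using h2
      simp [this]
  rcases eq_or_ne a 0 with rfl | ha
  · simp
  rcases eq_or_ne c 0 with rfl | hc
  · exact Dvd.dvd.mul_left (by simpa using h2) a
  rcases eq_or_ne f 0 with rfl | hf
  · simp
  rw [← Nat.factorization_le_iff_dvd hm (by positivity)]
  have h1' := (Nat.factorization_le_iff_dvd hm (by positivity)).mpr h1
  have h2' := (Nat.factorization_le_iff_dvd (Nat.gcd_ne_zero_left hm) hf).mpr h2
  rw [Nat.factorization_mul ha hc] at h1'
  rw [Nat.factorization_gcd hm hc] at h2'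
  rw [Nat.factorization_mul ha hf]
  intro r
  have e1 := h1' r
  have e2 := h2' r
  simp only [Finsupp.add_apply, Finsupp.inf_apply] at e1 e2 ⊢
  omega

lemma L4 {p α m a b X : ℕ} (hp : p.Prime) (hpm : ¬ p ∣ m) (h1 : m ∣ a * X)
    (h2 : a ∣ p ^ α * b) : m ∣ b * X := by
  have hm : m ≠ 0 := by rintro rfl; exact hpm (dvd_zero p)
  rcases eq_or_ne b 0 with rfl | hb
  · simp
  rcases eq_or_ne X 0 with rfl | hX
  · simp
  have ha : a ≠ 0 := by
    rintro rfl
    have := zero_dvd_iff.mp h2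
    have : b = 0 := by
      rcases mul_eq_zero.mp this with h | h
      · exact absurd h (pow_ne_zero α hp.ne_zero)
      · exact h
    exact hb this
  rw [← Nat.factorization_le_iff_dvd hm (by positivity)]
  have h1' := (Nat.factorization_le_iff_dvd hm (by positivity)).mpr h1
  have h2' := (Nat.factorization_le_iff_dvd ha (mul_ne_zero (pow_ne_zero α hp.ne_zero) hb)).mpr h2
  rw [Nat.factorization_mul ha hX] at h1'
  rw [Nat.factorization_mul (pow_ne_zero α hp.ne_zero) hb] at h2'
  rw [Nat.factorization_mul hb hX]
  intro r
  have e1 := h1' r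
  have e2 := h2' r
  simp only [Finsupp.add_apply] at e1 e2 ⊢
  rcases eq_or_ne (m.factorization r) 0 with h0 | h0
  · omega
  -- r divides m, so r ≠ p
  have hrm : r ∣ m := by
    by_contra hr
    exact h0 (Nat.factorization_eq_zero_of_not_dvd hr)
  have hrp : r ≠ p := by rintro rfl; exact hpm hrm
  have : (p ^ α).factorization r = 0 := by
    rw [Nat.Prime.factorization_pow hp]
    simp [Finsupp.single_apply, (Ne.symm hrp)]
  omega
section Chunk2

variable {G : Type*} [Group G]

lemma pow_eq_pow_of_mod {u : G} {q a b : ℕ} (hu : orderOf u = q) (h : a % q = b % q) :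
    u ^ a = u ^ b :=
  calc u ^ a = u ^ (a % orderOf u) := (pow_mod_orderOf u a).symm
  _ = u ^ (b % orderOf u) := by rw [hu, h]
  _ = u ^ b := pow_mod_orderOf u b

lemma orderOf_pow_coprime' {y : G} {q k : ℕ} (hy : orderOf y = q) (hq : 1 < q)
    (hk : Nat.Coprime k q) : orderOf (y ^ k) = q := by
  obtain ⟨t, s, hts⟩ := bezout_nat hk hq
  have hgen : (y ^ k) ^ t = y := by
    rw [← pow_mul, hts, pow_add, pow_one, pow_mul, ← hy, pow_orderOf_eq_one, one_pow, mul_one]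
  apply Nat.dvd_antisymm
  · rw [← hy]; exact orderOf_pow_dvd k
  · calc q = orderOf y := hy.symm
    _ = orderOf ((y ^ k) ^ t) := by rw [hgen]
    _ ∣ orderOf (y ^ k) := orderOf_pow_dvd t

/-- If `u` has order `q` and `k` is coprime to `q`, then `u ^ k` has the same centralizer. -/
lemma centralizer_pow_coprime {u : G} {k q : ℕ} (hu : orderOf u = q) (hq : 1 < q)
    (hk : Nat.Coprime k q) :
    Subgroup.centralizer {u ^ k} = Subgroup.centralizer {u} := by
  obtain ⟨t, s, hts⟩ := bezout_nat hk hq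
  have hgen : (u ^ k) ^ t = u := by
    rw [← pow_mul, hts, pow_add, pow_one, pow_mul, ← hu, pow_orderOf_eq_one, one_pow, mul_one]
  ext v
  simp only [Subgroup.mem_centralizer_iff, Set.mem_singleton_iff, forall_eq]
  constructor
  · intro h
    have hc : Commute (u ^ k) v := h
    have h2 := hc.pow_left t
    rwa [hgen] at h2
  · intro h
    have hc : Commute u v := h
    exact hc.pow_left k

lemma orderOf_conjugate (g y : G) : orderOf (g * y * g⁻¹) = orderOf y :=
  (SemiconjBy.orderOf_eq g (by group : g * y = (g * y * g⁻¹) * g)).symm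

/-- Elements of order exactly `q`. -/
def OrderQ (G : Type*) [Group G] (q : ℕ) : Type _ := {u : G // orderOf u = q}

instance OrderQ.instSMul (q : ℕ) [hq : Fact (1 < q)] : SMul (G × (ZMod q)ˣ) (OrderQ G q) :=
  ⟨fun σ u => ⟨(σ.1 * u.val * σ.1⁻¹) ^ ((σ.2 : ZMod q)).val, by
    have h1 : orderOf (σ.1 * u.val * σ.1⁻¹) = q := by rw [orderOf_conjugate]; exact u.2
    exact orderOf_pow_coprime' h1 hq.out (ZMod.val_coe_unit_coprime σ.2)⟩⟩

lemma OrderQ.smul_val (q : ℕ) [Fact (1 < q)] (σ : G × (ZMod q)ˣ) (u : OrderQ G q) :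
    (σ • u : OrderQ G q).val = (σ.1 * u.val * σ.1⁻¹) ^ ((σ.2 : ZMod q)).val := rfl

instance OrderQ.instMulAction (q : ℕ) [hq : Fact (1 < q)] :
    MulAction (G × (ZMod q)ˣ) (OrderQ G q) where
  one_smul u := by
    apply Subtype.ext
    rw [OrderQ.smul_val]
    simp [ZMod.val_one q]
  mul_smul σ τ u := by
    haveI : NeZero q := ⟨by have := hq.out; omega⟩
    apply Subtype.ext
    rw [OrderQ.smul_val, OrderQ.smul_val, OrderQ.smul_val]
    rcases σ with ⟨g₂, j₂⟩; rcases τ with ⟨g₁, j₁⟩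
    simp only [Prod.fst_mul, Prod.snd_mul]
    conv_rhs => rw [conj_pow, ← pow_mul, conj_pow]
    rw [conj_pow]
    have e1 : u.val ^ ((j₂ * j₁ : (ZMod q)ˣ) : ZMod q).val
        = u.val ^ (((j₁ : ZMod q)).val * ((j₂ : ZMod q)).val) := by
      apply pow_eq_pow_of_mod u.2
      rw [Units.val_mul, ZMod.val_mul, Nat.mod_mod_of_dvd _ dvd_rfl, mul_comm]
    rw [e1]
    group

end Chunk2
section Chunk3

variable {G : Type*} [Group G]

lemma Fcount_quotient [Finite G] (K : Subgroup G) [K.Normal]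
    (hKc : K ≤ Subgroup.center G) {m : ℕ} (hcop : Nat.Coprime (Nat.card K) m) :
    Fcount G m = Fcount (G ⧸ K) m := by
  apply Nat.card_congr
  have hmk : ∀ x : G, x ^ m = 1 → ((x : G ⧸ K)) ^ m = 1 := by
    intro x hx
    rw [← QuotientGroup.mk_pow, hx, QuotientGroup.mk_one]
  refine Equiv.ofBijective (fun x => ⟨(x.val : G ⧸ K), hmk x.val x.2⟩) ⟨?_, ?_⟩
  · rintro ⟨x, hx⟩ ⟨y, hy⟩ hxy
    simp only [Subtype.mk.injEq] at hxy ⊢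
    have hk : x⁻¹ * y ∈ K := (QuotientGroup.eq).mp hxy
    have hcomm : Commute x (x⁻¹ * y) := by
      have := hKc hk
      rw [Subgroup.mem_center_iff] at this
      exact this x
    have hy' : y = x * (x⁻¹ * y) := by group
    have hpow : (x⁻¹ * y) ^ m = 1 := by
      have h5 : (x * (x⁻¹ * y)) ^ m = x ^ m * (x⁻¹ * y) ^ m := hcomm.mul_pow m
      have h6 : y ^ m = x ^ m * (x⁻¹ * y) ^ m := by rw [← h5, ← hy']
      rw [hx, hy, one_mul] at h6
      exact h6.symm
    have hord : orderOf (x⁻¹ * y) ∣ Nat.card K := Subgroup.orderOf_dvd_natCard K hk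
    have hord2 : orderOf (x⁻¹ * y) ∣ m := orderOf_dvd_of_pow_eq_one hpow
    have : orderOf (x⁻¹ * y) ∣ 1 := by
      have := Nat.dvd_gcd hord hord2
      rwa [hcop] at this
    have : x⁻¹ * y = 1 := by
      rw [Nat.dvd_one] at this
      exact orderOf_eq_one_iff.mp this
    have : y = x := by rw [hy'] ; rw [this, mul_one]
    exact this.symm
  · rintro ⟨y, hy⟩
    obtain ⟨x₀, rfl⟩ := QuotientGroup.mk_surjective y
    have hx₀ : x₀ ^ m ∈ K := by
      rw [← QuotientGroup.eq_one_iff, QuotientGroup.mk_pow]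
      exact hy
    -- find k in K with k ^ m = (x₀ ^ m)⁻¹
    obtain ⟨k, hk⟩ : ∃ k : K, k ^ m = (⟨x₀ ^ m, hx₀⟩ : K)⁻¹ := by
      refine ⟨(powCoprime hcop).symm (⟨x₀ ^ m, hx₀⟩ : K)⁻¹, ?_⟩
      have := (powCoprime hcop).apply_symm_apply (⟨x₀ ^ m, hx₀⟩ : K)⁻¹
      exact this
    have hkc : Commute x₀ (k : G) := by
      have := hKc k.2
      rw [Subgroup.mem_center_iff] at this
      exact this x₀
    refine ⟨⟨x₀ * (k : G), ?_⟩, ?_⟩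
    · rw [hkc.mul_pow]
      have : ((k : G)) ^ m = ((x₀ ^ m)⁻¹ : G) := by
        have := congrArg (Subgroup.subtype K) hk
        simpa using this
      rw [this, mul_inv_cancel]
    · apply Subtype.ext
      simp only
      rw [QuotientGroup.mk_mul]
      have : ((k : G) : G ⧸ K) = 1 := (QuotientGroup.eq_one_iff _).mpr k.2
      rw [this, mul_one]

end Chunk3
section Chunk4

variable {G : Type*} [Group G]

noncomputable instance OrderQ.instFintype (q : ℕ) [Fintype G] : Fintype (OrderQ G q) :=
  Subtype.fintype _

lemma Fcount_centralizer_conj (g y : G) (m : ℕ) :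
    Fcount (Subgroup.centralizer ({g * y * g⁻¹} : Set G)) m
      = Fcount (Subgroup.centralizer ({y} : Set G)) m := by
  have hmap : Subgroup.map ((MulAut.conj g).toMonoidHom) (Subgroup.centralizer {y})
      = Subgroup.centralizer {g * y * g⁻¹} := by
    ext v
    simp only [Subgroup.mem_map, Subgroup.mem_centralizer_iff, Set.mem_singleton_iff, forall_eq,
      MulEquiv.coe_toMonoidHom, MulAut.conj_apply]
    constructor
    · rintro ⟨x, hx, rfl⟩
      calc g * y * g⁻¹ * (g * x * g⁻¹) = g * (y * x) * g⁻¹ := by group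
      _ = g * (x * y) * g⁻¹ := by rw [hx]
      _ = g * x * g⁻¹ * (g * y * g⁻¹) := by group
    · intro hv
      refine ⟨g⁻¹ * v * g, ?_, by group⟩
      have h2 : g * (y * (g⁻¹ * v * g)) * g⁻¹ = g * ((g⁻¹ * v * g) * y) * g⁻¹ := by
        calc g * (y * (g⁻¹ * v * g)) * g⁻¹ = (g * y * g⁻¹) * v := by group
        _ = v * (g * y * g⁻¹) := hv
        _ = g * ((g⁻¹ * v * g) * y) * g⁻¹ := by group
      have h3 := mul_right_cancel h2
      exact mul_left_cancel h3
  have e := Subgroup.equivMapOfInjective (Subgroup.centralizer {y})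
    ((MulAut.conj g).toMonoidHom) (MulAut.conj g).injective
  rw [hmap] at e
  exact (Fcount_congr e m).symm

lemma Fcount_centralizer_smul (q m : ℕ) [hq : Fact (1 < q)] (σ : G × (ZMod q)ˣ)
    (u : OrderQ G q) :
    Fcount (Subgroup.centralizer {(σ • u : OrderQ G q).val}) m
      = Fcount (Subgroup.centralizer {u.val}) m := by
  rw [OrderQ.smul_val]
  have hord : orderOf (σ.1 * u.val * σ.1⁻¹) = q := by rw [orderOf_conjugate]; exact u.2
  rw [centralizer_pow_coprime hord hq.out (ZMod.val_coe_unit_coprime σ.2)]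
  exact Fcount_centralizer_conj σ.1 u.val m

lemma card_S_eq_sum (G : Type*) [Group G] [Fintype G] {p α m : ℕ} (hp : p.Prime)
    (hpm : ¬ p ∣ m) (hm : m ≠ 0) :
    Nat.card {x : G // x ^ (p ^ (α + 1) * m) = 1 ∧ ¬ x ^ (p ^ α * m) = 1}
      = ∑ u : OrderQ G (p ^ (α + 1)), Fcount (Subgroup.centralizer {u.val}) m := by
  set q := p ^ (α + 1) with hqdef
  have hq : 1 < q := Nat.one_lt_pow (Nat.succ_ne_zero α) hp.one_lt
  haveI : Fact (1 < q) := ⟨hq⟩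
  have hcop : Nat.Coprime m q :=
    Nat.Coprime.pow_right _ ((Nat.Prime.coprime_iff_not_dvd hp).mpr hpm).symm
  obtain ⟨t, s, hts⟩ := bezout_nat hcop hq
  have hppos : 0 < p ^ α := pow_pos hp.pos α
  -- basic facts
  have fact1 : ∀ x : G, x ^ (q * m) = 1 → (x ^ (m * t)) ^ q = 1 := by
    intro x hx
    rw [← pow_mul, show m * t * q = q * m * t by ring, pow_mul, hx, one_pow]
  have fact2 : ∀ x : G, x ^ (q * m) = 1 → (x ^ (m * t)) ^ m = x ^ m := by
    intro x hx
    rw [← pow_mul, show m * t * m = m + q * m * s by rw [hts]; ring, pow_add, pow_mul, hx,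
      one_pow, mul_one]
  have fact3 : ∀ x : G, Commute x (x ^ (m * t)) := fun x => (Commute.refl x).pow_right _
  have ordpf : ∀ x : G, x ^ (q * m) = 1 → ¬ x ^ (p ^ α * m) = 1 → orderOf (x ^ (m * t)) = q := by
    intro x hx hxn
    have hdvd : orderOf (x ^ (m * t)) ∣ q := orderOf_dvd_of_pow_eq_one (fact1 x hx)
    obtain ⟨i, hile, hi⟩ := (Nat.dvd_prime_pow hp).mp hdvd
    rcases Nat.lt_or_ge i (α + 1) with hlt | hge
    · exfalso
      have hia : i ≤ α := by omega
      have h1 : (x ^ (m * t)) ^ (p ^ α) = 1 := by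
        have : orderOf (x ^ (m * t)) ∣ p ^ α := hi ▸ pow_dvd_pow p hia
        exact orderOf_dvd_iff_pow_eq_one.mp this
      apply hxn
      calc x ^ (p ^ α * m) = (x ^ m) ^ (p ^ α) := by
            rw [← pow_mul x m (p ^ α), Nat.mul_comm m (p ^ α)]
      _ = ((x ^ (m * t)) ^ m) ^ (p ^ α) := by rw [fact2 x hx]
      _ = ((x ^ (m * t)) ^ (p ^ α)) ^ m := by
            rw [← pow_mul (x ^ (m * t)) m (p ^ α), ← pow_mul (x ^ (m * t)) (p ^ α) m,
              Nat.mul_comm m (p ^ α)]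
      _ = 1 := by rw [h1, one_pow]
    · have : i = α + 1 := le_antisymm hile hge
      rw [hi, this]
  -- the sigma type
  have Text : ∀ (u u' : OrderQ G q) (v : {v : ↥(Subgroup.centralizer {u.val}) // v ^ m = 1})
      (v' : {w : ↥(Subgroup.centralizer {u'.val}) // w ^ m = 1}) (h : u = u'),
      (v.val : G) = (v'.val : G) →
      (⟨u, v⟩ : Σ u : OrderQ G q, {v : ↥(Subgroup.centralizer {u.val}) // v ^ m = 1}) =
        ⟨u', v'⟩ := by
    rintro u u' v v' rfl h2
    congr 1
    exact Subtype.ext (Subtype.ext h2)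
  have e : (Σ u : OrderQ G q, {v : ↥(Subgroup.centralizer {u.val}) // v ^ m = 1}) ≃
      {x : G // x ^ (q * m) = 1 ∧ ¬ x ^ (p ^ α * m) = 1} := by
    refine Equiv.mk (fun z => ⟨z.1.val * (z.2.val : G), ?_, ?_⟩)
      (fun x => ⟨⟨x.val ^ (m * t), ordpf x.val x.2.1 x.2.2⟩,
        ⟨⟨(x.val ^ (m * t))⁻¹ * x.val, ?_⟩, ?_⟩⟩) ?_ ?_
    · -- (u*v)^(q*m) = 1
      obtain ⟨u, v⟩ := z
      have cc : Commute u.val (v.val : G) :=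
        Subgroup.mem_centralizer_iff.mp v.val.2 u.val rfl
      have hvm : (v.val : G) ^ m = 1 := by
        have := congrArg (Subgroup.subtype _) v.2
        simpa using this
      rw [cc.mul_pow]
      have hq1 : u.val ^ q = 1 := by
        have h := pow_orderOf_eq_one u.val; rwa [u.2] at h
      have h1 : u.val ^ (q * m) = 1 := by rw [pow_mul, hq1, one_pow]
      have h2 : (v.val : G) ^ (q * m) = 1 := by
        rw [mul_comm, pow_mul, hvm, one_pow]
      rw [h1, h2, one_mul]
    · -- (u*v)^(p^α*m) ≠ 1
      obtain ⟨u, v⟩ := z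
      have cc : Commute u.val (v.val : G) :=
        Subgroup.mem_centralizer_iff.mp v.val.2 u.val rfl
      have hvm : (v.val : G) ^ m = 1 := by
        have := congrArg (Subgroup.subtype _) v.2
        simpa using this
      intro hcon
      rw [cc.mul_pow] at hcon
      have h2 : (v.val : G) ^ (p ^ α * m) = 1 := by
        rw [mul_comm, pow_mul, hvm, one_pow]
      rw [h2, mul_one] at hcon
      have : q ∣ p ^ α * m := by
        have h := orderOf_dvd_of_pow_eq_one hcon; rwa [u.2] at h
      rw [hqdef, pow_succ] at this
      exact hpm ((Nat.mul_dvd_mul_iff_left hppos).mp this)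
    · -- centralizer membership
      refine Subgroup.mem_centralizer_iff.mpr ?_
      intro h hh
      rw [Set.mem_singleton_iff] at hh
      subst hh
      have c : Commute x.val (x.val ^ (m * t)) := fact3 x.val
      calc x.val ^ (m * t) * ((x.val ^ (m * t))⁻¹ * x.val) = x.val := by group
      _ = (x.val ^ (m * t))⁻¹ * (x.val ^ (m * t) * x.val) := by group
      _ = (x.val ^ (m * t))⁻¹ * (x.val * x.val ^ (m * t)) := by rw [← c]
      _ = (x.val ^ (m * t))⁻¹ * x.val * x.val ^ (m * t) := by group
    · -- v ^ m = 1
      apply Subtype.ext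
      rw [SubmonoidClass.coe_pow, OneMemClass.coe_one]
      show ((x.val ^ (m * t))⁻¹ * x.val) ^ m = 1
      have c2 : Commute (x.val ^ (m * t))⁻¹ x.val := (fact3 x.val).symm.inv_left
      rw [c2.mul_pow, inv_pow, fact2 x.val x.2.1, inv_mul_cancel]
    · -- left inverse
      rintro ⟨u, v⟩
      have cc : Commute u.val (v.val : G) :=
        Subgroup.mem_centralizer_iff.mp v.val.2 u.val rfl
      have hvm : (v.val : G) ^ m = 1 := by
        have := congrArg (Subgroup.subtype _) v.2
        simpa using this
      have hq1 : u.val ^ q = 1 := by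
        have h := pow_orderOf_eq_one u.val; rwa [u.2] at h
      have hval : (u.val * (v.val : G)) ^ (m * t) = u.val := by
        rw [cc.mul_pow, pow_mul (v.val : G), hvm, one_pow, mul_one, hts, pow_add, pow_one,
          pow_mul, hq1, one_pow, mul_one]
      refine Text _ _ _ _ (Subtype.ext hval) ?_
      show ((u.val * (v.val : G)) ^ (m * t))⁻¹ * (u.val * (v.val : G)) = ((v.val : G))
      rw [hval]
      group
    · -- right inverse
      rintro ⟨x, hx⟩
      apply Subtype.ext
      show x ^ (m * t) * ((x ^ (m * t))⁻¹ * x) = x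
      group
  calc Nat.card {x : G // x ^ (q * m) = 1 ∧ ¬ x ^ (p ^ α * m) = 1}
      = Nat.card (Σ u : OrderQ G q, {v : ↥(Subgroup.centralizer {u.val}) // v ^ m = 1}) :=
        (Nat.card_congr e).symm
  _ = Fintype.card (Σ u : OrderQ G q, {v : ↥(Subgroup.centralizer {u.val}) // v ^ m = 1}) :=
        Nat.card_eq_fintype_card
  _ = ∑ u : OrderQ G q, Fintype.card {v : ↥(Subgroup.centralizer {u.val}) // v ^ m = 1} :=
        Fintype.card_sigma
  _ = ∑ u : OrderQ G q, Fcount (Subgroup.centralizer {u.val}) m := by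
        refine Finset.sum_congr rfl fun u _ => ?_
        rw [Fcount, Nat.card_eq_fintype_card]

end Chunk4
section Chunk5

universe u

set_option maxHeartbeats 2000000 in
lemma orbit_term_dvd {G : Type u} [Group G] [Fintype G] {p α m q : ℕ} (hp : p.Prime)
    (hpm : ¬ p ∣ m) (hqdef : q = p ^ (α + 1)) [hfq : Fact (1 < q)]
    (hmdvd : p ^ α * m * p ∣ Nat.card G)
    (IH : ∀ (G' : Type u) [Group G'] [Fintype G'], Fintype.card G' < Fintype.card G →
      ∀ r : ℕ, Nat.gcd r (Fintype.card G') ∣ Fcount G' r)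
    (w : OrderQ G q) :
    p ^ α * m ∣
      Nat.card (MulAction.orbit (G × (ZMod q)ˣ) w)
        * Fcount (Subgroup.centralizer {w.val}) m := by
  haveI : NeZero q := ⟨by have := hfq.out; omega⟩
  set St := MulAction.stabilizer (G × (ZMod q)ˣ) w with hStdef
  set C := Subgroup.centralizer {w.val} with hCdef
  set φst : St →* (ZMod q)ˣ := (MonoidHom.snd G (ZMod q)ˣ).comp St.subtype with hφdef
  set a := Nat.card φst.range with hadef
  set c := Nat.card C with hcdef
  set O := Nat.card (MulAction.orbit (G × (ZMod q)ˣ) w) with hOdef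
  set h := Fcount C m with hhdef
  have hcard_pos : 0 < Nat.card G := Nat.card_pos
  -- `Nat.card St = a * c`
  have kerEquiv : φst.ker ≃ C := by
    refine Equiv.mk (fun x => ⟨x.val.val.1, ?_⟩) (fun g => ⟨⟨(g.val, 1), ?_⟩, ?_⟩) ?_ ?_
    · -- membership in centralizer
      have hj : x.val.val.2 = 1 := x.2
      have hst : x.val.val • w = w := x.val.2
      have hval : (x.val.val.1 * w.val * x.val.val.1⁻¹) ^ ((x.val.val.2 : ZMod q)).val = w.val :=
        congrArg Subtype.val hst
      rw [hj, Units.val_one, ZMod.val_one q, pow_one] at hval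
      rw [hCdef, Subgroup.mem_centralizer_iff]
      intro y hy
      rw [Set.mem_singleton_iff] at hy
      subst hy
      calc w.val * x.val.val.1
          = (x.val.val.1 * w.val * x.val.val.1⁻¹) * x.val.val.1 := by rw [hval]
      _ = x.val.val.1 * w.val := by group
    · -- (g, 1) is in the stabilizer
      have hg : g.val ∈ Subgroup.centralizer {w.val} := g.2
      rw [Subgroup.mem_centralizer_iff] at hg
      have hg' := hg w.val rfl
      apply Subtype.ext
      rw [OrderQ.smul_val]
      simp only [Units.val_one, ZMod.val_one q, pow_one]
      rw [← hg']
      group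
    · -- in the kernel
      apply Units.ext
      rfl
    · -- left inverse
      rintro ⟨⟨⟨g, j⟩, hst⟩, hker⟩
      have hj : j = 1 := hker
      apply Subtype.ext
      apply Subtype.ext
      apply Prod.ext
      · rfl
      · exact hj.symm
    · -- right inverse
      rintro ⟨g, hg⟩
      rfl
  have hSt_card : Nat.card St = a * c := by
    have h1 : Nat.card St = Nat.card (St ⧸ φst.ker) * Nat.card φst.ker :=
      Subgroup.card_eq_card_quotient_mul_card_subgroup φst.ker
    have h2 : Nat.card (St ⧸ φst.ker) = a :=
      Nat.card_congr (QuotientGroup.quotientKerEquivRange φst).toEquiv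
    have h3 : Nat.card φst.ker = c := Nat.card_congr kerEquiv
    rw [h1, h2, h3]
  -- `Nat.card St ∣ Nat.card G`
  have hSt_dvd : Nat.card St ∣ Nat.card G := by
    set ψst : St →* G := (MonoidHom.fst G (ZMod q)ˣ).comp St.subtype with hψdef
    have hinj : Function.Injective ψst := by
      rintro ⟨⟨g1, j1⟩, h1⟩ ⟨⟨g2, j2⟩, h2⟩ hgg
      have hg : g1 = g2 := hgg
      subst hg
      apply Subtype.ext
      apply Prod.ext
      · rfl
      have hv1 : (g1 * w.val * g1⁻¹) ^ ((j1 : ZMod q)).val = w.val := congrArg Subtype.val h1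
      have hv2 : (g1 * w.val * g1⁻¹) ^ ((j2 : ZMod q)).val = w.val := congrArg Subtype.val h2
      have hord : orderOf (g1 * w.val * g1⁻¹) = q := by rw [orderOf_conjugate]; exact w.2
      have heq : (g1 * w.val * g1⁻¹) ^ ((j1 : ZMod q)).val
          = (g1 * w.val * g1⁻¹) ^ ((j2 : ZMod q)).val := by rw [hv1, hv2]
      have hmod := pow_inj_mod.mp heq
      rw [hord] at hmod
      rw [Nat.mod_eq_of_lt (ZMod.val_lt _), Nat.mod_eq_of_lt (ZMod.val_lt _)] at hmod
      exact Units.ext (ZMod.val_injective q hmod)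
    have e := MonoidHom.ofInjective hinj
    have : Nat.card St = Nat.card ψst.range := Nat.card_congr e.toEquiv
    rw [this]
    exact Subgroup.card_subgroup_dvd_card ψst.range
  -- `a` divides the totient
  have htot : Nat.card (ZMod q)ˣ = q.totient := by
    rw [Nat.card_eq_fintype_card, ZMod.card_units_eq_totient]
  have htotval : q.totient = p ^ α * (p - 1) := by
    rw [hqdef, Nat.totient_prime_pow hp (Nat.succ_pos α)]
    simp
  have ha_dvd : a ∣ p ^ α * (p - 1) := by
    rw [← htotval, ← htot]
    exact Subgroup.card_subgroup_dvd_card φst.range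
  -- orbit-stabilizer
  have horb : O * (a * c) = Nat.card G * (p ^ α * (p - 1)) := by
    have h1 := MulAction.card_orbit_mul_card_stabilizer_eq_card_group (G × (ZMod q)ˣ) w
    rw [← Nat.card_eq_fintype_card, ← Nat.card_eq_fintype_card, ← Nat.card_eq_fintype_card] at h1
    rw [← hSt_card, hOdef, h1, Nat.card_prod, htot, htotval]
  have hapos : 0 < a := Nat.card_pos
  have hcpos : 0 < c := Nat.card_pos
  have hm_dvd_G : m ∣ Nat.card G := dvd_trans ⟨p ^ α * p, by ring⟩ hmdvd
  obtain ⟨s, hs⟩ := (hSt_card ▸ hSt_dvd : a * c ∣ Nat.card G)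
  have hO : O = s * (p ^ α * (p - 1)) := by
    have : O * (a * c) = (a * c) * (s * (p ^ α * (p - 1))) := by
      rw [horb, hs]; ring
    have hac : 0 < a * c := Nat.mul_pos hapos hcpos
    rw [mul_comm O (a * c)] at this
    exact Nat.eq_of_mul_eq_mul_left hac this
  by_cases hcent : C = ⊤
  · -- central case
    have hceq : c = Nat.card G := by
      rw [hcdef, hcent]
      exact Nat.card_congr Subgroup.topEquiv.toEquiv
    have ha1 : a = 1 := by
      have hdvd : a * Nat.card G ∣ Nat.card G := by
        have h9 : a * c ∣ Nat.card G := hSt_card ▸ hSt_dvd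
        rwa [hceq] at h9
      have hle := Nat.le_of_dvd hcard_pos hdvd
      nlinarith [hapos, hcard_pos]
    have hsval : s = 1 := by
      have h9 : Nat.card G * 1 = Nat.card G * s := by
        conv_lhs => rw [hs, ha1, hceq]
        ring
      exact (Nat.eq_of_mul_eq_mul_left hcard_pos h9).symm
    -- h = Fcount G m
    have hFG : h = Fcount G m := by
      rw [hhdef, hcent]
      exact Fcount_congr Subgroup.topEquiv m
    have hw_comm : ∀ g : G, g * w.val = w.val * g := by
      intro g
      have hgC : g ∈ C := by rw [hcent]; trivial
      rw [hCdef, Subgroup.mem_centralizer_iff] at hgC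
      exact (hgC w.val rfl).symm
    set z := w.val ^ (p ^ α) with hzdef
    have hz_ord : orderOf z = p := by
      rw [hzdef, orderOf_pow, w.2, hqdef]
      rw [Nat.gcd_comm, Nat.gcd_eq_left (pow_dvd_pow p (Nat.le_succ α)), pow_succ,
        Nat.mul_div_cancel_left _ (pow_pos hp.pos α)]
    have hz_central : z ∈ Subgroup.center G := by
      rw [Subgroup.mem_center_iff]
      intro g
      exact Commute.pow_right (hw_comm g) (p ^ α)
    set K := Subgroup.zpowers z with hKdef
    have hKle : K ≤ Subgroup.center G := Subgroup.zpowers_le.mpr hz_central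
    haveI hKnormal : K.Normal := by
      constructor
      intro x hx g
      have hxc := Subgroup.mem_center_iff.mp (hKle hx) g
      have hconj : g * x * g⁻¹ = x := by rw [hxc]; group
      rw [hconj]; exact hx
    have hKcard : Nat.card K = p := by rw [hKdef, Nat.card_zpowers, hz_ord]
    have hcopK : Nat.Coprime (Nat.card K) m := by
      rw [hKcard]; exact (Nat.Prime.coprime_iff_not_dvd hp).mpr hpm
    have hquot := Fcount_quotient K hKle hcopK
    have hcardQ : Nat.card G = Nat.card (G ⧸ K) * p := by
      rw [Subgroup.card_eq_card_quotient_mul_card_subgroup K, hKcard]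
    haveI : Fintype (G ⧸ K) := Fintype.ofFinite _
    have hQpos : 0 < Nat.card (G ⧸ K) := Nat.card_pos
    have hQlt : Fintype.card (G ⧸ K) < Fintype.card G := by
      rw [← Nat.card_eq_fintype_card, ← Nat.card_eq_fintype_card]
      have hp2 := hp.two_le
      nlinarith [hQpos, hcardQ]
    have hmQ : m ∣ Nat.card (G ⧸ K) := by
      have hmG := hm_dvd_G
      rw [hcardQ] at hmG
      exact Nat.Coprime.dvd_of_dvd_mul_right
        ((Nat.Prime.coprime_iff_not_dvd hp).mpr hpm).symm hmG
    have hmF : m ∣ Fcount (G ⧸ K) m := by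
      have := IH (G ⧸ K) hQlt m
      rwa [← Nat.card_eq_fintype_card, Nat.gcd_eq_left hmQ] at this
    have hmFG : m ∣ Fcount G m := by rw [hquot]; exact hmF
    calc p ^ α * m ∣ p ^ α * ((p - 1) * Fcount G m) :=
          Nat.mul_dvd_mul_left _ (Dvd.dvd.mul_left hmFG _)
    _ = O * h := by rw [hO, hsval, hFG]; ring
  · -- non-central case
    obtain ⟨g₀, hg₀⟩ : ∃ g, g ∉ C := by
      by_contra hcon
      push_neg at hcon
      exact hcent ((Subgroup.eq_top_iff' C).mpr hcon)
    have hclt : Nat.card C < Nat.card G := Finite.card_subtype_lt hg₀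
    have hgcd : Nat.gcd m c ∣ h := by
      have hclt' : Fintype.card C < Fintype.card G := by
        rw [← Nat.card_eq_fintype_card, ← Nat.card_eq_fintype_card]
        exact hclt
      have h9 := IH C hclt' m
      rwa [← Nat.card_eq_fintype_card] at h9
    -- m ∣ (p-1) * s * h
    have hmacs : m ∣ a * (c * s) := by
      have : a * (c * s) = Nat.card G := by rw [hs]; ring
      rw [this]; exact hm_dvd_G
    have h1 : m ∣ (p - 1) * (c * s) := L4 hp hpm hmacs ha_dvd
    have h2 : m ∣ (p - 1) * s * h := by
      have h1' : m ∣ ((p - 1) * s) * c := by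
        have : ((p - 1) * s) * c = (p - 1) * (c * s) := by ring
        rw [this]; exact h1
      exact L3 h1' hgcd
    calc p ^ α * m ∣ p ^ α * ((p - 1) * s * h) := Nat.mul_dvd_mul_left _ h2
    _ = O * h := by rw [hO]; ring

end Chunk5
section Chunk6

universe u

lemma Fcount_card (G : Type*) [Group G] [Fintype G] :
    Fcount G (Fintype.card G) = Fintype.card G := by
  have hall : ∀ x : G, x ^ Fintype.card G = 1 := fun x => pow_card_eq_one
  calc Fcount G (Fintype.card G) = Nat.card G :=
        Nat.card_congr (Equiv.subtypeUnivEquiv hall)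
  _ = Fintype.card G := Nat.card_eq_fintype_card

set_option maxHeartbeats 2000000 in
lemma key_step {G : Type u} [Group G] [Fintype G] {n p : ℕ} (hp : p.Prime)
    (hn : n ≠ 0) (hdvd : n * p ∣ Fintype.card G)
    (IH : ∀ (G' : Type u) [Group G'] [Fintype G'], Fintype.card G' < Fintype.card G →
      ∀ r : ℕ, Nat.gcd r (Fintype.card G') ∣ Fcount G' r) :
    n ∣ Fcount G (n * p) - Fcount G n ∧ Fcount G n ≤ Fcount G (n * p) := by
  have hmono : Fcount G n ≤ Fcount G (n * p) := by
    apply Nat.card_le_card_of_injective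
      (fun x : {x : G // x ^ n = 1} =>
        (⟨x.val, by rw [pow_mul, x.2, one_pow]⟩ : {x : G // x ^ (n * p) = 1}))
    intro x y hxy
    simpa [Subtype.ext_iff] using hxy
  refine ⟨?_, hmono⟩
  set α := n.factorization p with hα
  set m := n / p ^ α with hm
  have hnm : p ^ α * m = n := Nat.ordProj_mul_ordCompl_eq_self n p
  have hpm : ¬ p ∣ m := Nat.not_dvd_ordCompl hp hn
  have hm0 : m ≠ 0 := by intro h0; rw [h0, mul_zero] at hnm; exact hn hnm.symm
  have hq1 : 1 < p ^ (α + 1) := Nat.one_lt_pow (Nat.succ_ne_zero α) hp.one_lt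
  haveI : Fact (1 < p ^ (α + 1)) := ⟨hq1⟩
  have hexp1 : n * p = p ^ (α + 1) * m := by rw [← hnm, pow_succ]; ring
  -- the difference is the cardinality of S
  have hdiff : Fcount G (n * p) - Fcount G n
      = Nat.card {x : G // x ^ (n * p) = 1 ∧ ¬ x ^ n = 1} := by
    have e1 : Fcount G (n * p)
        = (Finset.univ.filter (fun x : G => x ^ (n * p) = 1)).card := by
      rw [Fcount, Nat.card_eq_fintype_card, Fintype.card_subtype]
    have e2 : Fcount G n = (Finset.univ.filter (fun x : G => x ^ n = 1)).card := by
      rw [Fcount, Nat.card_eq_fintype_card, Fintype.card_subtype]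
    have e3 : Nat.card {x : G // x ^ (n * p) = 1 ∧ ¬ x ^ n = 1}
        = (Finset.univ.filter (fun x : G => x ^ (n * p) = 1 ∧ ¬ x ^ n = 1)).card := by
      rw [Nat.card_eq_fintype_card, Fintype.card_subtype]
    have himp : ∀ x : G, x ^ n = 1 → x ^ (n * p) = 1 := by
      intro x hx; rw [pow_mul, hx, one_pow]
    have hunion : Finset.univ.filter (fun x : G => x ^ (n * p) = 1)
        = Finset.univ.filter (fun x : G => x ^ n = 1)
          ∪ Finset.univ.filter (fun x : G => x ^ (n * p) = 1 ∧ ¬ x ^ n = 1) := by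
      ext x
      simp only [Finset.mem_filter, Finset.mem_univ, true_and, Finset.mem_union]
      by_cases hb : x ^ n = 1
      · simp [hb, himp x hb]
      · simp [hb]
    have hdisj : Disjoint (Finset.univ.filter (fun x : G => x ^ n = 1))
        (Finset.univ.filter (fun x : G => x ^ (n * p) = 1 ∧ ¬ x ^ n = 1)) := by
      rw [Finset.disjoint_left]
      intro x hx hx2
      simp only [Finset.mem_filter, Finset.mem_univ, true_and] at hx hx2
      exact hx2.2 hx
    have hcardu := Finset.card_union_of_disjoint hdisj
    rw [e1, e2, e3, hunion, hcardu]
    omega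
  -- rewrite as a sum over elements of order p^(α+1)
  have hsum0 := card_S_eq_sum G hp hpm hm0 (α := α)
  rw [← hexp1, hnm] at hsum0
  rw [hdiff, hsum0]
  -- group the sum by orbits
  set q := p ^ (α + 1) with hqdef
  set Hq := G × (ZMod q)ˣ with hHqdef
  haveI : NeZero q := ⟨by omega⟩
  set f : OrderQ G q → ℕ := fun u => Fcount (Subgroup.centralizer {u.val}) m with hfdef
  have hconst : ∀ (u v : OrderQ G q), v ∈ MulAction.orbit Hq u → f v = f u := by
    intro u v hv
    obtain ⟨σ, hσ⟩ := hv
    rw [← hσ]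
    exact Fcount_centralizer_smul q m σ u
  have horbeq : ∀ ω : MulAction.orbitRel.Quotient Hq (OrderQ G q),
      ω.orbit = MulAction.orbit Hq ω.out :=
    fun ω => MulAction.orbitRel.Quotient.orbit_eq_orbit_out ω Quotient.out_eq'
  have hsum1 : ∑ u : OrderQ G q, f u
      = ∑ ω : MulAction.orbitRel.Quotient Hq (OrderQ G q),
          Nat.card ω.orbit * f ω.out := by
    set he := MulAction.selfEquivSigmaOrbits' Hq (OrderQ G q) with hedef
    rw [← Equiv.sum_comp he.symm f, ← Finset.univ_sigma_univ, Finset.sum_sigma]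
    refine Finset.sum_congr rfl fun ω _ => ?_
    calc ∑ y : ω.orbit, f (he.symm ⟨ω, y⟩) = ∑ _y : ω.orbit, f ω.out := by
          refine Finset.sum_congr rfl fun y _ => ?_
          have hy : he.symm ⟨ω, y⟩ = y.val := by rw [hedef]; rfl
          rw [hy]
          have hmem : y.val ∈ MulAction.orbit Hq ω.out := by
            rw [← horbeq ω]; exact y.2
          exact hconst ω.out y.val hmem
    _ = Nat.card ω.orbit * f ω.out := by
          rw [Finset.sum_const, Finset.card_univ, smul_eq_mul, Nat.card_eq_fintype_card]
  rw [hsum1]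
  refine Finset.dvd_sum fun ω _ => ?_
  have hterm := orbit_term_dvd hp hpm hqdef
    (by rw [← hnm] at hdvd; rw [Nat.card_eq_fintype_card]; exact hdvd) IH ω.out
  rw [← hnm, horbeq ω]
  exact hterm

theorem frobAux (N : ℕ) : ∀ (G : Type u) [Group G] [Fintype G], Fintype.card G = N →
    ∀ n : ℕ, n ∣ N → n ∣ Fcount G n := by
  induction N using Nat.strong_induction_on with
  | _ N IHN =>
  intro G _ _ hcard n hdvd
  have IH : ∀ (G' : Type u) [Group G'] [Fintype G'], Fintype.card G' < Fintype.card G →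
      ∀ r : ℕ, Nat.gcd r (Fintype.card G') ∣ Fcount G' r := by
    intro G' _ _ hlt r
    rw [Fcount_gcd G' r]
    exact IHN (Fintype.card G') (hcard ▸ hlt) G' rfl _ (Nat.gcd_dvd_right _ _)
  obtain ⟨k, hk⟩ := hdvd
  induction k using Nat.strong_induction_on generalizing n with
  | _ k IHk =>
  have hNpos : 0 < N := hcard ▸ Fintype.card_pos
  have hk0 : k ≠ 0 := by rintro rfl; omega
  have hn0 : n ≠ 0 := by rintro rfl; omega
  rcases eq_or_ne k 1 with rfl | hk1
  · have hn : n = Fintype.card G := by omega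
    rw [hn, Fcount_card]
  · set p := k.minFac with hpdef
    have hp : p.Prime := Nat.minFac_prime hk1
    have hpk : p ∣ k := Nat.minFac_dvd k
    have hkp : p * (k / p) = k := Nat.mul_div_cancel' hpk
    have hlt : k / p < k := Nat.div_lt_self (by omega) hp.one_lt
    have hNnp : N = (n * p) * (k / p) := by rw [mul_assoc, hkp, hk]
    have hnp_count : n * p ∣ Fcount G (n * p) := IHk (k / p) hlt (n * p) hNnp
    have hkey := key_step (G := G) hp hn0
      (by rw [hcard, hk, ← hkp]; exact ⟨k / p, by ring⟩) IH
    have h1 : n ∣ Fcount G (n * p) := dvd_trans (Dvd.intro p rfl) hnp_count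
    have h2 := Nat.dvd_sub h1 hkey.1
    rwa [Nat.sub_sub_self hkey.2] at h2

end Chunk6

end FrobeniusProof

/-- Frobenius' theorem: for a finite group `G` and `m > 0`, the number of
`g ∈ G` with `g ^ m = 1` is divisible by `gcd(m, |G|)`; in particular if `m ∣ |G|` then
`m` divides this count. -/
theorem stmt1 (G : Type*) [Group G] [Fintype G] (m : ℕ) (hm : 0 < m) :
    Nat.gcd m (Fintype.card G) ∣ Nat.card {g : G // g ^ m = 1} ∧
      (m ∣ Fintype.card G → m ∣ Nat.card {g : G // g ^ m = 1}) := by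
  constructor
  · have h1 := frobAux (Fintype.card G) G rfl (Nat.gcd m (Fintype.card G))
      (Nat.gcd_dvd_right _ _)
    show Nat.gcd m (Fintype.card G) ∣ Fcount G m
    rw [Fcount_gcd G m]
    exact h1
  · intro hdvd
    exact frobAux (Fintype.card G) G rfl m hdvd
end

section
/- With N^h_{p^d} the number of subgroups of order p^d in (ℚ_p/ℤ_p)^h, we have N^h_{p^d} ≡ 1 (mod p) for all d ≥ 0. -/
open Function AddSubgroup
-- assume part1 names available; for testing, inline imports
section P1
lemma finiteAddSubgroup (G : Type*) [AddGroup G] [Finite G] : Finite (AddSubgroup G) :=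
  Finite.of_injective (fun H => (H : Set G)) SetLike.coe_injective
lemma card_mul_of_fibers {α β : Type*} [Finite α] [Finite β] (f : α → β) (k : ℕ)
    (h : ∀ b, Nat.card {a // f a = b} = k) : Nat.card α = k * Nat.card β := by
  classical
  cases nonempty_fintype α
  cases nonempty_fintype β
  simp only [Nat.card_eq_fintype_card] at h ⊢
  rw [← Fintype.card_congr (Equiv.sigmaFiberEquiv f), Fintype.card_sigma]
  rw [Finset.sum_congr rfl (fun b _ => h b), Finset.sum_const, Finset.card_univ,
    smul_eq_mul, mul_comm]
lemma card_subtype_ne {β : Type*} [Finite β] (b0 : β) :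
    Nat.card {b : β // b ≠ b0} = Nat.card β - 1 := by
  classical
  cases nonempty_fintype β
  rw [Nat.card_eq_fintype_card, Nat.card_eq_fintype_card]
  rw [Fintype.card_subtype_compl, Fintype.card_subtype_eq]
lemma arith_lemma {p M N : ℕ} (hp : p.Prime) (hM : p ∣ M) (h1 : 1 ≤ M)
    (h : M - 1 = (p - 1) * N) : (N : ZMod p) = 1 := by
  have := congrArg (fun n : ℕ => (n : ZMod p)) h
  simp only [Nat.cast_sub h1, Nat.cast_sub hp.one_le, Nat.cast_mul, Nat.cast_one] at this
  rw [(ZMod.natCast_eq_zero_iff M p).mpr hM, ZMod.natCast_self] at this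
  have h2 : (1 : ZMod p) = (N : ZMod p) := by linear_combination -this
  exact h2.symm

lemma card_mod_of_fibers {p : ℕ} {α β : Type*} [Finite α] [Finite β] (f : α → β)
    (h : ∀ b, (Nat.card {a // f a = b} : ZMod p) = 1) :
    (Nat.card α : ZMod p) = (Nat.card β : ZMod p) := by
  classical
  cases nonempty_fintype α
  cases nonempty_fintype β
  simp only [Nat.card_eq_fintype_card] at h ⊢
  rw [← Fintype.card_congr (Equiv.sigmaFiberEquiv f), Fintype.card_sigma]
  push_cast
  rw [Finset.sum_congr rfl (fun b _ => h b)]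
  simp

noncomputable def corrEquiv {G G' : Type*} [AddGroup G] [AddGroup G'] (f : G →+ G')
    (hf : Surjective f) (n : ℕ) :
    {K : AddSubgroup G // f.ker ≤ K ∧ K.index = n} ≃ {S : AddSubgroup G' // S.index = n} where
  toFun K := ⟨AddSubgroup.map f K.1, by rw [AddSubgroup.index_map_eq _ hf K.2.1]; exact K.2.2⟩
  invFun S := ⟨AddSubgroup.comap f S.1,
    ⟨fun x hx => by
      simp only [AddSubgroup.mem_comap, AddMonoidHom.mem_ker.mp hx, zero_mem],
     (S.1.index_comap_of_surjective hf).trans S.2⟩⟩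
  left_inv K := Subtype.ext (show AddSubgroup.comap f (AddSubgroup.map f K.1) = K.1 by
    rw [AddSubgroup.comap_map_eq, sup_of_le_left K.2.1])
  right_inv S := Subtype.ext (AddSubgroup.map_comap_eq_self_of_surjective hf S.1)

lemma card_index_one (G : Type*) [AddGroup G] :
    Nat.card {S : AddSubgroup G // S.index = 1} = 1 := by
  haveI : Unique {S : AddSubgroup G // S.index = 1} :=
    { default := ⟨⊤, AddSubgroup.index_top⟩
      uniq := fun S => Subtype.ext (AddSubgroup.index_eq_one.mp S.2) }
  exact Nat.card_unique
end P1


section orderp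
variable {A : Type*} [AddCommGroup A] [Finite A] {p : ℕ}

lemma addOrderOf_eq_prime_of (hp : p.Prime) {x : A} (h1 : p • x = 0) (h2 : x ≠ 0) :
    addOrderOf x = p :=
  ((Nat.dvd_prime hp).mp (addOrderOf_dvd_of_nsmul_eq_zero h1)).resolve_left
    (fun h => h2 (AddMonoid.addOrderOf_eq_one_iff.mp h))

theorem card_order_p (hp : p.Prime) (hpA : p ∣ Nat.card A) :
    (Nat.card {S : AddSubgroup A // Nat.card S = p} : ZMod p) = 1 := by
  haveI := finiteAddSubgroup A
  haveI := Fact.mk hp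
  obtain ⟨a, ha⟩ : ∃ a : A, addOrderOf a = p := by
    cases nonempty_fintype A
    exact exists_prime_addOrderOf_dvd_card p (by rwa [← Nat.card_eq_fintype_card])
  set T := {x : A // addOrderOf x = p} with hT
  set N := Nat.card {S : AddSubgroup A // Nat.card S = p} with hN
  set θ : T → {S : AddSubgroup A // Nat.card S = p} :=
    fun x => ⟨zmultiples x.1, by rw [Nat.card_zmultiples, x.2]⟩ with hθ
  -- fibers of θ have cardinality p - 1
  have hfib : ∀ S : {S : AddSubgroup A // Nat.card S = p},
      Nat.card {x : T // θ x = S} = p - 1 := by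
    intro S
    have hcS : Nat.card S.1 = p := S.2
    have ordy : ∀ y : ↥S.1, y ≠ 0 → addOrderOf (y : A) = p := by
      intro y hy
      have h1 : addOrderOf y ∣ p := (addOrderOf_dvd_natCard y).trans (dvd_of_eq hcS)
      rw [AddSubgroup.addOrderOf_coe]
      exact ((Nat.dvd_prime hp).mp h1).resolve_left
        (fun h => hy (AddMonoid.addOrderOf_eq_one_iff.mp h))
    have zeq : ∀ y : ↥S.1, y ≠ 0 → zmultiples (y : A) = S.1 := by
      intro y hy
      refine AddSubgroup.eq_of_le_of_card_ge (zmultiples_le.mpr y.2) ?_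
      rw [hcS, Nat.card_zmultiples, ordy y hy]
    have key : Nat.card {y : ↥S.1 // y ≠ 0} = Nat.card {x : T // θ x = S} := by
      refine Nat.card_eq_of_bijective
        (fun y => ⟨⟨(y.1 : A), ordy y.1 y.2⟩, Subtype.ext (zeq y.1 y.2)⟩) ⟨?_, ?_⟩
      · intro y y' hyy
        have : (y.1 : A) = (y'.1 : A) := congrArg (fun z => z.1.1) hyy
        exact Subtype.ext (Subtype.ext this)
      · rintro ⟨x, hx⟩
        have hx1 : zmultiples x.1 = S.1 := congrArg Subtype.val hx
        have hmem : x.1 ∈ S.1 := by rw [← hx1]; exact mem_zmultiples x.1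
        have hne : (⟨x.1, hmem⟩ : ↥S.1) ≠ 0 := by
          intro h0
          have : x.1 = 0 := congrArg Subtype.val h0
          have h2 := x.2
          rw [this, addOrderOf_zero] at h2
          exact hp.one_lt.ne h2
        exact ⟨⟨⟨x.1, hmem⟩, hne⟩, Subtype.ext (Subtype.ext rfl)⟩
    rw [← key, card_subtype_ne, hcS]
  have htot : Nat.card T = (p - 1) * N := card_mul_of_fibers θ (p - 1) hfib
  -- count T via the p-torsion subgroup E
  set μ : A →+ A := AddMonoidHom.mk' (fun x => p • x) (fun a b => smul_add p a b) with hμ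
  set E := μ.ker with hE
  have hmemE : ∀ x : A, x ∈ E ↔ p • x = 0 := fun x => by simp only [hE, AddMonoidHom.mem_ker, hμ, AddMonoidHom.mk'_apply]
  have hTE : Nat.card T = Nat.card E - 1 := by
    have key2 : Nat.card {y : ↥E // y ≠ 0} = Nat.card T := by
      refine Nat.card_eq_of_bijective
        (fun y => ⟨(y.1 : A), addOrderOf_eq_prime_of hp ((hmemE _).mp y.1.2)
          (fun h0 => y.2 (Subtype.ext h0))⟩) ⟨?_, ?_⟩
      · intro y y' hyy
        have hv : (y.1.1 : A) = (y'.1.1 : A) := congrArg (fun t : T => t.1) hyy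
        exact Subtype.ext (Subtype.ext hv)
      · rintro ⟨x, hx⟩
        have h1 : p • x = 0 := by rw [← hx]; exact addOrderOf_nsmul_eq_zero x
        have h2 : x ≠ 0 := by
          intro h0
          rw [h0, addOrderOf_zero] at hx
          exact hp.one_lt.ne hx
        exact ⟨⟨⟨x, (hmemE x).mpr h1⟩, fun h0 => h2 (congrArg Subtype.val h0)⟩, rfl⟩
    rw [← key2, card_subtype_ne]
  have haE : a ∈ E := by
    rw [hmemE, ← ha]
    exact addOrderOf_nsmul_eq_zero a
  have hdvd : p ∣ Nat.card E := by
    have : addOrderOf (⟨a, haE⟩ : ↥E) = p := by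
      rw [← AddSubgroup.addOrderOf_coe]
      exact ha
    exact this ▸ addOrderOf_dvd_natCard _
  have hpos : 1 ≤ Nat.card ↥E := Nat.card_pos
  exact arith_lemma hp hdvd hpos (by rw [← hTE, htot])

end orderp

section indexp
variable {A : Type*} [AddCommGroup A] [Finite A] {p : ℕ}

theorem card_index_p (hp : p.Prime) (hpA : p ∣ Nat.card A) :
    (Nat.card {S : AddSubgroup A // S.index = p} : ZMod p) = 1 := by
  haveI := finiteAddSubgroup A
  haveI := Fact.mk hp
  haveI : NeZero p := ⟨hp.ne_zero⟩
  haveI hfinH : Finite (A →+ ZMod p) := Finite.of_injective _ DFunLike.coe_injective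
  -- every endomorphism of ZMod p is right multiplication
  have zhom : ∀ ψ : ZMod p →+ ZMod p, ∀ x : ZMod p, ψ x = x * ψ 1 := by
    intro ψ x
    have hx : ((x.val : ℕ) : ZMod p) = x := ZMod.natCast_rightInverse x
    calc ψ x = ψ (x.val • 1) := by rw [nsmul_eq_mul, mul_one, hx]
    _ = x.val • ψ 1 := by rw [map_nsmul]
    _ = x * ψ 1 := by rw [nsmul_eq_mul, hx]
  -- every nonzero hom has kernel of index p
  have hker_index : ∀ f : A →+ ZMod p, f ≠ 0 → f.ker.index = p := by
    intro f hf
    rw [AddSubgroup.index_ker]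
    have hdvd : Nat.card f.range ∣ p := by
      have := AddSubgroup.card_addSubgroup_dvd_card f.range
      rwa [Nat.card_zmod] at this
    rcases (Nat.dvd_prime hp).mp hdvd with h1 | h1
    · exfalso
      apply hf
      have hbot : f.range = ⊥ := AddSubgroup.card_eq_one.mp h1
      ext x
      have hmem : f x ∈ f.range := ⟨x, rfl⟩
      rw [hbot] at hmem
      simpa using hmem
    · exact h1
  set θ : {f : A →+ ZMod p // f ≠ 0} → {S : AddSubgroup A // S.index = p} :=
    fun f => ⟨f.1.ker, hker_index f.1 f.2⟩ with hθ
  -- fiber cardinality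
  have hfib : ∀ S : {S : AddSubgroup A // S.index = p},
      Nat.card {f // θ f = S} = p - 1 := by
    rintro ⟨S, hSi⟩
    have hQ : Nat.card (A ⧸ S) = p := (AddSubgroup.index_eq_card S).symm.trans hSi
    have e : ZMod p ≃+ A ⧸ S := by
      exact (ZMod.ringEquivCongr hQ.symm).toAddEquiv.trans (zmodAddCyclicAddEquiv (isAddCyclic_of_prime_card hQ))
    obtain ⟨x₀, hx₀⟩ := QuotientAddGroup.mk'_surjective S (e 1)
    set gc : ZMod p → (A →+ ZMod p) := fun c =>
      (AddMonoidHom.mulLeft c).comp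
        ((e.symm : (A ⧸ S) ≃+ ZMod p).toAddMonoidHom.comp (QuotientAddGroup.mk' S)) with hgc
    have hgc_apply : ∀ c x, gc c x = c * e.symm (QuotientAddGroup.mk' S x) := fun c x => rfl
    have hgc_ker : ∀ c : ZMod p, c ≠ 0 → (gc c).ker = S := by
      intro c hc
      ext x
      simp only [AddMonoidHom.mem_ker, hgc_apply, mul_eq_zero, or_iff_right hc,
        AddEquiv.map_eq_zero_iff, QuotientAddGroup.mk'_apply, QuotientAddGroup.eq_zero_iff]
    have hgc_ne : ∀ c : ZMod p, c ≠ 0 → gc c ≠ 0 := by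
      intro c hc h0
      apply hc
      have h1 := DFunLike.congr_fun h0 x₀
      rw [hgc_apply, hx₀] at h1
      simpa using h1
    have key : Nat.card {c : ZMod p // c ≠ 0} = Nat.card {f // θ f = ⟨S, hSi⟩} := by
      refine Nat.card_eq_of_bijective
        (fun c => ⟨⟨gc c.1, hgc_ne c.1 c.2⟩, Subtype.ext (hgc_ker c.1 c.2)⟩) ⟨?_, ?_⟩
      · intro c c' hcc
        have hv : gc c.1 = gc c'.1 := congrArg (fun t => t.1.1) hcc
        have h1 := DFunLike.congr_fun hv x₀
        rw [hgc_apply, hgc_apply, hx₀, AddEquiv.symm_apply_apply, mul_one, mul_one] at h1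
        exact Subtype.ext h1
      · rintro ⟨⟨f, hf⟩, hfS⟩
        have hkf : f.ker = S := congrArg Subtype.val hfS
        have hle : S ≤ f.ker := le_of_eq hkf.symm
        set g : (A ⧸ S) →+ ZMod p := QuotientAddGroup.lift S f hle with hg
        set c : ZMod p := g (e 1) with hc
        have hgq : ∀ q : A ⧸ S, g q = e.symm q * c := by
          intro q
          have h2 := zhom (g.comp e.toAddMonoidHom) (e.symm q)
          simpa using h2
        have hglift : ∀ x : A, g (QuotientAddGroup.mk' S x) = f x := fun x =>
          QuotientAddGroup.lift_mk' S hle x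
        have hcne : c ≠ 0 := by
          intro h0
          apply hf
          ext x
          have h3 := hgq (QuotientAddGroup.mk' S x)
          rw [h0, mul_zero, hglift] at h3
          simpa using h3
        refine ⟨⟨c, hcne⟩, ?_⟩
        refine Subtype.ext (Subtype.ext ?_)
        ext x
        rw [hgc_apply, ← hglift, hgq, mul_comm]
    rw [← key, card_subtype_ne, Nat.card_zmod]
  set N := Nat.card {S : AddSubgroup A // S.index = p} with hN
  have htot : Nat.card {f : A →+ ZMod p // f ≠ 0} = (p - 1) * N :=
    card_mul_of_fibers θ (p - 1) hfib
  have hT' : Nat.card {f : A →+ ZMod p // f ≠ 0} = Nat.card (A →+ ZMod p) - 1 :=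
    card_subtype_ne 0
  -- existence of a nonzero hom A →+ ZMod p
  obtain ⟨a, ha⟩ : ∃ a : A, addOrderOf a = p := by
    cases nonempty_fintype A
    exact exists_prime_addOrderOf_dvd_card p (by rwa [← Nat.card_eq_fintype_card])
  have hane : a ≠ 0 := by
    intro h0
    exact hp.one_lt.ne (by rw [← ha, h0, addOrderOf_zero])
  have hpa : p • a = 0 := by rw [← ha]; exact addOrderOf_nsmul_eq_zero a
  set μ : A →+ A := AddMonoidHom.mk' (fun x => p • x) (fun u v => smul_add p u v) with hμ
  set M := μ.range with hM
  have hMne : M ≠ ⊤ := by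
    intro htop
    have hsurj : Function.Surjective μ := by
      intro y
      have hmem : y ∈ M := by rw [htop]; trivial
      exact hmem
    have hinj : Function.Injective μ := Finite.injective_iff_surjective.mpr hsurj
    apply hane
    apply hinj
    show p • a = μ 0
    rw [hpa, map_zero]
  obtain ⟨z, hz⟩ : ∃ z : A, z ∉ M := by
    by_contra hall
    push_neg at hall
    exact hMne ((AddSubgroup.eq_top_iff' M).mpr hall)
  haveI : Module (ZMod p) (A ⧸ M) := QuotientAddGroup.zmodModule (by intro x; exact ⟨x, rfl⟩)
  have hvne : (QuotientAddGroup.mk' M z) ≠ 0 := by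
    intro h0
    exact hz ((QuotientAddGroup.eq_zero_iff z).mp h0)
  obtain ⟨φ, hφ⟩ : ∃ φ : (A ⧸ M) →ₗ[ZMod p] ZMod p, φ (QuotientAddGroup.mk' M z) ≠ 0 := by
    by_contra hall
    push_neg at hall
    exact hvne ((Module.forall_dual_apply_eq_zero_iff (ZMod p) _).mp hall)
  set f₀ : A →+ ZMod p := φ.toAddMonoidHom.comp (QuotientAddGroup.mk' M) with hf₀
  have hf₀ne : f₀ ≠ 0 := by
    intro h0
    exact hφ (by simpa [hf₀] using DFunLike.congr_fun h0 z)
  have hsm : p • f₀ = 0 := by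
    ext x
    show p • f₀ x = 0
    rw [nsmul_eq_mul, ZMod.natCast_self, zero_mul]
  have hof : addOrderOf f₀ = p := addOrderOf_eq_prime_of hp hsm hf₀ne
  have hdvd : p ∣ Nat.card (A →+ ZMod p) :=
    (dvd_of_eq hof.symm).trans (addOrderOf_dvd_natCard f₀)
  have hpos : 1 ≤ Nat.card (A →+ ZMod p) := Nat.card_pos
  exact arith_lemma hp hdvd hpos (by rw [← hT', htot])

end indexp

section step
variable {p : ℕ}

theorem card_index_pow {G : Type*} [AddCommGroup G] [Finite G] (hp : p.Prime) :
    ∀ j : ℕ, p ^ j ∣ Nat.card G →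
      (Nat.card {S : AddSubgroup G // S.index = p ^ j} : ZMod p) = 1 := by
  haveI := finiteAddSubgroup G
  haveI : ∀ H : AddSubgroup G, H.Normal := fun H =>
    ⟨fun n hn g => by rw [add_comm g n, add_neg_cancel_right]; exact hn⟩
  intro j
  induction j with
  | zero =>
    intro _
    simp only [pow_zero]
    rw [card_index_one]
    exact Nat.cast_one
  | succ j ih =>
    intro hdvd
    have hdvdj : p ^ j ∣ Nat.card G := (pow_dvd_pow p (Nat.le_succ j)).trans hdvd
    set X := {HK : AddSubgroup G × AddSubgroup G //
       HK.1 ≤ HK.2 ∧ HK.1.index = p ^ (j+1) ∧ HK.2.index = p ^ j} with hX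
    have h1 : (Nat.card X : ZMod p)
        = Nat.card {H : AddSubgroup G // H.index = p ^ (j+1)} := by
      apply card_mod_of_fibers (fun x => ⟨x.1.1, x.2.2.1⟩)
      rintro ⟨H, hH⟩
      have e1 : {x : X // (⟨x.1.1, x.2.2.1⟩ : {H : AddSubgroup G // H.index = p ^ (j+1)})
            = ⟨H, hH⟩}
          ≃ {K : AddSubgroup G // H ≤ K ∧ K.index = p ^ j} :=
        { toFun := fun x => ⟨x.1.1.2, by
            have hx : x.1.1.1 = H := congrArg Subtype.val x.2
            exact ⟨le_trans (le_of_eq hx.symm) x.1.2.1, x.1.2.2.2⟩⟩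
          invFun := fun K => ⟨⟨(H, K.1), ⟨K.2.1, hH, K.2.2⟩⟩, rfl⟩
          left_inv := fun x => by
            have hx : x.1.1.1 = H := congrArg Subtype.val x.2
            exact Subtype.ext (Subtype.ext (Prod.ext hx.symm rfl))
          right_inv := fun K => rfl }
      have e2 : {K : AddSubgroup G // H ≤ K ∧ K.index = p ^ j}
          ≃ {S : AddSubgroup (G ⧸ H) // S.index = p ^ j} := by
        refine (Equiv.subtypeEquivRight ?_).trans
          (corrEquiv (QuotientAddGroup.mk' H) (QuotientAddGroup.mk'_surjective H) (p ^ j))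
        intro K
        rw [QuotientAddGroup.ker_mk']
      have hcardQ : Nat.card (G ⧸ H) = p ^ (j+1) := (AddSubgroup.index_eq_card H).symm.trans hH
      have e3 : {S : AddSubgroup (G ⧸ H) // S.index = p ^ j}
          ≃ {S : AddSubgroup (G ⧸ H) // Nat.card S = p} := by
        refine Equiv.subtypeEquivRight ?_
        intro S
        have hmul : Nat.card S * S.index = p ^ (j+1) := (AddSubgroup.card_mul_index S).trans hcardQ
        constructor
        · intro hS
          rw [hS] at hmul
          exact Nat.eq_of_mul_eq_mul_right (pow_pos hp.pos j) (hmul.trans (pow_succ' p j))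
        · intro hS
          rw [hS] at hmul
          exact Nat.eq_of_mul_eq_mul_left hp.pos (hmul.trans (pow_succ' p j))
      rw [Nat.card_congr (e1.trans (e2.trans e3))]
      exact card_order_p hp (by rw [hcardQ]; exact dvd_pow_self p (Nat.succ_ne_zero j))
    have h2 : (Nat.card X : ZMod p)
        = Nat.card {K : AddSubgroup G // K.index = p ^ j} := by
      apply card_mod_of_fibers (fun x => ⟨x.1.2, x.2.2.2⟩)
      rintro ⟨K, hK⟩
      have e1 : {x : X // (⟨x.1.2, x.2.2.2⟩ : {K : AddSubgroup G // K.index = p ^ j})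
            = ⟨K, hK⟩}
          ≃ {H : AddSubgroup G // H ≤ K ∧ H.index = p ^ (j+1)} :=
        { toFun := fun x => ⟨x.1.1.1, by
            have hx : x.1.1.2 = K := congrArg Subtype.val x.2
            exact ⟨le_trans x.1.2.1 (le_of_eq hx), x.1.2.2.1⟩⟩
          invFun := fun H => ⟨⟨(H.1, K), ⟨H.2.1, H.2.2, hK⟩⟩, rfl⟩
          left_inv := fun x => by
            have hx : x.1.1.2 = K := congrArg Subtype.val x.2
            exact Subtype.ext (Subtype.ext (Prod.ext rfl hx.symm))
          right_inv := fun H => rfl }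
      have hsub : ∀ T : AddSubgroup ↥K,
          (AddSubgroup.map K.subtype T).addSubgroupOf K = T := by
        intro T
        rw [show (AddSubgroup.map K.subtype T).addSubgroupOf K
            = AddSubgroup.comap K.subtype (AddSubgroup.map K.subtype T) from rfl,
          AddSubgroup.comap_map_eq, AddSubgroup.ker_subtype, sup_bot_eq]
      have e2 : {H : AddSubgroup G // H ≤ K ∧ H.index = p ^ (j+1)}
          ≃ {T : AddSubgroup ↥K // T.index = p} :=
        { toFun := fun H => ⟨H.1.addSubgroupOf K, by
            have hrel : H.1.relIndex K * K.index = H.1.index :=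
              AddSubgroup.relIndex_mul_index H.2.1
            rw [hK, H.2.2] at hrel
            exact Nat.eq_of_mul_eq_mul_right (pow_pos hp.pos j) (hrel.trans (pow_succ' p j))⟩
          invFun := fun T => ⟨AddSubgroup.map K.subtype T.1, AddSubgroup.map_subtype_le T.1, by
            have hrel : (AddSubgroup.map K.subtype T.1).relIndex K * K.index
                = (AddSubgroup.map K.subtype T.1).index :=
              AddSubgroup.relIndex_mul_index (AddSubgroup.map_subtype_le T.1)
            have hone : (AddSubgroup.map K.subtype T.1).relIndex K = p := by
              show ((AddSubgroup.map K.subtype T.1).addSubgroupOf K).index = p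
              rw [hsub]
              exact T.2
            rw [← hrel, hone, hK]
            exact (pow_succ' p j).symm⟩
          left_inv := fun H => by
            apply Subtype.ext
            show AddSubgroup.map K.subtype (H.1.addSubgroupOf K) = H.1
            rw [AddSubgroup.addSubgroupOf_map_subtype, inf_of_le_left H.2.1]
          right_inv := fun T => Subtype.ext (hsub T.1) }
      rw [Nat.card_congr (e1.trans e2)]
      have hcK : Nat.card ↥K * p ^ j = Nat.card G := by
        rw [← hK]
        exact AddSubgroup.card_mul_index K
      have hpK : p ∣ Nat.card ↥K := by
        have hdb : p * p ^ j ∣ Nat.card ↥K * p ^ j := by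
          rw [hcK, ← pow_succ']
          exact hdvd
        exact (Nat.mul_dvd_mul_iff_right (pow_pos hp.pos j)).mp hdb
      exact card_index_p hp hpK
    rw [← h1, h2]
    exact ih hdvdj

end step

/-- `N^h_{p^d}`: the number of subgroups of order `p^d` in `(ℚ_p/ℤ_p)^h`, encoded equivalently
as the number of subgroups of index `p^d` in `ℤ^h`. -/
noncomputable def Nhpd (h p d : ℕ) : ℕ :=
  Nat.card {H : AddSubgroup (Fin h → ℤ) // H.index = p ^ d}

/-- `N^h_{p^d} ≡ 1 (mod p)` for all `d ≥ 0`. -/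
theorem stmt3 (p : ℕ) (hp : p.Prime) (h : ℕ) (hh : 1 ≤ h) (d : ℕ) :
    Nhpd h p d % p = 1 % p := by
  haveI := Fact.mk hp
  haveI : NeZero (p ^ d) := ⟨pow_ne_zero d hp.ne_zero⟩
  set f : (Fin h → ℤ) →+ (Fin h → ZMod (p ^ d)) :=
    AddMonoidHom.mk' (fun x i => ((x i : ℤ) : ZMod (p ^ d)))
      (fun a b => funext fun i => by simp [Pi.add_apply]) with hf
  have hfs : Surjective f := by
    intro y
    refine ⟨fun i => (ZMod.cast (y i) : ℤ), funext fun i => ?_⟩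
    show ((ZMod.cast (y i) : ℤ) : ZMod (p ^ d)) = y i
    exact ZMod.intCast_zmod_cast (y i)
  have hker : ∀ H : AddSubgroup (Fin h → ℤ), H.index = p ^ d → f.ker ≤ H := by
    intro H hH x hx
    haveI : H.Normal := ⟨fun a ha g => by rw [add_comm g a, add_neg_cancel_right]; exact ha⟩
    have hx' : ∀ i, ((p : ℤ) ^ d) ∣ x i := by
      intro i
      have h0 : ((x i : ℤ) : ZMod (p ^ d)) = 0 := congrFun (AddMonoidHom.mem_ker.mp hx) i
      have := (ZMod.intCast_zmod_eq_zero_iff_dvd (x i) (p ^ d)).mp h0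
      rwa [Nat.cast_pow] at this
    choose c hc using hx'
    have hxc : x = (p ^ d) • c := funext fun i => by
      rw [Pi.smul_apply, nsmul_eq_mul, hc i]
      push_cast
      ring
    rw [hxc, ← hH]
    exact H.nsmul_index_mem c
  have e : {H : AddSubgroup (Fin h → ℤ) // H.index = p ^ d}
      ≃ {S : AddSubgroup (Fin h → ZMod (p ^ d)) // S.index = p ^ d} :=
    (Equiv.subtypeEquivRight (fun K => ⟨fun hK => ⟨hker K hK, hK⟩, fun hK => hK.2⟩)).trans
      (corrEquiv f hfs (p ^ d))
  have hcardG : Nat.card (Fin h → ZMod (p ^ d)) = (p ^ d) ^ h := by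
    rw [Nat.card_pi]
    simp [Nat.card_zmod]
  have hdvd : p ^ d ∣ Nat.card (Fin h → ZMod (p ^ d)) := by
    rw [hcardG]
    exact dvd_pow_self (p ^ d) (by omega)
  have hmain := card_index_pow (G := Fin h → ZMod (p ^ d)) hp d hdvd
  have hfinal : ((Nhpd h p d : ℕ) : ZMod p) = ((1 : ℕ) : ZMod p) := by
    rw [Nhpd, Nat.card_congr e, Nat.cast_one]
    exact hmain
  exact (ZMod.natCast_eq_natCast_iff _ _ _).mp hfinal
end

section
/- The sequence (N^h_{p^d})_{d≥0} converges p-adically as d → ∞, with limit 1/((1-p)(1-p^2)⋯(1-p^{h-1})) in ℤ_p. (For h = 1 the limit is 1.) -/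
open AddSubgroup

section Alg
variable {A B : Type*} [AddCommGroup A] [AddCommGroup B]

noncomputable def subEquivOfAddEquiv (e : A ≃+ B) (n : ℕ) :
    {H : AddSubgroup A // H.index = n} ≃ {H : AddSubgroup B // H.index = n} where
  toFun H := ⟨H.1.comap e.symm.toAddMonoidHom,
    by rw [AddSubgroup.index_comap_of_surjective _ e.symm.surjective, H.2]⟩
  invFun H := ⟨H.1.comap e.toAddMonoidHom,
    by rw [AddSubgroup.index_comap_of_surjective _ e.surjective, H.2]⟩
  left_inv H := by
    ext x
    simp [AddSubgroup.mem_comap]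
  right_inv H := by
    ext x
    simp [AddSubgroup.mem_comap]

lemma range_inl_eq_ker_snd :
    (AddMonoidHom.inl A B).range = (AddMonoidHom.snd A B).ker := by
  ext ⟨a, b⟩
  simp [AddMonoidHom.mem_ker, AddMonoidHom.mem_range, eq_comm, Prod.ext_iff,
    AddSubgroup.mem_prod]

lemma index_eq_comap_mul_map (H : AddSubgroup (A × B)) :
    H.index = (H.comap (AddMonoidHom.inl A B)).index *
      (H.map (AddMonoidHom.snd A B)).index := by
  have h1 : (H.comap (AddMonoidHom.inl A B)).index = H.relIndex (AddMonoidHom.snd A B).ker := by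
    rw [AddSubgroup.index_comap, range_inl_eq_ker_snd]
  have h2 : (H.map (AddMonoidHom.snd A B)).index = (H ⊔ (AddMonoidHom.snd A B).ker).index := by
    rw [AddSubgroup.index_map, AddMonoidHom.range_eq_top.2 Prod.snd_surjective,
      AddSubgroup.index_top, mul_one]
  rw [h1, h2, sup_comm H _, ← AddSubgroup.relIndex_sup_right,
    AddSubgroup.relIndex_mul_index le_sup_right]

lemma zsub_eq_zmultiples_index (S : AddSubgroup ℤ) (h : S.index ≠ 0) :
    S = zmultiples (S.index : ℤ) := by
  obtain ⟨a, rfl⟩ := Int.subgroup_cyclic S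
  rw [← zmultiples_eq_closure] at *
  rw [Int.index_zmultiples]
  ext b
  simp [Int.mem_zmultiples_iff, Int.natAbs_dvd]
end Alg

open AddSubgroup

section Con
variable {A : Type*} [AddCommGroup A]

/-- The subgroup of `A × ℤ` built from `K ≤ A`, a lift `a`, and a positive integer `k`. -/
def conSub (K : AddSubgroup A) (a : A) (k : ℕ) : AddSubgroup (A × ℤ) :=
  (K.map (AddMonoidHom.inl A ℤ)) ⊔ zmultiples (a, (k : ℤ))

lemma mem_conSub {K : AddSubgroup A} {a : A} {k : ℕ} {x : A × ℤ} :
    x ∈ conSub K a k ↔ ∃ t : ℤ, x.2 = t * k ∧ x.1 - t • a ∈ K := by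
  constructor
  · intro hx
    rw [conSub, AddSubgroup.mem_sup] at hx
    obtain ⟨y, hy, z, hz, hyz⟩ := hx
    obtain ⟨c, hc, rfl⟩ := AddSubgroup.mem_map.1 hy
    obtain ⟨t, rfl⟩ := AddSubgroup.mem_zmultiples_iff.1 hz
    refine ⟨t, ?_, ?_⟩
    · rw [← hyz]; simp [Prod.snd_add, mul_comm]
    · rw [← hyz]; simpa using hc
  · rintro ⟨t, h2, h1⟩
    rw [conSub, AddSubgroup.mem_sup]
    refine ⟨(x.1 - t • a, 0), AddSubgroup.mem_map.2 ⟨x.1 - t • a, h1, rfl⟩,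
      t • (a, (k : ℤ)), AddSubgroup.mem_zmultiples_iff.2 ⟨t, rfl⟩, ?_⟩
    ext <;> simp [h2, mul_comm]

lemma comap_inl_conSub {K : AddSubgroup A} {a : A} {k : ℕ} (hk : k ≠ 0) :
    (conSub K a k).comap (AddMonoidHom.inl A ℤ) = K := by
  ext b
  simp only [AddSubgroup.mem_comap, AddMonoidHom.inl_apply, mem_conSub]
  constructor
  · rintro ⟨t, ht, hb⟩
    have : t = 0 := by
      rcases mul_eq_zero.1 ht.symm with h | h
      · exact h
      · exact absurd (Nat.cast_eq_zero.1 h) hk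
    simpa [this] using hb
  · intro hb
    exact ⟨0, by simp, by simpa using hb⟩

lemma map_snd_conSub {K : AddSubgroup A} {a : A} {k : ℕ} :
    (conSub K a k).map (AddMonoidHom.snd A ℤ) = zmultiples (k : ℤ) := by
  ext z
  simp only [AddSubgroup.mem_map, Int.mem_zmultiples_iff]
  constructor
  · rintro ⟨⟨b, z⟩, hx, rfl⟩
    obtain ⟨t, ht, -⟩ := mem_conSub.1 hx
    exact ⟨t, by simpa [mul_comm] using ht⟩
  · rintro ⟨t, rfl⟩
    exact ⟨(t • a, (k : ℤ) * t), mem_conSub.2 ⟨t, by simp [mul_comm],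
      by simpa using K.zero_mem⟩, rfl⟩

lemma index_conSub {K : AddSubgroup A} {a : A} {k : ℕ} (hk : k ≠ 0) :
    (conSub K a k).index = K.index * k := by
  rw [index_eq_comap_mul_map (conSub K a k), comap_inl_conSub hk, map_snd_conSub,
    Int.index_zmultiples, Int.natAbs_natCast]
end Con
section Bij
variable {A : Type*} [AddCommGroup A]

noncomputable def Phi (p d : ℕ) (hp : p.Prime) :
    (Σ j : Fin (d + 1), Σ K : {K : AddSubgroup A // K.index = p ^ (j : ℕ)}, A ⧸ K.1) →
    {H : AddSubgroup (A × ℤ) // H.index = p ^ d} :=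
  fun x => ⟨conSub x.2.1.1 x.2.2.out (p ^ (d - (x.1 : ℕ))), by
    rw [index_conSub (pow_ne_zero _ hp.pos.ne'), x.2.1.2, ← pow_add,
      Nat.add_sub_cancel' (Nat.lt_succ_iff.1 x.1.2)]⟩

lemma Phi_injective (p d : ℕ) (hp : p.Prime) :
    Function.Injective (Phi (A := A) p d hp) := by
  rintro ⟨j, ⟨K, hK⟩, q⟩ ⟨j', ⟨K', hK'⟩, q'⟩ h
  have hcon : conSub K q.out (p ^ (d - (j : ℕ))) = conSub K' q'.out (p ^ (d - (j' : ℕ))) :=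
    Subtype.ext_iff.1 h
  have hne : ∀ m : ℕ, p ^ m ≠ 0 := fun m => pow_ne_zero _ hp.pos.ne'
  have hKK' : K = K' := by
    rw [← comap_inl_conSub (K := K) (a := q.out) (hne (d - (j : ℕ))), hcon,
      comap_inl_conSub (hne _)]
  have hjj' : j = j' :=
    Fin.ext (Nat.pow_right_injective hp.two_le
      (show p ^ (j : ℕ) = p ^ (j' : ℕ) by rw [← hK, ← hK', hKK']))
  subst hjj'
  subst hKK'
  have hqq' : q = q' := by
    have h1 : (q.out, ((p ^ (d - (j : ℕ)) : ℕ) : ℤ)) ∈ conSub K q.out (p ^ (d - (j : ℕ))) :=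
      mem_conSub.2 ⟨1, by simp, by simpa using K.zero_mem⟩
    have h2 : (q'.out, ((p ^ (d - (j : ℕ)) : ℕ) : ℤ)) ∈ conSub K q.out (p ^ (d - (j : ℕ))) := by
      rw [hcon]
      exact mem_conSub.2 ⟨1, by simp, by simpa using K.zero_mem⟩
    have h3 : q.out - q'.out ∈ K := by
      have h12 := sub_mem h1 h2
      rw [Prod.mk_sub_mk, sub_self] at h12
      have h13 : q.out - q'.out ∈
          (conSub K q.out (p ^ (d - (j : ℕ)))).comap (AddMonoidHom.inl A ℤ) :=
        AddSubgroup.mem_comap.2 h12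
      rwa [comap_inl_conSub (hne _)] at h13
    calc q = QuotientAddGroup.mk q.out := (QuotientAddGroup.out_eq' q).symm
      _ = QuotientAddGroup.mk q'.out := by
          rw [QuotientAddGroup.eq]
          simpa [neg_add_eq_sub] using neg_mem h3
      _ = q' := QuotientAddGroup.out_eq' q'
  subst hqq'
  rfl

lemma Phi_surjective (p d : ℕ) (hp : p.Prime) :
    Function.Surjective (Phi (A := A) p d hp) := by
  rintro ⟨H, hH⟩
  set K := H.comap (AddMonoidHom.inl A ℤ) with hKdef
  set S := H.map (AddMonoidHom.snd A ℤ) with hSdef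
  have hmul : K.index * S.index = p ^ d := by rw [← index_eq_comap_mul_map H, hH]
  have hpd : p ^ d ≠ 0 := pow_ne_zero _ hp.pos.ne'
  obtain ⟨j, hjd, hKj⟩ : ∃ j ≤ d, K.index = p ^ j :=
    (Nat.dvd_prime_pow hp).1 ⟨S.index, hmul.symm⟩
  have hSj : S.index = p ^ (d - j) := by
    have : p ^ j * S.index = p ^ j * p ^ (d - j) := by
      rw [← pow_add, Nat.add_sub_cancel' hjd, ← hKj, hmul]
    exact Nat.eq_of_mul_eq_mul_left (pow_pos hp.pos j) this
  have hSz : S = zmultiples ((p ^ (d - j) : ℕ) : ℤ) := by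
    rw [← hSj]
    exact zsub_eq_zmultiples_index S (by rw [hSj]; exact pow_ne_zero _ hp.pos.ne')
  have hmem : ((p ^ (d - j) : ℕ) : ℤ) ∈ S := by
    rw [hSz]; exact mem_zmultiples _
  obtain ⟨⟨a, z⟩, haH, hz⟩ := AddSubgroup.mem_map.1 hmem
  have hz' : z = ((p ^ (d - j) : ℕ) : ℤ) := hz
  subst hz'
  refine ⟨⟨⟨j, Nat.lt_succ_of_le hjd⟩, ⟨K, hKj⟩, QuotientAddGroup.mk a⟩, ?_⟩
  apply Subtype.ext
  show conSub K (QuotientAddGroup.mk (s := K) a).out (p ^ (d - j)) = H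
  set a' := (QuotientAddGroup.mk (s := K) a).out with ha'
  have haa' : a' - a ∈ K := by
    have heq : QuotientAddGroup.mk (s := K) a' = QuotientAddGroup.mk a :=
      QuotientAddGroup.out_eq' _
    have h := (QuotientAddGroup.eq).1 heq
    have h2 := neg_mem h
    convert h2 using 1
    abel
  rw [hKdef] at haa'
  have haa'' := AddSubgroup.mem_comap.1 haa'
  have ha'H : (a', ((p ^ (d - j) : ℕ) : ℤ)) ∈ H := by
    have := add_mem haa'' haH
    simpa using this
  apply le_antisymm
  · rw [conSub]
    apply sup_le
    · rintro x hx
      obtain ⟨c, hc, rfl⟩ := AddSubgroup.mem_map.1 hx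
      exact hc
    · rintro x hx
      obtain ⟨t, rfl⟩ := AddSubgroup.mem_zmultiples_iff.1 hx
      exact zsmul_mem ha'H t
  · rintro ⟨b, z⟩ hbz
    have hzS : z ∈ S := AddSubgroup.mem_map.2 ⟨(b, z), hbz, rfl⟩
    rw [hSz] at hzS
    obtain ⟨t, rfl⟩ := Int.mem_zmultiples_iff.1 hzS
    refine mem_conSub.2 ⟨t, mul_comm _ _, ?_⟩
    have := sub_mem hbz (zsmul_mem ha'H t)
    exact AddSubgroup.mem_comap.2 (by simpa [smul_eq_mul, mul_comm] using this)
end Bij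
section Count
variable {A : Type*} [AddCommGroup A]

lemma quot_finite {n : ℕ} (hn : n ≠ 0) (K : {K : AddSubgroup A // K.index = n}) :
    Finite (A ⧸ K.1) :=
  Nat.finite_of_card_ne_zero (by rw [← AddSubgroup.index_eq_card, K.2]; exact hn)

lemma finite_and_card (p d : ℕ) (hp : p.Prime)
    (hfin : ∀ j, Finite {K : AddSubgroup A // K.index = p ^ j}) :
    Finite {H : AddSubgroup (A × ℤ) // H.index = p ^ d} ∧
    Nat.card {H : AddSubgroup (A × ℤ) // H.index = p ^ d} =
      ∑ j ∈ Finset.range (d + 1),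
        p ^ j * Nat.card {K : AddSubgroup A // K.index = p ^ j} := by
  have hne : ∀ m : ℕ, p ^ m ≠ 0 := fun m => pow_ne_zero _ hp.pos.ne'
  haveI : ∀ j : Fin (d + 1), Finite {K : AddSubgroup A // K.index = p ^ (j : ℕ)} :=
    fun j => hfin j
  haveI : ∀ (j : Fin (d + 1)) (K : {K : AddSubgroup A // K.index = p ^ (j : ℕ)}),
      Finite (A ⧸ K.1) := fun j K => quot_finite (hne _) K
  let e := Equiv.ofBijective (Phi (A := A) p d hp)
    ⟨Phi_injective p d hp, Phi_surjective p d hp⟩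
  constructor
  · exact Finite.of_equiv _ e
  · haveI : ∀ j : Fin (d + 1), Fintype {K : AddSubgroup A // K.index = p ^ (j : ℕ)} :=
      fun j => Fintype.ofFinite _
    haveI : ∀ (j : Fin (d + 1)) (K : {K : AddSubgroup A // K.index = p ^ (j : ℕ)}),
        Fintype (A ⧸ K.1) := fun j K => Fintype.ofFinite _
    rw [Nat.card_congr e.symm, Nat.card_eq_fintype_card, Fintype.card_sigma,
      ← Fin.sum_univ_eq_sum_range
        (fun j => p ^ j * Nat.card {K : AddSubgroup A // K.index = p ^ j})]
    refine Finset.sum_congr rfl fun j _ => ?_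
    rw [Fintype.card_sigma]
    have hcard : ∀ K : {K : AddSubgroup A // K.index = p ^ (j : ℕ)},
        Fintype.card (A ⧸ K.1) = p ^ (j : ℕ) := by
      intro K
      rw [← Nat.card_eq_fintype_card, ← AddSubgroup.index_eq_card, K.2]
    simp only [hcard, Finset.sum_const, Finset.card_univ, smul_eq_mul]
    rw [Nat.card_eq_fintype_card, mul_comm]
end Count
lemma z_subsingleton (n : ℕ) (hn : n ≠ 0) :
    Subsingleton {H : AddSubgroup ℤ // H.index = n} := by
  have huniq : ∀ H : {H : AddSubgroup ℤ // H.index = n},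
      H.1 = AddSubgroup.zmultiples (n : ℤ) := fun H => by
    have := zsub_eq_zmultiples_index H.1 (H.2.symm ▸ hn)
    rwa [H.2] at this
  exact ⟨fun H H' => Subtype.ext ((huniq H).trans (huniq H').symm)⟩

lemma z_nonempty (n : ℕ) : Nonempty {H : AddSubgroup ℤ // H.index = n} :=
  ⟨⟨AddSubgroup.zmultiples (n : ℤ), by rw [Int.index_zmultiples, Int.natAbs_natCast]⟩⟩

lemma z_card (n : ℕ) (hn : n ≠ 0) : Nat.card {H : AddSubgroup ℤ // H.index = n} = 1 := by
  haveI := z_subsingleton n hn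
  haveI := z_nonempty n
  exact Nat.card_unique

def finOneAddEquiv : (Fin 1 → ℤ) ≃+ ℤ where
  toFun f := f 0
  invFun z := fun _ => z
  left_inv f := by funext i; rw [Subsingleton.elim i 0]
  right_inv z := rfl
  map_add' f g := rfl

def finSuccAddEquiv (h : ℕ) : (Fin (h + 1) → ℤ) ≃+ (Fin h → ℤ) × ℤ where
  toFun f := (fun i => f i.castSucc, f (Fin.last h))
  invFun x := Fin.snoc x.1 x.2
  left_inv f := by
    funext i
    induction i using Fin.lastCases with
    | last => simp
    | cast i => simp
  right_inv x := by
    ext i <;> simp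
  map_add' f g := rfl

lemma finite_sub (p : ℕ) (hp : p.Prime) :
    ∀ h, 1 ≤ h → ∀ d, Finite {H : AddSubgroup (Fin h → ℤ) // H.index = p ^ d} := by
  intro h
  induction h with
  | zero => omega
  | succ h ih =>
    intro _ d
    rcases Nat.eq_zero_or_pos h with h0 | hpos
    · subst h0
      haveI := z_subsingleton (p ^ d) (pow_ne_zero _ hp.pos.ne')
      haveI : Finite {H : AddSubgroup ℤ // H.index = p ^ d} := Finite.of_subsingleton
      exact Finite.of_equiv _ (subEquivOfAddEquiv finOneAddEquiv (p ^ d)).symm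
    · haveI := (finite_and_card (A := Fin h → ℤ) p d hp (fun j => ih hpos j)).1
      exact Finite.of_equiv _ (subEquivOfAddEquiv (finSuccAddEquiv h) (p ^ d)).symm

lemma Nhpd_one (p d : ℕ) (hp : p.Prime) : Nhpd 1 p d = 1 := by
  rw [Nhpd, Nat.card_congr (subEquivOfAddEquiv finOneAddEquiv (p ^ d))]
  exact z_card _ (pow_ne_zero _ hp.pos.ne')

lemma Nhpd_succ (p h d : ℕ) (hp : p.Prime) (hh : 1 ≤ h) :
    Nhpd (h + 1) p d = ∑ j ∈ Finset.range (d + 1), p ^ j * Nhpd h p j := by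
  rw [Nhpd, Nat.card_congr (subEquivOfAddEquiv (finSuccAddEquiv h) (p ^ d))]
  exact (finite_and_card p d hp (fun j => finite_sub p hp h hh j)).2
section Analysis
variable (p : ℕ) [hp : Fact p.Prime]

lemma norm_nat_le_one (n : ℕ) : ‖(n : ℚ_[p])‖ ≤ 1 := by
  have := Padic.norm_int_le_one (p := p) (n : ℤ)
  push_cast at this
  exact this

lemma summable_norm_aux (c : ℕ → ℚ_[p]) (hc : ∀ n, ‖c n‖ ≤ 1) {t : ℚ_[p]} (ht : ‖t‖ < 1) :
    Summable fun n => ‖t ^ n * c n‖ := by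
  refine Summable.of_nonneg_of_le (fun n => norm_nonneg _) (fun n => ?_)
    (summable_geometric_of_lt_one (norm_nonneg t) ht)
  rw [norm_mul, norm_pow]
  exact mul_le_of_le_one_right (by positivity) (hc n)

lemma tsum_eval : ∀ h, 1 ≤ h → ∀ t : ℚ_[p], ‖t‖ < 1 →
    ∑' j, t ^ j * (Nhpd h p j : ℚ_[p]) =
      ∏ i ∈ Finset.range h, (1 - (p : ℚ_[p]) ^ i * t)⁻¹ := by
  intro h
  induction h with
  | zero => omega
  | succ h ih =>
    intro _ t ht
    rcases Nat.eq_zero_or_pos h with h0 | hpos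
    · subst h0
      simp only [Nhpd_one p _ hp.out, Nat.cast_one, mul_one]
      rw [tsum_geometric_of_norm_lt_one ht]
      simp
    · have hpt : ‖(p : ℚ_[p]) * t‖ < 1 := by
        rw [norm_mul]
        exact lt_of_le_of_lt (mul_le_of_le_one_left (norm_nonneg t) (norm_nat_le_one p p)) ht
      set f : ℕ → ℚ_[p] := fun k => ((p : ℚ_[p]) * t) ^ k * (Nhpd h p k : ℚ_[p]) with hfdef
      set g : ℕ → ℚ_[p] := fun l => t ^ l * (1 : ℚ_[p]) with hgdef
      have hf : Summable fun n => ‖f n‖ :=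
        summable_norm_aux p _ (fun n => norm_nat_le_one p _) hpt
      have hg : Summable fun n => ‖g n‖ :=
        summable_norm_aux p (fun _ => 1) (fun _ => by simp) ht
      have key := tsum_mul_tsum_eq_tsum_sum_range_of_summable_norm hf hg
      have heq : ∀ n, ∑ k ∈ Finset.range (n + 1), f k * g (n - k) =
          t ^ n * (Nhpd (h + 1) p n : ℚ_[p]) := by
        intro n
        rw [show ((Nhpd (h + 1) p n : ℚ_[p])) =
            ∑ k ∈ Finset.range (n + 1), (p : ℚ_[p]) ^ k * (Nhpd h p k : ℚ_[p]) by
          rw [Nhpd_succ p h n hp.out hpos]; push_cast; ring_nf]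
        rw [Finset.mul_sum]
        refine Finset.sum_congr rfl fun k hk => ?_
        have hkn : k ≤ n := Nat.lt_succ_iff.1 (Finset.mem_range.1 hk)
        have htk : t ^ k * t ^ (n - k) = t ^ n := by
          rw [← pow_add, Nat.add_sub_cancel' hkn]
        simp only [hfdef, hgdef, mul_one]
        rw [mul_pow, ← htk]
        ring
      calc ∑' j, t ^ j * (Nhpd (h + 1) p j : ℚ_[p])
          = ∑' n, ∑ k ∈ Finset.range (n + 1), f k * g (n - k) := (tsum_congr heq).symm
        _ = (∑' n, f n) * (∑' n, g n) := key.symm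
        _ = (∏ i ∈ Finset.range h, (1 - (p : ℚ_[p]) ^ i * ((p : ℚ_[p]) * t))⁻¹) *
              (1 - t)⁻¹ := by
            rw [ih hpos _ hpt]
            congr 1
            simp only [hgdef, mul_one]
            exact tsum_geometric_of_norm_lt_one ht
        _ = ∏ i ∈ Finset.range (h + 1), (1 - (p : ℚ_[p]) ^ i * t)⁻¹ := by
            rw [Finset.prod_range_succ']
            congr 1
            · exact Finset.prod_congr rfl fun i _ => by rw [pow_succ]; ring_nf
            · simp
end Analysis
/-- the sequence `(N^h_{p^d})_d` converges `p`-adically to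
`1/((1-p)(1-p^2)⋯(1-p^{h-1}))` (for `h = 1`, the empty product, the limit is `1`). -/
theorem stmt4 (p : ℕ) [Fact p.Prime] (h : ℕ) (hh : 1 ≤ h) :
    Filter.Tendsto (fun d => (Nhpd h p d : ℚ_[p])) Filter.atTop
      (nhds ((∏ i ∈ Finset.Ico 1 h, (1 - (p : ℚ_[p]) ^ i))⁻¹)) := by
  have hp : p.Prime := Fact.out
  obtain ⟨m, rfl⟩ : ∃ m, h = m + 1 := ⟨h - 1, (Nat.succ_pred_eq_of_pos hh).symm⟩
  rcases Nat.eq_zero_or_pos m with h0 | hpos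
  · subst h0
    simp only [Nhpd_one p _ hp, Nat.cast_one]
    have he : (∏ i ∈ Finset.Ico 1 1, (1 - (p : ℚ_[p]) ^ i))⁻¹ = 1 := by simp
    rw [he]
    exact tendsto_const_nhds
  · have hnormp : ‖(p : ℚ_[p])‖ < 1 := by
      rw [Padic.norm_p]
      rw [inv_lt_one₀ (by exact_mod_cast hp.pos)]
      exact_mod_cast hp.one_lt
    have hseq : ∀ d, (Nhpd (m + 1) p d : ℚ_[p]) =
        ∑ j ∈ Finset.range (d + 1), (p : ℚ_[p]) ^ j * (Nhpd m p j : ℚ_[p]) := by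
      intro d
      rw [Nhpd_succ p m d hp hpos]
      push_cast
      ring_nf
    have hsum : Summable (fun j => (p : ℚ_[p]) ^ j * (Nhpd m p j : ℚ_[p])) :=
      (summable_norm_aux p _ (fun n => norm_nat_le_one p _) hnormp).of_norm
    have hval : ∑' j, (p : ℚ_[p]) ^ j * (Nhpd m p j : ℚ_[p]) =
        (∏ i ∈ Finset.Ico 1 (m + 1), (1 - (p : ℚ_[p]) ^ i))⁻¹ := by
      rw [tsum_eval p m hpos _ hnormp, ← Finset.prod_inv_distrib,
        Finset.prod_Ico_eq_prod_range]
      simp only [Nat.add_sub_cancel]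
      exact Finset.prod_congr rfl fun i _ => by rw [add_comm 1 i, pow_succ]
    have h2 : Filter.Tendsto
        (fun d => ∑ j ∈ Finset.range (d + 1), (p : ℚ_[p]) ^ j * (Nhpd m p j : ℚ_[p]))
        Filter.atTop (nhds (∑' j, (p : ℚ_[p]) ^ j * (Nhpd m p j : ℚ_[p]))) :=
      hsum.hasSum.tendsto_sum_nat.comp (Filter.tendsto_add_atTop_nat 1)
    rw [← hval]
    simp only [hseq]
    exact h2
end

section
/- Let R be a ℤ_{(p)}-algebra (a commutative ring in which every prime other than p is invertible) and M an R-module. In the cokernel M^[p] of the norm map N = Σ_{σ∈Σ_p} σ : M^{⊗p} → (M^{⊗p})^{Σ_p}, the map x ↦ [x^{⊗p}] is additive and its image is killed by p: (x+y)^{[p]} = x^{[p]} + y^{[p]} and p·x^{[p]} = 0. -/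
open scoped TensorProduct
open scoped Nat

/-- The norm (symmetrization) endomorphism `N = Σ_{σ ∈ Σ_p} σ` of the `p`-fold tensor power
of `M` over `R`, where `Σ_p` permutes the tensor factors. -/
noncomputable def normMap (R : Type*) [CommSemiring R] (M : Type*) [AddCommMonoid M]
    [Module R M] (p : ℕ) :
    (⨂[R] _i : Fin p, M) →ₗ[R] (⨂[R] _i : Fin p, M) :=
  ∑ σ : Equiv.Perm (Fin p), (PiTensorProduct.reindex R (fun _ : Fin p => M) σ).toLinearMap

section Aux

theorem aux_isUnit {R : Type*} [CommRing R] {p : ℕ}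
    (hR : ∀ q : ℕ, q.Prime → q ≠ p → IsUnit (q : R)) :
    ∀ m : ℕ, 0 < m → m < p → IsUnit ((m : ℕ) : R) := by
  intro m
  induction m using Nat.strong_induction_on with
  | _ m ih =>
    intro hm0 hmp
    rcases eq_or_lt_of_le (show 1 ≤ m from hm0) with h1 | h1
    · simp [← h1]
    · have hq : (m.minFac).Prime := Nat.minFac_prime (by omega)
      have hqle : m.minFac ≤ m := Nat.minFac_le hm0
      have hu1 : IsUnit ((m.minFac : ℕ) : R) := hR _ hq (by omega)
      have hdvd : m.minFac ∣ m := Nat.minFac_dvd m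
      have hlt : m / m.minFac < m := Nat.div_lt_self hm0 hq.one_lt
      have hpos : 0 < m / m.minFac := Nat.div_pos hqle hq.pos
      have hu2 : IsUnit ((m / m.minFac : ℕ) : R) := ih _ hlt hpos (lt_trans hlt hmp)
      have hm : m = m.minFac * (m / m.minFac) := (Nat.mul_div_cancel' hdvd).symm
      rw [hm]
      push_cast
      exact hu1.mul hu2

theorem aux_isUnit_factorial {R : Type*} [CommRing R] {p : ℕ}
    (hR : ∀ q : ℕ, q.Prime → q ≠ p → IsUnit (q : R)) :
    ∀ n : ℕ, n < p → IsUnit ((n ! : ℕ) : R) := by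
  intro n
  induction n with
  | zero => simp
  | succ n ih =>
    intro h
    rw [Nat.factorial_succ]
    push_cast
    have := (aux_isUnit hR (n + 1) (Nat.succ_pos n) h).mul (ih (by omega))
    convert this using 2
    push_cast
    ring

open Finset in
theorem aux_fiber_card {p k : ℕ} {S0 : Finset (Fin p)} (hS0 : S0.card = k) :
    ∀ S ∈ powersetCard k (univ : Finset (Fin p)),
      (Finset.univ.filter (fun σ : Equiv.Perm (Fin p) => S0.image σ = S)).card
        = k ! * (p - k)! := by
  have hkp : k ≤ p := by
    have := Finset.card_le_card (Finset.subset_univ S0)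
    simpa [hS0] using this
  have hsame : ∀ S ∈ powersetCard k (univ : Finset (Fin p)),
      ∀ S' ∈ powersetCard k (univ : Finset (Fin p)),
      (Finset.univ.filter (fun σ : Equiv.Perm (Fin p) => S0.image σ = S)).card =
        (Finset.univ.filter (fun σ : Equiv.Perm (Fin p) => S0.image σ = S')).card := by
    intro S hS S' hS'
    rw [mem_powersetCard_univ] at hS hS'
    obtain ⟨τ, hτ⟩ : ∃ τ : Equiv.Perm (Fin p), S.image τ = S' := by
      have e : (S : Finset (Fin p)) ≃ (S' : Finset (Fin p)) :=
        Finset.equivOfCardEq (by rw [hS, hS'])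
      refine ⟨e.extendSubtype, ?_⟩
      apply Finset.eq_of_subset_of_card_le
      · intro a ha
        obtain ⟨b, hb, rfl⟩ := Finset.mem_image.1 ha
        exact e.extendSubtype_mem b hb
      · rw [Finset.card_image_of_injective _ (Equiv.injective _), hS, hS']
    have hτ' : S'.image ⇑τ⁻¹ = S := by
      rw [← hτ, Finset.image_image]
      have h2 : (⇑τ⁻¹ ∘ ⇑τ) = id := by funext a; simp
      rw [h2, Finset.image_id]
    apply Finset.card_bij' (fun σ _ => τ * σ) (fun σ _ => τ⁻¹ * σ)
    · intro σ hσ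
      simp only [mem_filter, mem_univ, true_and] at hσ ⊢
      rw [show ⇑(τ * σ) = ⇑τ ∘ ⇑σ from rfl, ← Finset.image_image, hσ, hτ]
    · intro σ hσ
      simp only [mem_filter, mem_univ, true_and] at hσ ⊢
      rw [show ⇑(τ⁻¹ * σ) = ⇑τ⁻¹ ∘ ⇑σ from rfl, ← Finset.image_image, hσ, hτ']
    · intro σ _; group
    · intro σ _; group
  intro S hS
  have h1 : (Finset.univ : Finset (Equiv.Perm (Fin p))).card =
      ∑ S' ∈ powersetCard k (univ : Finset (Fin p)),
        (Finset.univ.filter (fun σ : Equiv.Perm (Fin p) => S0.image σ = S')).card := by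
    apply Finset.card_eq_sum_card_fiberwise
    intro σ _
    rw [Finset.mem_coe]; beta_reduce
    rw [mem_powersetCard_univ, Finset.card_image_of_injective _ σ.injective, hS0]
  have h2 : ∑ S' ∈ powersetCard k (univ : Finset (Fin p)),
      (Finset.univ.filter (fun σ : Equiv.Perm (Fin p) => S0.image σ = S')).card =
      p.choose k *
        (Finset.univ.filter (fun σ : Equiv.Perm (Fin p) => S0.image σ = S)).card := by
    rw [Finset.sum_congr rfl (fun S' hS' => hsame S' hS' S hS), Finset.sum_const,
      smul_eq_mul, Finset.card_powersetCard, Finset.card_univ, Fintype.card_fin]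
  have h3 : (Finset.univ : Finset (Equiv.Perm (Fin p))).card = p ! := by
    rw [Finset.card_univ, Fintype.card_perm, Fintype.card_fin]
  have h4 : p.choose k * (k ! * (p - k)!) = p ! := by
    rw [← mul_assoc]
    exact Nat.choose_mul_factorial_mul_factorial hkp
  apply Nat.eq_of_mul_eq_mul_left (Nat.choose_pos hkp)
  rw [h4, ← h2, ← h1, h3]

end Aux

theorem normMap_tprod {R : Type*} [CommSemiring R] {M : Type*} [AddCommMonoid M] [Module R M]
    {p : ℕ} (f : Fin p → M) :
    normMap R M p (PiTensorProduct.tprod R f)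
      = ∑ σ : Equiv.Perm (Fin p), PiTensorProduct.tprod R (fun i => f (σ.symm i)) := by
  rw [normMap, LinearMap.sum_apply]
  exact Finset.sum_congr rfl fun σ _ => by
    simpa using PiTensorProduct.reindex_tprod (R := R) (s := fun _ : Fin p => M) σ f

open Finset in
theorem aux_piecewise_comp {p : ℕ} {M : Type*} (x y : M) (S0 : Finset (Fin p))
    (σ : Equiv.Perm (Fin p)) :
    (fun i => S0.piecewise (fun _ => x) (fun _ => y) (σ.symm i))
      = (S0.image σ).piecewise (fun _ => x) (fun _ => y) := by
  funext i
  by_cases h : i ∈ S0.image σ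
  · obtain ⟨a, ha, rfl⟩ := Finset.mem_image.1 h
    rw [Finset.piecewise_eq_of_mem _ _ _ h, Equiv.symm_apply_apply,
      Finset.piecewise_eq_of_mem _ _ _ ha]
  · have h' : σ.symm i ∉ S0 := fun hc => h (Finset.mem_image.2 ⟨σ.symm i, hc, by simp⟩)
    rw [Finset.piecewise_eq_of_notMem _ _ _ h, Finset.piecewise_eq_of_notMem _ _ _ h']

open Finset in
theorem aux_sum_mid {R : Type*} [CommRing R] {M : Type*} [AddCommGroup M] [Module R M]
    {p k : ℕ} (hk0 : 0 < k) (hkp : k < p)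
    (hR : ∀ q : ℕ, q.Prime → q ≠ p → IsUnit (q : R)) (x y : M) :
    (∑ S ∈ Finset.powersetCard k (Finset.univ : Finset (Fin p)),
       PiTensorProduct.tprod R (S.piecewise (fun _ => x) (fun _ => y)))
      ∈ LinearMap.range (normMap R M p) := by
  obtain ⟨S0, hS0⟩ := Finset.powersetCard_nonempty.2
    (by rw [Finset.card_univ, Fintype.card_fin]; omega :
      k ≤ (Finset.univ : Finset (Fin p)).card)
  have hS0card : S0.card = k := Finset.mem_powersetCard_univ.1 hS0
  set t : Finset (Fin p) → (⨂[R] _i : Fin p, M) :=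
    fun S => PiTensorProduct.tprod R (S.piecewise (fun _ => x) (fun _ => y)) with ht
  have hmaps : ∀ σ ∈ (Finset.univ : Finset (Equiv.Perm (Fin p))),
      S0.image ⇑σ ∈ Finset.powersetCard k (Finset.univ : Finset (Fin p)) := by
    intro σ _
    rw [Finset.mem_powersetCard_univ, Finset.card_image_of_injective _ σ.injective, hS0card]
  have step1 : ∀ σ : Equiv.Perm (Fin p),
      (PiTensorProduct.tprod R fun i => S0.piecewise (fun _ => x) (fun _ => y) (σ.symm i))
        = t (S0.image σ) := fun σ => congrArg _ (aux_piecewise_comp x y S0 σ)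
  have hnorm : normMap R M p (t S0) = ((k ! * (p - k)! : ℕ) : R) • ∑ S ∈
      Finset.powersetCard k (Finset.univ : Finset (Fin p)), t S := by
    calc normMap R M p (t S0)
        = ∑ σ : Equiv.Perm (Fin p), t (S0.image σ) := by
          rw [show t S0 = PiTensorProduct.tprod R
            (S0.piecewise (fun _ => x) (fun _ => y)) from rfl, normMap_tprod]
          exact Finset.sum_congr rfl fun σ _ => step1 σ
      _ = ∑ S ∈ Finset.powersetCard k (Finset.univ : Finset (Fin p)),
            ∑ _σ ∈ Finset.univ.filter
              (fun σ : Equiv.Perm (Fin p) => S0.image σ = S), t S :=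
          (Finset.sum_fiberwise_of_maps_to' hmaps t).symm
      _ = ∑ S ∈ Finset.powersetCard k (Finset.univ : Finset (Fin p)),
            ((k ! * (p - k)! : ℕ) : R) • t S := by
          refine Finset.sum_congr rfl fun S hS => ?_
          rw [Finset.sum_const, aux_fiber_card hS0card S hS,
            Nat.cast_smul_eq_nsmul R]
      _ = ((k ! * (p - k)! : ℕ) : R) • ∑ S ∈
            Finset.powersetCard k (Finset.univ : Finset (Fin p)), t S :=
          (Finset.smul_sum).symm
  have hu : IsUnit ((k ! * (p - k)! : ℕ) : R) := by
    push_cast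
    exact (aux_isUnit_factorial hR k (by omega)).mul
      (aux_isUnit_factorial hR (p - k) (by omega))
  refine ⟨(↑hu.unit⁻¹ : R) • t S0, ?_⟩
  rw [map_smul, hnorm, smul_smul, IsUnit.val_inv_mul, one_smul]

/-- over a `ℤ_(p)`-algebra `R` (every prime `q ≠ p` is invertible in `R`),
in the cokernel `M^[p]` of the norm map on the `p`-th tensor power of an `R`-module `M`,
the map `x ↦ x^{[p]} = [x ⊗ ⋯ ⊗ x]` is additive and its values are killed by `p`.
(The cokernel of `N : M^{⊗p} → (M^{⊗p})^{Σ_p}` is identified with the quotient of `M^{⊗p}`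
by the image of `N`, the image of `N` being contained in the invariants.) -/
theorem stmt6 (p : ℕ) (hp : p.Prime) (R : Type*) [CommRing R]
    (hR : ∀ q : ℕ, q.Prime → q ≠ p → IsUnit (q : R))
    (M : Type*) [AddCommGroup M] [Module R M] :
    (∀ x y : M,
      Submodule.Quotient.mk (p := LinearMap.range (normMap R M p))
          (PiTensorProduct.tprod R fun _ : Fin p => x + y) =
        Submodule.Quotient.mk (p := LinearMap.range (normMap R M p))
            (PiTensorProduct.tprod R fun _ : Fin p => x) +
          Submodule.Quotient.mk (p := LinearMap.range (normMap R M p))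
            (PiTensorProduct.tprod R fun _ : Fin p => y)) ∧
    (∀ x : M,
      p • Submodule.Quotient.mk (p := LinearMap.range (normMap R M p))
          (PiTensorProduct.tprod R fun _ : Fin p => x) = 0) := by
  constructor
  · intro x y
    have hPC : Finset.powersetCard p (Finset.univ : Finset (Fin p)) =
        {(Finset.univ : Finset (Fin p))} := by
      have h := Finset.powersetCard_self (Finset.univ : Finset (Fin p))
      rwa [show (Finset.univ : Finset (Fin p)).card = p by simp] at h
    have hexp : (PiTensorProduct.tprod R fun _ : Fin p => x + y)
        = (PiTensorProduct.tprod R fun _ : Fin p => y)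
          + (∑ j ∈ Finset.Ico 1 p, ∑ S ∈ Finset.powersetCard j
              (Finset.univ : Finset (Fin p)),
              PiTensorProduct.tprod R (S.piecewise (fun _ => x) (fun _ => y)))
          + (PiTensorProduct.tprod R fun _ : Fin p => x) := by
      rw [show (fun _ : Fin p => x + y) = ((fun _ => x) + fun _ => y) from rfl,
        MultilinearMap.map_add_univ, ← Finset.powerset_univ, Finset.sum_powerset,
        Finset.card_univ, Fintype.card_fin, Finset.sum_range_succ,
        Finset.sum_range_eq_add_Ico _ hp.pos, Finset.powersetCard_zero,
        Finset.sum_singleton, hPC, Finset.sum_singleton,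
        Finset.piecewise_empty, Finset.piecewise_univ]
    rw [hexp, Submodule.Quotient.mk_add, Submodule.Quotient.mk_add]
    have hmid : Submodule.Quotient.mk (p := LinearMap.range (normMap R M p))
        (∑ j ∈ Finset.Ico 1 p, ∑ S ∈ Finset.powersetCard j
          (Finset.univ : Finset (Fin p)),
          PiTensorProduct.tprod R (S.piecewise (fun _ => x) (fun _ => y))) = 0 := by
      rw [Submodule.Quotient.mk_eq_zero]
      refine Submodule.sum_mem _ fun j hj => ?_
      obtain ⟨h1, h2⟩ := Finset.mem_Ico.1 hj
      exact aux_sum_mid h1 h2 hR x y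
    rw [hmid, add_zero]
    abel
  · intro x
    have h1 : normMap R M p (PiTensorProduct.tprod R fun _ : Fin p => x)
        = (p !) • (PiTensorProduct.tprod R fun _ : Fin p => x) := by
      rw [normMap_tprod]
      simp [Finset.sum_const, Finset.card_univ, Fintype.card_perm, Fintype.card_fin]
    have hq0 : (p !) • Submodule.Quotient.mk (p := LinearMap.range (normMap R M p))
        (PiTensorProduct.tprod R fun _ : Fin p => x) = 0 := by
      rw [show Submodule.Quotient.mk (p := LinearMap.range (normMap R M p))
            (PiTensorProduct.tprod R fun _ : Fin p => x)
          = (LinearMap.range (normMap R M p)).mkQ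
            (PiTensorProduct.tprod R fun _ : Fin p => x) from rfl,
        ← map_nsmul, Submodule.mkQ_apply, Submodule.Quotient.mk_eq_zero]
      exact ⟨_, h1⟩
    have hzero : ((p ! : ℕ) : R) • Submodule.Quotient.mk
        (p := LinearMap.range (normMap R M p))
        (PiTensorProduct.tprod R fun _ : Fin p => x) = 0 := by
      rw [Nat.cast_smul_eq_nsmul]; exact hq0
    have hu : IsUnit (((p - 1)! : ℕ) : R) := aux_isUnit_factorial hR (p - 1)
      (by have := hp.pos; omega)
    have key : (((p - 1)! : ℕ) : R) • ((p : R) • Submodule.Quotient.mk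
        (p := LinearMap.range (normMap R M p))
        (PiTensorProduct.tprod R fun _ : Fin p => x)) = 0 := by
      rw [smul_smul]
      have hc : (((p - 1)! : ℕ) : R) * (p : R) = ((p ! : ℕ) : R) := by
        rw [← Nat.cast_mul]
        congr 1
        rw [mul_comm]
        exact Nat.mul_factorial_pred hp.ne_zero
      rw [hc, hzero]
    calc p • Submodule.Quotient.mk (p := LinearMap.range (normMap R M p))
          (PiTensorProduct.tprod R fun _ : Fin p => x)
        = (p : R) • Submodule.Quotient.mk (p := LinearMap.range (normMap R M p))
          (PiTensorProduct.tprod R fun _ : Fin p => x) :=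
          (Nat.cast_smul_eq_nsmul R p _).symm
      _ = (↑hu.unit⁻¹ : R) • ((↑hu.unit : R) • ((p : R) • Submodule.Quotient.mk
            (p := LinearMap.range (normMap R M p))
            (PiTensorProduct.tprod R fun _ : Fin p => x))) := by
          rw [smul_smul, smul_smul, Units.inv_mul, one_mul]
      _ = (↑hu.unit⁻¹ : R) • ((((p - 1)! : ℕ) : R) • ((p : R) • Submodule.Quotient.mk
            (p := LinearMap.range (normMap R M p))
            (PiTensorProduct.tprod R fun _ : Fin p => x))) := by
          rw [IsUnit.unit_spec]
      _ = 0 := by rw [key, smul_zero]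
end

section
/- (Wohlfahrt's identity) For any finite group G, the exponential generating function identity Σ_{m≥0} (|Hom(G, Σ_m)|/m!) X^m = exp(Σ_{H ≤ G} X^{[G:H]}/[G:H]) holds in ℚ[[X]], where the sum on the right runs over all subgroups H of G. -/
open PowerSeries

set_option linter.unusedSectionVars false
open scoped Classical

noncomputable instance subgroupFintypeOfFintype {G : Type*} [Group G] [Fintype G] :
    Fintype (Subgroup G) := by
  haveI : Finite (Subgroup G) :=
    Finite.of_injective (fun H : Subgroup G => (H : Set G)) SetLike.coe_injective
  exact Fintype.ofFinite _

instance monoidHomFinite {G M : Type*} [Monoid G] [Monoid M] [Finite G] [Finite M] :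
    Finite (G →* M) :=
  Finite.of_injective (fun f => (f : G → M)) DFunLike.coe_injective

/-- Conjugation of permutations by an equivalence, as a monoid hom. -/
def permHomCongr {α β : Type*} (e : α ≃ β) : Equiv.Perm α →* Equiv.Perm β where
  toFun σ := e.permCongr σ
  map_one' := by ext x; simp
  map_mul' σ τ := by ext x; simp [Equiv.permCongr_apply, Equiv.Perm.mul_apply]

@[simp] lemma permHomCongr_apply {α β : Type*} (e : α ≃ β) (σ : Equiv.Perm α) (x : β) :
    permHomCongr e σ x = e (σ (e.symm x)) := rfl

section Comb

variable {G : Type*} [Group G] [Fintype G]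

/-- The stabilizer of `0` for a homomorphism to permutations of `Fin (n+1)`. -/
def stabSubgroup (n : ℕ) (φ : G →* Equiv.Perm (Fin (n + 1))) : Subgroup G where
  carrier := {g | φ g 0 = 0}
  one_mem' := by simp
  mul_mem' := by
    intro a b ha hb
    simp only [Set.mem_setOf_eq] at *
    rw [map_mul]
    simp [Equiv.Perm.mul_apply, hb, ha]
  inv_mem' := by
    intro a ha
    simp only [Set.mem_setOf_eq] at *
    rw [map_inv]
    simp [Equiv.Perm.inv_eq_iff_eq, ha, Equiv.symm_apply_eq]

lemma mem_stabSubgroup_iff (n : ℕ) (φ : G →* Equiv.Perm (Fin (n + 1))) (g : G) :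
    g ∈ stabSubgroup n φ ↔ φ g 0 = 0 := Iff.rfl

/-- The orbit embedding `G ⧸ Stab(0) ↪ Fin (n+1)`. -/
def orbEmb (n : ℕ) (φ : G →* Equiv.Perm (Fin (n + 1))) :
    G ⧸ stabSubgroup n φ ↪ Fin (n + 1) where
  toFun := Quotient.lift (fun g => φ g 0) (by
    intro a b hab
    have h : φ (a⁻¹ * b) 0 = 0 := QuotientGroup.leftRel_apply.mp hab
    have : φ b 0 = φ a (φ (a⁻¹ * b) 0) := by
      rw [← Equiv.Perm.mul_apply, ← map_mul]
      group
    show (φ a) 0 = (φ b) 0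
    rw [this, h])
  inj' := by
    intro x y
    induction x using QuotientGroup.induction_on with | H a =>
    induction y using QuotientGroup.induction_on with | H b =>
    intro h
    have h' : φ a 0 = φ b 0 := h
    apply Quotient.sound
    refine QuotientGroup.leftRel_apply.mpr ?_
    show φ (a⁻¹ * b) 0 = 0
    rw [map_mul, map_inv]
    simp [Equiv.Perm.mul_apply, ← h', Equiv.Perm.inv_eq_iff_eq]

@[simp] lemma orbEmb_mk (n : ℕ) (φ : G →* Equiv.Perm (Fin (n + 1))) (a : G) :
    orbEmb n φ (↑a) = φ a 0 := rfl

lemma orbEmb_one (n : ℕ) (φ : G →* Equiv.Perm (Fin (n + 1))) :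
    orbEmb n φ ((1 : G) : G ⧸ stabSubgroup n φ) = 0 := by simp

lemma apply_mem_range_orbEmb_iff (n : ℕ) (φ : G →* Equiv.Perm (Fin (n + 1))) (g : G)
    (x : Fin (n + 1)) :
    φ g x ∈ Set.range (orbEmb n φ) ↔ x ∈ Set.range (orbEmb n φ) := by
  constructor
  · rintro ⟨q, hq⟩
    induction q using QuotientGroup.induction_on with | H a =>
    refine ⟨↑(g⁻¹ * a), ?_⟩
    rw [orbEmb_mk] at hq ⊢
    rw [map_mul, map_inv]
    simp [Equiv.Perm.mul_apply, hq, Equiv.Perm.inv_eq_iff_eq]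
  · rintro ⟨q, hq⟩
    induction q using QuotientGroup.induction_on with | H a =>
    refine ⟨↑(g * a), ?_⟩
    rw [orbEmb_mk] at hq ⊢
    rw [map_mul]
    simp [Equiv.Perm.mul_apply, hq]


/-- Equivalence between `Fin (n + 1 - H.index)` and the complement of the range of an
embedding `G ⧸ H ↪ Fin (n+1)`. -/
noncomputable def cEqv (n : ℕ) (H : Subgroup G) (ι : G ⧸ H ↪ Fin (n + 1)) :
    Fin (n + 1 - H.index) ≃ {x : Fin (n + 1) // ¬ x ∈ Set.range ι} :=
  Fintype.equivOfCardEq (by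
    rw [Fintype.card_fin, Fintype.card_subtype_compl, Fintype.card_fin]
    congr 1
    rw [Set.card_range_of_injective ι.injective, Subgroup.index_eq_card,
      Nat.card_eq_fintype_card])

/-- Build a homomorphism `G →* Perm (Fin (n+1))` from a subgroup, an embedding of its
coset space, and an action on the complement. -/
noncomputable def bmap (n : ℕ) (H : Subgroup G) (ι : G ⧸ H ↪ Fin (n + 1))
    (ψ : G →* Equiv.Perm (Fin (n + 1 - H.index))) : G →* Equiv.Perm (Fin (n + 1)) :=
  (Equiv.Perm.subtypeCongrHom (fun x => x ∈ Set.range ι)).comp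
    (((permHomCongr (Equiv.ofInjective ι ι.injective)).comp
        (MulAction.toPermHom G (G ⧸ H))).prod
      ((permHomCongr (cEqv n H ι)).comp ψ))

lemma bmap_apply_mem (n : ℕ) (H : Subgroup G) (ι : G ⧸ H ↪ Fin (n + 1))
    (ψ : G →* Equiv.Perm (Fin (n + 1 - H.index))) (g : G) (q : G ⧸ H) :
    bmap n H ι ψ g (ι q) = ι (g • q) := by
  have hmem : ι q ∈ Set.range ι := ⟨q, rfl⟩
  show Equiv.Perm.subtypeCongr _ _ (ι q) = _
  rw [Equiv.Perm.subtypeCongr.left_apply _ _ hmem]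
  have hsymm : (Equiv.ofInjective ι ι.injective).symm ⟨ι q, hmem⟩ = q := by
    rw [Equiv.symm_apply_eq, Equiv.ofInjective_apply]
  show ((Equiv.ofInjective ι ι.injective)
      ((MulAction.toPermHom G (G ⧸ H) g) ((Equiv.ofInjective ι ι.injective).symm ⟨ι q, hmem⟩))
        : Fin (n+1)) = ι (g • q)
  rw [hsymm]
  simp [Equiv.ofInjective_apply, MulAction.toPermHom]

lemma bmap_apply_notmem (n : ℕ) (H : Subgroup G) (ι : G ⧸ H ↪ Fin (n + 1))
    (ψ : G →* Equiv.Perm (Fin (n + 1 - H.index))) (g : G) (x : Fin (n + 1))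
    (hx : ¬ x ∈ Set.range ι) :
    bmap n H ι ψ g x = ↑(cEqv n H ι (ψ g ((cEqv n H ι).symm ⟨x, hx⟩))) := by
  show Equiv.Perm.subtypeCongr _ _ x = _
  rw [Equiv.Perm.subtypeCongr.right_apply _ _ hx]
  rfl

/-- Restriction of the action to the complement of the orbit of `0`. -/
def restrictHom (n : ℕ) (φ : G →* Equiv.Perm (Fin (n + 1))) :
    G →* Equiv.Perm {x : Fin (n + 1) // ¬ x ∈ Set.range (orbEmb n φ)} where
  toFun g := (φ g).subtypePerm
    (fun x => not_congr (apply_mem_range_orbEmb_iff n φ g x))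
  map_one' := by ext x; simp [Equiv.Perm.subtypePerm_apply]
  map_mul' a b := by
    ext x
    simp [Equiv.Perm.subtypePerm_apply, Equiv.Perm.mul_apply]
    rfl

noncomputable def psiOf (n : ℕ) (φ : G →* Equiv.Perm (Fin (n + 1))) :
    G →* Equiv.Perm (Fin (n + 1 - (stabSubgroup n φ).index)) :=
  (permHomCongr (cEqv n _ (orbEmb n φ)).symm).comp (restrictHom n φ)

lemma bmap_psiOf (n : ℕ) (φ : G →* Equiv.Perm (Fin (n + 1))) :
    bmap n (stabSubgroup n φ) (orbEmb n φ) (psiOf n φ) = φ := by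
  apply MonoidHom.ext; intro g
  apply Equiv.ext; intro x
  by_cases hx : x ∈ Set.range (orbEmb n φ)
  · obtain ⟨q, rfl⟩ := hx
    induction q using QuotientGroup.induction_on with | H a =>
    rw [bmap_apply_mem]
    have : g • ((a : G ⧸ stabSubgroup n φ)) = ↑(g * a) := by
      rw [MulAction.Quotient.smul_mk, smul_eq_mul]
    rw [this, orbEmb_mk, orbEmb_mk, map_mul]
    rfl
  · rw [bmap_apply_notmem n _ _ _ g x hx]
    show (((cEqv n _ (orbEmb n φ)) (psiOf n φ g ((cEqv n _ (orbEmb n φ)).symm ⟨x, hx⟩)))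
      : Fin (n+1)) = φ g x
    have : psiOf n φ g ((cEqv n _ (orbEmb n φ)).symm ⟨x, hx⟩)
        = (cEqv n _ (orbEmb n φ)).symm (restrictHom n φ g ⟨x, hx⟩) := by
      show (cEqv n _ (orbEmb n φ)).symm (restrictHom n φ g
        ((cEqv n _ (orbEmb n φ)).symm.symm ((cEqv n _ (orbEmb n φ)).symm ⟨x, hx⟩))) = _
      rw [Equiv.symm_symm, Equiv.apply_symm_apply]
    rw [this, Equiv.apply_symm_apply]
    rfl

lemma stab_bmap (n : ℕ) (H : Subgroup G) (ι : G ⧸ H ↪ Fin (n + 1))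
    (ψ : G →* Equiv.Perm (Fin (n + 1 - H.index))) (hι : ι ((1 : G) : G ⧸ H) = 0) :
    stabSubgroup n (bmap n H ι ψ) = H := by
  ext g
  rw [mem_stabSubgroup_iff]
  conv_lhs => rw [← hι, bmap_apply_mem]
  rw [ι.injective.eq_iff]
  have : g • ((1 : G) : G ⧸ H) = ((g : G) : G ⧸ H) := by
    rw [MulAction.Quotient.smul_mk, smul_eq_mul, mul_one]
  rw [this, QuotientGroup.eq]
  simp [inv_mem_iff]

end Comb
/-- `exp(g)` of a power series `g` with zero constant term over a `ℚ`-algebra,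
defined coefficientwise. -/
noncomputable def expPS (A : Type*) [CommRing A] [Algebra ℚ A] (g : PowerSeries A) :
    PowerSeries A :=
  PowerSeries.mk fun n =>
    ∑ k ∈ Finset.range (n + 1), ((k.factorial : ℚ)⁻¹) • (PowerSeries.coeff n (g ^ k))
/-- Embeddings sending a fixed point to a fixed point, vs embeddings of complements. -/
noncomputable def pointedEmbEquiv {α β : Type*} (a₀ : α) (b₀ : β) :
    {f : α ↪ β // f a₀ = b₀} ≃ ({x : α // x ≠ a₀} ↪ {y : β // y ≠ b₀}) where
  toFun f := ⟨fun x => ⟨f.1 x, fun h => x.2 (f.1.injective (h.trans f.2.symm))⟩,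
    fun x y h => Subtype.ext (f.1.injective (congrArg Subtype.val h))⟩
  invFun g := ⟨⟨fun x => if h : x = a₀ then b₀ else (g ⟨x, h⟩ : β), by
      intro x y h
      dsimp only at h
      by_cases hx : x = a₀ <;> by_cases hy : y = a₀
      · rw [hx, hy]
      · rw [dif_pos hx, dif_neg hy] at h
        exact absurd h.symm (g ⟨y, hy⟩).2
      · rw [dif_neg hx, dif_pos hy] at h
        exact absurd h (g ⟨x, hx⟩).2
      · rw [dif_neg hx, dif_neg hy] at h
        have := g.injective (Subtype.ext h)
        exact Subtype.mk_eq_mk.mp this⟩, by simp⟩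
  left_inv f := by
    apply Subtype.ext
    apply DFunLike.ext
    intro x
    by_cases hx : x = a₀
    · simp [hx, f.2]
    · simp [hx]
      rfl
  right_inv g := by
    apply DFunLike.ext
    intro x
    apply Subtype.ext
    simp [x.2]

section Comb2
variable {G : Type*} [Group G] [Fintype G]

lemma card_pointed_emb (n : ℕ) (H : Subgroup G) :
    Nat.card {ι : G ⧸ H ↪ Fin (n + 1) // ι ((1 : G) : G ⧸ H) = 0}
      = n.descFactorial (H.index - 1) := by
  rw [Nat.card_congr (pointedEmbEquiv ((1 : G) : G ⧸ H) (0 : Fin (n + 1)))]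
  rw [Nat.card_eq_fintype_card, Fintype.card_embedding_eq]
  have h1 : Fintype.card {y : Fin (n + 1) // y ≠ 0} = n := by
    have := Set.card_ne_eq (0 : Fin (n + 1))
    simp only [Fintype.card_fin, Nat.add_sub_cancel] at this
    convert this using 2
    rfl
  have h2 : Fintype.card {x : G ⧸ H // x ≠ ((1 : G) : G ⧸ H)} = H.index - 1 := by
    have := Set.card_ne_eq (((1 : G) : G ⧸ H))
    rw [← Nat.card_eq_fintype_card (α := G ⧸ H), ← Subgroup.index_eq_card] at this
    convert this using 2
    rfl
  rw [h1, h2]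

theorem card_hom_succ (n : ℕ) :
    Nat.card (G →* Equiv.Perm (Fin (n + 1)))
      = ∑ H : Subgroup G,
          n.descFactorial (H.index - 1)
            * Nat.card (G →* Equiv.Perm (Fin (n + 1 - H.index))) := by
  classical
  have hbij : Function.Bijective
      (fun t : (Σ H : Subgroup G,
          {ι : G ⧸ H ↪ Fin (n + 1) // ι ((1 : G) : G ⧸ H) = 0}
            × (G →* Equiv.Perm (Fin (n + 1 - H.index)))) =>
        bmap n t.1 t.2.1.1 t.2.2) := by
    constructor
    · rintro ⟨H, ⟨ι, hι⟩, ψ⟩ ⟨H', ⟨ι', hι'⟩, ψ'⟩ h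
      dsimp only at h
      have hH : H = H' := by
        rw [← stab_bmap n H ι ψ hι, h, stab_bmap n H' ι' ψ' hι']
      subst hH
      have hiι : ι = ι' := by
        apply DFunLike.ext
        intro q
        induction q using QuotientGroup.induction_on with | H a =>
        have smul1 : a • ((1:G) : G ⧸ H) = ((a : G) : G ⧸ H) := by
          rw [MulAction.Quotient.smul_mk, smul_eq_mul, mul_one]
        have e1 : ι ↑a = bmap n H ι ψ a 0 := by
          rw [← hι, bmap_apply_mem, smul1]
        have e2 : ι' ↑a = bmap n H ι' ψ' a 0 := by
          rw [← hι', bmap_apply_mem, smul1]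
        rw [e1, e2, h]
      subst hiι
      have hψ : ψ = ψ' := by
        apply MonoidHom.ext
        intro g
        apply Equiv.ext
        intro y
        set e := cEqv n H ι with he
        have hy : ¬ ((e y : Fin (n+1)) ∈ Set.range ι) := (e y).2
        have hsub : (⟨(e y : Fin (n+1)), hy⟩ : {x : Fin (n+1) // ¬ x ∈ Set.range ι}) = e y :=
          Subtype.ext rfl
        have e1 := bmap_apply_notmem n H ι ψ g (e y) hy
        have e2 := bmap_apply_notmem n H ι ψ' g (e y) hy
        rw [h] at e1
        rw [e1] at e2
        rw [hsub, Equiv.symm_apply_apply] at e2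
        exact e.injective (Subtype.ext e2)
      subst hψ
      rfl
    · intro φ
      exact ⟨⟨stabSubgroup n φ, ⟨⟨orbEmb n φ, orbEmb_one n φ⟩, psiOf n φ⟩⟩, bmap_psiOf n φ⟩
  letI : ∀ H : Subgroup G, Fintype (G →* Equiv.Perm (Fin (n + 1 - H.index))) :=
    fun H => Fintype.ofFinite _
  rw [(Nat.card_congr (Equiv.ofBijective _ hbij)).symm, Nat.card_eq_fintype_card,
    Fintype.card_sigma]
  refine Finset.sum_congr rfl (fun H _ => ?_)
  rw [Fintype.card_prod]
  congr 1
  · rw [← Nat.card_eq_fintype_card, card_pointed_emb]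
  · rw [← Nat.card_eq_fintype_card]

end Comb2
section PS

variable (g : PowerSeries ℚ)

lemma coeff_pow_eq_zero_of_lt (hg : PowerSeries.constantCoeff g = 0)
    {N k : ℕ} (h : N < k) : coeff N (g ^ k) = 0 := by
  obtain ⟨h', rfl⟩ := PowerSeries.X_dvd_iff.mpr hg
  rw [mul_pow, coeff_X_pow_mul', if_neg (by omega)]

lemma coeff_expPS' (n : ℕ) :
    coeff n (expPS ℚ g) =
      ∑ k ∈ Finset.range (n + 1), ((k.factorial : ℚ)⁻¹) * (coeff n (g ^ k)) := by
  rw [expPS, coeff_mk]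
  simp [smul_eq_mul]

lemma coeff_expPS'_ext (hg : PowerSeries.constantCoeff g = 0) {n N : ℕ} (hn : n ≤ N) :
    coeff n (expPS ℚ g) =
      ∑ k ∈ Finset.range (N + 1), ((k.factorial : ℚ)⁻¹) * (coeff n (g ^ k)) := by
  rw [coeff_expPS']
  apply Finset.sum_subset
  · intro k hk
    simp only [Finset.mem_range] at *
    omega
  · intro k _ hk
    simp only [Finset.mem_range, not_lt] at hk
    rw [coeff_pow_eq_zero_of_lt g hg (by omega), mul_zero]

lemma coeff_expPS'_zero : coeff 0 (expPS ℚ g) = 1 := by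
  rw [coeff_expPS']
  simp

lemma coeff_deriv_mul_pow (k n : ℕ) :
    coeff n ((d⁄dX ℚ g) * g ^ k) * (k + 1) = coeff (n + 1) (g ^ (k + 1)) * (n + 1) := by
  have h := Derivation.leibniz_pow (d⁄dX ℚ) g (k + 1)
  have h2 : coeff (n + 1) (g ^ (k + 1)) * ((n : ℚ) + 1)
      = ((k : ℚ) + 1) * coeff n (g ^ k * d⁄dX ℚ g) := by
    have hc := congrArg (fun f => coeff n f) h
    simp only [Nat.add_sub_cancel, smul_eq_mul, nsmul_eq_mul] at hc
    rw [PowerSeries.coeff_derivative] at hc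
    rw [hc, ← map_natCast (PowerSeries.C (R := ℚ)) (k + 1), PowerSeries.coeff_C_mul]
    push_cast
    ring
  rw [mul_comm ((d⁄dX ℚ) g) (g ^ k), mul_comm]
  rw [h2]

lemma expPS'_coeff_succ (hg : PowerSeries.constantCoeff g = 0) (n : ℕ) :
    coeff (n + 1) (expPS ℚ g) * (n + 1) =
      coeff n ((d⁄dX ℚ g) * expPS ℚ g) := by
  rw [PowerSeries.coeff_mul]
  have hstep : ∀ p ∈ Finset.HasAntidiagonal.antidiagonal n,
      coeff p.1 (d⁄dX ℚ g) * coeff p.2 (expPS ℚ g)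
        = ∑ k ∈ Finset.range (n + 1),
            ((k.factorial : ℚ)⁻¹) * (coeff p.1 (d⁄dX ℚ g) * coeff p.2 (g ^ k)) := by
    intro p hp
    rw [Finset.HasAntidiagonal.mem_antidiagonal] at hp
    rw [coeff_expPS'_ext g hg (show p.2 ≤ n by omega), Finset.mul_sum]
    apply Finset.sum_congr rfl
    intro k _
    ring
  rw [Finset.sum_congr rfl hstep, Finset.sum_comm]
  have hinner : ∀ k ∈ Finset.range (n + 1),
      (∑ p ∈ Finset.HasAntidiagonal.antidiagonal n,
        ((k.factorial : ℚ)⁻¹) * (coeff p.1 (d⁄dX ℚ g) * coeff p.2 (g ^ k)))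
      = ((k.factorial : ℚ)⁻¹) * coeff n ((d⁄dX ℚ g) * g ^ k) := by
    intro k _
    rw [PowerSeries.coeff_mul, Finset.mul_sum]
  rw [Finset.sum_congr rfl hinner]
  have hterm : ∀ k ∈ Finset.range (n + 1),
      ((k.factorial : ℚ)⁻¹) * coeff n ((d⁄dX ℚ g) * g ^ k)
        = (((k+1).factorial : ℚ)⁻¹) * coeff (n + 1) (g ^ (k + 1)) * (n + 1) := by
    intro k _
    have h := coeff_deriv_mul_pow g k n
    have hk1 : ((k : ℚ) + 1) ≠ 0 := by positivity
    have hdiv : coeff n ((d⁄dX ℚ g) * g ^ k)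
        = coeff (n + 1) (g ^ (k + 1)) * (n + 1) / (k + 1) :=
      (eq_div_iff hk1).mpr h
    rw [hdiv, Nat.factorial_succ]
    push_cast
    rw [div_eq_mul_inv, mul_inv]
    ring
  rw [Finset.sum_congr rfl hterm]
  rw [coeff_expPS' g (n + 1), Finset.sum_mul, Finset.sum_range_succ']
  have h0 : ((Nat.factorial 0 : ℚ)⁻¹) * (coeff (n+1) (g ^ 0)) * ((n : ℚ) + 1) = 0 := by
    rw [pow_zero]
    simp [PowerSeries.coeff_one]
  rw [h0, add_zero]

end PS
section Main

variable (G : Type*) [Group G] [Fintype G]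

/-- The "connected" generating series. -/
noncomputable def gser : PowerSeries ℚ :=
  ∑ H : Subgroup G, ((H.index : ℚ)⁻¹) • (PowerSeries.X : PowerSeries ℚ) ^ H.index

lemma index_ne_zero (H : Subgroup G) : H.index ≠ 0 :=
  Subgroup.index_ne_zero_of_finite

lemma gser_constantCoeff : PowerSeries.constantCoeff (gser G) = 0 := by
  rw [gser, ← PowerSeries.coeff_zero_eq_constantCoeff, map_sum]
  apply Finset.sum_eq_zero
  intro H _
  rw [map_smul, smul_eq_mul, PowerSeries.coeff_X_pow,
    if_neg (Ne.symm (index_ne_zero G H)), mul_zero]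

lemma coeff_gser (j : ℕ) :
    coeff j (gser G) = ∑ H : Subgroup G, if j = H.index then (H.index : ℚ)⁻¹ else 0 := by
  rw [gser, map_sum]
  apply Finset.sum_congr rfl
  intro H _
  rw [map_smul, smul_eq_mul, PowerSeries.coeff_X_pow]
  split_ifs <;> simp

lemma coeff_deriv_gser (j : ℕ) :
    coeff j (d⁄dX ℚ (gser G)) = ∑ H : Subgroup G, if H.index = j + 1 then 1 else 0 := by
  rw [PowerSeries.coeff_derivative, coeff_gser, Finset.sum_mul]
  apply Finset.sum_congr rfl
  intro H _
  split_ifs with h h2 h3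
  · rw [h2]
    have h3 : ((j : ℚ) + 1) ≠ 0 := by positivity
    push_cast
    field_simp
  · exact absurd h.symm h2
  · exact absurd h3.symm h
  · rw [zero_mul]

/-- The recursion for the coefficients of `expPS (gser G)`. -/
lemma exp_rec (m : ℕ) :
    coeff (m + 1) (expPS ℚ (gser G)) * (m + 1)
      = ∑ H : Subgroup G,
          if H.index ≤ m + 1 then coeff (m + 1 - H.index) (expPS ℚ (gser G)) else 0 := by
  rw [expPS'_coeff_succ (gser G) (gser_constantCoeff G) m]
  rw [PowerSeries.coeff_mul, Finset.Nat.sum_antidiagonal_eq_sum_range_succ_mk]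
  have hstep : ∀ i ∈ Finset.range (m + 1),
      coeff i (d⁄dX ℚ (gser G)) * coeff (m - i) (expPS ℚ (gser G))
        = ∑ H : Subgroup G,
            if i = H.index - 1 then coeff (m - i) (expPS ℚ (gser G)) else 0 := by
    intro i _
    rw [coeff_deriv_gser, Finset.sum_mul]
    apply Finset.sum_congr rfl
    intro H _
    have hind := index_ne_zero G H
    split_ifs with h h2 h3
    · rw [one_mul]
    · exact absurd (by omega) h2
    · exact absurd (by omega) h
    · rw [zero_mul]
  rw [Finset.sum_congr rfl hstep, Finset.sum_comm]
  apply Finset.sum_congr rfl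
  intro H _
  have hind := index_ne_zero G H
  rw [Finset.sum_ite_eq' (Finset.range (m + 1)) (H.index - 1)
    (fun i => coeff (m - i) (expPS ℚ (gser G)))]
  have : H.index - 1 ∈ Finset.range (m + 1) ↔ H.index ≤ m + 1 := by
    rw [Finset.mem_range]; omega
  split_ifs with h1 h2 h3
  · have hsub : m - (H.index - 1) = m + 1 - H.index := by omega
    rw [hsub]
  · exact absurd (this.mp h1) h2
  · exact absurd (this.mpr h3) h1
  · rfl

/-- The exponential-generating coefficient for homomorphism counts. -/
noncomputable def aQ (m : ℕ) : ℚ :=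
  (Nat.card (G →* Equiv.Perm (Fin m)) : ℚ) / (m.factorial : ℚ)

lemma aQ_zero : aQ G 0 = 1 := by
  haveI : Subsingleton (Equiv.Perm (Fin 0)) :=
    ⟨fun σ τ => Equiv.ext fun x => x.elim0⟩
  haveI : Subsingleton (G →* Equiv.Perm (Fin 0)) :=
    ⟨fun f g => MonoidHom.ext fun x => Subsingleton.elim _ _⟩
  haveI : Nonempty (G →* Equiv.Perm (Fin 0)) := ⟨1⟩
  rw [aQ, Nat.card_unique]
  simp

lemma hom_rec (m : ℕ) :
    aQ G (m + 1) * (m + 1)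
      = ∑ H : Subgroup G, if H.index ≤ m + 1 then aQ G (m + 1 - H.index) else 0 := by
  have hcast : (Nat.card (G →* Equiv.Perm (Fin (m + 1))) : ℚ)
      = ∑ H : Subgroup G,
          (m.descFactorial (H.index - 1) : ℚ)
            * (Nat.card (G →* Equiv.Perm (Fin (m + 1 - H.index))) : ℚ) := by
    rw [card_hom_succ m]
    push_cast
    rfl
  have hfac : ((m + 1).factorial : ℚ) = (m + 1) * (m.factorial : ℚ) := by
    rw [Nat.factorial_succ]; push_cast; ring
  have hm1 : ((m : ℚ) + 1) ≠ 0 := by positivity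
  have hmf : ((m.factorial : ℚ)) ≠ 0 := by
    exact_mod_cast Nat.factorial_ne_zero m
  rw [aQ, hfac]
  rw [show (Nat.card (G →* Equiv.Perm (Fin (m + 1))) : ℚ) / ((↑m + 1) * ↑m.factorial) * (↑m + 1)
      = (Nat.card (G →* Equiv.Perm (Fin (m + 1))) : ℚ) / (m.factorial : ℚ) by
    field_simp]
  rw [hcast, Finset.sum_div]
  apply Finset.sum_congr rfl
  intro H _
  have hind := index_ne_zero G H
  by_cases h : H.index ≤ m + 1
  · rw [if_pos h]
    have hd : H.index - 1 ≤ m := by omega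
    have := Nat.factorial_mul_descFactorial hd
    have heq : (m.descFactorial (H.index - 1) : ℚ)
        = (m.factorial : ℚ) / ((m - (H.index - 1)).factorial : ℚ) := by
      rw [eq_div_iff (by exact_mod_cast Nat.factorial_ne_zero _), mul_comm]
      exact_mod_cast this
    rw [heq]
    have hsub : m - (H.index - 1) = m + 1 - H.index := by omega
    rw [hsub, aQ]
    have hf2 : (((m + 1 - H.index).factorial : ℚ)) ≠ 0 := by
      exact_mod_cast Nat.factorial_ne_zero _
    field_simp
  · rw [if_neg h]
    have : m.descFactorial (H.index - 1) = 0 :=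
      Nat.descFactorial_eq_zero_iff_lt.mpr (by omega)
    rw [this]
    simp

lemma aQ_eq_coeff : ∀ m : ℕ, aQ G m = coeff m (expPS ℚ (gser G)) := by
  intro m
  induction m using Nat.strong_induction_on with
  | _ m ih =>
    match m with
    | 0 => rw [aQ_zero, coeff_expPS'_zero]
    | Nat.succ m =>
      have h1 := hom_rec G m
      have h2 := exp_rec G m
      have heq : aQ G (m + 1) * (m + 1) = coeff (m + 1) (expPS ℚ (gser G)) * (m + 1) := by
        rw [h1, h2]
        apply Finset.sum_congr rfl
        intro H _
        have hind := index_ne_zero G H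
        by_cases h : H.index ≤ m + 1
        · rw [if_pos h, if_pos h]
          exact ih (m + 1 - H.index) (by omega)
        · rw [if_neg h, if_neg h]
      have hm1 : ((m : ℚ) + 1) ≠ 0 := by positivity
      exact mul_right_cancel₀ hm1 heq

end Main

/-- Wohlfahrt's identity: for a finite group `G`,
`Σ_{m≥0} (|Hom(G,Σ_m)|/m!) X^m = exp(Σ_{H ≤ G} X^{[G:H]}/[G:H])` in `ℚ[[X]]`,
the sum running over all subgroups `H` of `G`. -/
theorem stmt9 (G : Type*) [Group G] [Fintype G] :
    (PowerSeries.mk fun m =>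
        (Nat.card (G →* Equiv.Perm (Fin m)) : ℚ) / (m.factorial : ℚ)) =
      expPS ℚ (∑ᶠ H : Subgroup G, ((H.index : ℚ)⁻¹) • (PowerSeries.X : PowerSeries ℚ) ^ H.index) := by
  have hfin : (∑ᶠ H : Subgroup G, ((H.index : ℚ)⁻¹) • (PowerSeries.X : PowerSeries ℚ) ^ H.index)
      = gser G := by
    rw [gser, finsum_eq_sum_of_fintype]
  rw [hfin]
  apply PowerSeries.ext
  intro m
  rw [coeff_mk]
  exact aQ_eq_coeff G m
end

section
/- For a p-torsion free commutative ring A with A/p a perfect 𝔽_p-algebra and A p-adically complete, the ring of p-typical Witt vectors W_p(A/p) is isomorphic to A via the inverse limit of the maps gh̃_{p^d}: W_p(A/p) → A/p^{d+1}. In particular W_p(𝔽_p) ≅ ℤ_p. -/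
namespace Stmt14Aux

open Finset
open scoped Classical
set_option linter.unusedSectionVars false

variable (p : ℕ) [hp : Fact p.Prime] (A : Type*) [CommRing A]

/-- a set-theoretic section of the quotient map, sending `0` to `0`. -/
noncomputable def sLift (c : A ⧸ Ideal.span {(p : A)}) : A :=
  if c = 0 then 0 else Function.surjInv Ideal.Quotient.mk_surjective c

lemma sLift_spec (c : A ⧸ Ideal.span {(p : A)}) :
    Ideal.Quotient.mk (Ideal.span {(p : A)}) (sLift p A c) = c := by
  unfold sLift
  split_ifs with h
  · simp [h]
  · exact Function.surjInv_eq _ _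

lemma sLift_zero : sLift p A 0 = 0 := if_pos rfl

/-- coefficientwise set-theoretic lift of Witt vectors. -/
noncomputable def wLift (x : WittVector p (A ⧸ Ideal.span {(p : A)})) : WittVector p A :=
  WittVector.mk p fun n => sLift p A (x.coeff n)

lemma wLift_coeff (x : WittVector p (A ⧸ Ideal.span {(p : A)})) (n : ℕ) :
    (wLift p A x).coeff n = sLift p A (x.coeff n) := by
  simp [wLift, WittVector.coeff_mk]

lemma map_wLift (x : WittVector p (A ⧸ Ideal.span {(p : A)})) :
    WittVector.map (Ideal.Quotient.mk (Ideal.span {(p : A)})) (wLift p A x) = x := by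
  apply WittVector.ext
  intro n
  rw [WittVector.map_coeff, wLift_coeff, sLift_spec]

lemma ghost_eq (n : ℕ) (u : WittVector p A) :
    WittVector.ghostComponent n u
      = ∑ i ∈ range (n + 1), (p : A) ^ i * u.coeff i ^ p ^ (n - i) := by
  rw [WittVector.ghostComponent_apply, aeval_wittPolynomial]

lemma ghost_congr {u v : WittVector p A}
    (h : WittVector.map (Ideal.Quotient.mk (Ideal.span {(p : A)})) u
        = WittVector.map (Ideal.Quotient.mk (Ideal.span {(p : A)})) v) (n : ℕ) :
    (p : A) ^ (n + 1) ∣ WittVector.ghostComponent n u - WittVector.ghostComponent n v := by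
  rw [ghost_eq, ghost_eq, ← Finset.sum_sub_distrib]
  apply Finset.dvd_sum
  intro i hi
  rw [Finset.mem_range, Nat.lt_succ_iff] at hi
  have hiv : (p : A) ∣ u.coeff i - v.coeff i := by
    have h1 : Ideal.Quotient.mk (Ideal.span {(p : A)}) (u.coeff i)
        = Ideal.Quotient.mk (Ideal.span {(p : A)}) (v.coeff i) := by
      rw [← WittVector.map_coeff, ← WittVector.map_coeff, h]
    have := Ideal.Quotient.eq.mp h1
    rwa [Ideal.mem_span_singleton] at this
  have key := dvd_sub_pow_of_dvd_sub hiv (n - i)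
  have hsplit : (p : A) ^ (n + 1) = (p : A) ^ i * (p : A) ^ (n - i + 1) := by
    rw [← pow_add]; congr 1; omega
  rw [← mul_sub, hsplit]
  exact mul_dvd_mul_left _ key


lemma mem_smul_top_iff (m : ℕ) (a : A) :
    a ∈ (Ideal.span {(p : A)} ^ m • ⊤ : Submodule A A) ↔ (p : A) ^ m ∣ a := by
  rw [smul_eq_mul, Ideal.mul_top, Ideal.span_singleton_pow, Ideal.mem_span_singleton]


lemma haus_dvd [IsHausdorff (Ideal.span {(p : A)}) A] (a : A)
    (h : ∀ d : ℕ, (p : A) ^ (d + 1) ∣ a) : a = 0 := by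
  apply IsHausdorff.haus (inferInstance : IsHausdorff (Ideal.span {(p : A)}) A)
  intro n
  rw [SModEq.sub_mem, sub_zero, mem_smul_top_iff]
  exact (pow_dvd_pow _ (Nat.le_succ n)).trans (h n)


lemma cancel_p (htf : ∀ a : A, (p : A) * a = 0 → a = 0) {a b : A} (m : ℕ)
    (h : (p : A) ^ m * a = (p : A) ^ m * b) : a = b := by
  induction m with
  | zero => simpa using h
  | succ m ih =>
    apply ih
    have h0 : (p : A) * ((p : A) ^ m * a - (p : A) ^ m * b) = 0 := by
      rw [mul_sub, ← mul_assoc, ← mul_assoc, ← pow_succ', h, sub_self]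
    exact sub_eq_zero.mp (htf _ h0)


section Frob

variable [CharP (A ⧸ Ideal.span {(p : A)}) p] [PerfectRing (A ⧸ Ideal.span {(p : A)}) p]

noncomputable def G : WittVector p (A ⧸ Ideal.span {(p : A)})
    → WittVector p (A ⧸ Ideal.span {(p : A)}) :=
  ⇑(WittVector.frobeniusEquiv p (A ⧸ Ideal.span {(p : A)})).symm

lemma frob_G (z : WittVector p (A ⧸ Ideal.span {(p : A)})) :
    WittVector.frobenius (G p A z) = z := by
  have := (WittVector.frobeniusEquiv p (A ⧸ Ideal.span {(p : A)})).apply_symm_apply z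
  rwa [WittVector.frobeniusEquiv_apply] at this

lemma G_add (x y : WittVector p (A ⧸ Ideal.span {(p : A)})) :
    G p A (x + y) = G p A x + G p A y :=
  map_add (WittVector.frobeniusEquiv p (A ⧸ Ideal.span {(p : A)})).symm x y

lemma G_mul (x y : WittVector p (A ⧸ Ideal.span {(p : A)})) :
    G p A (x * y) = G p A x * G p A y :=
  map_mul (WittVector.frobeniusEquiv p (A ⧸ Ideal.span {(p : A)})).symm x y

lemma G_one : G p A 1 = 1 :=
  map_one (WittVector.frobeniusEquiv p (A ⧸ Ideal.span {(p : A)})).symm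

lemma pow_p_iter_inj (n : ℕ) {a b : A ⧸ Ideal.span {(p : A)}}
    (h : a ^ p ^ n = b ^ p ^ n) : a = b := by
  induction n with
  | zero => simpa using h
  | succ n ih =>
    apply ih
    have hinj := injective_frobenius (A ⧸ Ideal.span {(p : A)}) p
    apply hinj
    rw [frobenius_def, frobenius_def, ← pow_mul, ← pow_mul, ← pow_succ]
    exact h

lemma coeff_G_iter_pow (n i : ℕ) (x : WittVector p (A ⧸ Ideal.span {(p : A)})) :
    ((G p A)^[n] x).coeff i ^ p ^ n = x.coeff i := by
  induction n with
  | zero => simp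
  | succ n ih =>
    rw [Function.iterate_succ_apply', pow_succ', pow_mul]
    have : ((G p A) ((G p A)^[n] x)).coeff i ^ p = ((G p A)^[n] x).coeff i := by
      rw [← WittVector.coeff_frobenius_charP, frob_G]
    rw [this, ih]

lemma coeff_G_iter_congr (n i : ℕ) {x y : WittVector p (A ⧸ Ideal.span {(p : A)})}
    (h : x.coeff i = y.coeff i) :
    ((G p A)^[n] x).coeff i = ((G p A)^[n] y).coeff i := by
  apply pow_p_iter_inj p A n
  rw [coeff_G_iter_pow, coeff_G_iter_pow, h]

noncomputable def phi (d : ℕ) (x : WittVector p (A ⧸ Ideal.span {(p : A)})) : A :=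
  WittVector.ghostComponent d (wLift p A ((G p A)^[d] x))

lemma phi_eq (d : ℕ) (x : WittVector p (A ⧸ Ideal.span {(p : A)})) :
    phi p A d x = ∑ i ∈ range (d + 1),
      (p : A) ^ i * (sLift p A (((G p A)^[d] x).coeff i)) ^ p ^ (d - i) := by
  rw [phi, ghost_eq]
  exact Finset.sum_congr rfl fun i _ => by rw [wLift_coeff]

lemma phi_congr (d : ℕ) {x y : WittVector p (A ⧸ Ideal.span {(p : A)})}
    (h : ∀ i ≤ d, x.coeff i = y.coeff i) : phi p A d x = phi p A d y := by
  rw [phi_eq, phi_eq]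
  apply Finset.sum_congr rfl
  intro i hi
  rw [Finset.mem_range, Nat.lt_succ_iff] at hi
  rw [coeff_G_iter_congr p A d i (h i hi)]

lemma phi_zero_eq (x : WittVector p (A ⧸ Ideal.span {(p : A)})) :
    phi p A 0 x = sLift p A (x.coeff 0) := by
  rw [phi_eq]
  simp

lemma phi_compat (d : ℕ) (x : WittVector p (A ⧸ Ideal.span {(p : A)})) :
    (p : A) ^ (d + 1) ∣ phi p A (d + 1) x - phi p A d x := by
  have e1 : phi p A (d + 1) x
      = WittVector.ghostComponent d (WittVector.frobenius (wLift p A ((G p A)^[d+1] x))) := by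
    rw [phi, WittVector.ghostComponent_frobenius]
  rw [e1, phi]
  apply ghost_congr
  rw [WittVector.IsPoly.map (WittVector.frobenius_isPoly p) _ _, map_wLift, map_wLift,
    Function.iterate_succ_apply', frob_G]

lemma phi_add (d : ℕ) (x y : WittVector p (A ⧸ Ideal.span {(p : A)})) :
    (p : A) ^ (d + 1) ∣ phi p A d (x + y) - (phi p A d x + phi p A d y) := by
  have hG : (G p A)^[d] (x + y) = (G p A)^[d] x + (G p A)^[d] y := by
    induction d with
    | zero => rfl
    | succ n ih => rw [Function.iterate_succ_apply', Function.iterate_succ_apply',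
        Function.iterate_succ_apply', ih, G_add]
  have h2 : phi p A d x + phi p A d y
      = WittVector.ghostComponent d (wLift p A ((G p A)^[d] x) + wLift p A ((G p A)^[d] y)) := by
    rw [map_add, phi, phi]
  rw [phi, hG, h2]
  apply ghost_congr
  rw [map_add, map_wLift, map_wLift, map_wLift]

lemma phi_mul (d : ℕ) (x y : WittVector p (A ⧸ Ideal.span {(p : A)})) :
    (p : A) ^ (d + 1) ∣ phi p A d (x * y) - (phi p A d x * phi p A d y) := by
  have hG : (G p A)^[d] (x * y) = (G p A)^[d] x * (G p A)^[d] y := by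
    induction d with
    | zero => rfl
    | succ n ih => rw [Function.iterate_succ_apply', Function.iterate_succ_apply',
        Function.iterate_succ_apply', ih, G_mul]
  have h2 : phi p A d x * phi p A d y
      = WittVector.ghostComponent d (wLift p A ((G p A)^[d] x) * wLift p A ((G p A)^[d] y)) := by
    rw [map_mul, phi, phi]
  rw [phi, hG, h2]
  apply ghost_congr
  rw [map_mul, map_wLift, map_wLift, map_wLift]

lemma phi_one (d : ℕ) :
    (p : A) ^ (d + 1) ∣ phi p A d 1 - 1 := by
  have hG : (G p A)^[d] (1 : WittVector p (A ⧸ Ideal.span {(p : A)})) = 1 := by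
    induction d with
    | zero => rfl
    | succ n ih => rw [Function.iterate_succ_apply', ih, G_one]
  have h2 : (1 : A) = WittVector.ghostComponent d
      (1 : WittVector p A) := by rw [map_one]
  rw [phi, hG, h2]
  apply ghost_congr
  rw [map_wLift, map_one]

end Frob
section Limit

variable [CharP (A ⧸ Ideal.span {(p : A)}) p] [PerfectRing (A ⧸ Ideal.span {(p : A)}) p]

lemma exists_Phi [IsPrecomplete (Ideal.span {(p : A)}) A]
    (x : WittVector p (A ⧸ Ideal.span {(p : A)})) :
    ∃ L : A, ∀ d, (p : A) ^ (d + 1) ∣ L - phi p A d x := by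
  have hchain : ∀ {m n : ℕ}, m ≤ n →
      phi p A m x ≡ phi p A n x [SMOD (Ideal.span {(p : A)} ^ m • ⊤ : Submodule A A)] := by
    intro m n hmn
    rw [SModEq.sub_mem, mem_smul_top_iff]
    induction n, hmn using Nat.le_induction with
    | base => simp
    | succ n hmn ih =>
      have h2 := phi_compat p A n x
      have hrw : phi p A m x - phi p A (n + 1) x
          = (phi p A m x - phi p A n x) - (phi p A (n + 1) x - phi p A n x) := by ring
      rw [hrw]
      exact dvd_sub ih ((pow_dvd_pow _ (by omega)).trans h2)
  obtain ⟨L, hL⟩ := IsPrecomplete.prec (inferInstance : IsPrecomplete (Ideal.span {(p : A)}) A)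
    (f := fun n => phi p A n x) hchain
  refine ⟨L, fun d => ?_⟩
  have h1 := hL (d + 1)
  rw [SModEq.sub_mem, mem_smul_top_iff] at h1
  have h2 := phi_compat p A d x
  have hrw : L - phi p A d x
      = -(phi p A (d + 1) x - L) + (phi p A (d + 1) x - phi p A d x) := by ring
  rw [hrw]
  exact dvd_add (dvd_neg.mpr h1) h2

lemma Phi_inj (htf : ∀ a : A, (p : A) * a = 0 → a = 0)
    (Phi : WittVector p (A ⧸ Ideal.span {(p : A)}) → A)
    (hPhi : ∀ x d, (p : A) ^ (d + 1) ∣ Phi x - phi p A d x)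
    {x : WittVector p (A ⧸ Ideal.span {(p : A)})} (hx : Phi x = 0) : x = 0 := by
  have hz : ∀ n, (∀ m, m < n → x.coeff m = 0) → x.coeff n = 0 := by
    intro n ihm
    set w := (G p A)^[n] x with hw
    have wlow : ∀ m, m < n → w.coeff m = 0 := by
      intro m hm
      apply pow_p_iter_inj p A n
      rw [hw, coeff_G_iter_pow, ihm m hm, zero_pow (pow_ne_zero n hp.out.ne_zero)]
    have hphin : phi p A n x = (p : A) ^ n * sLift p A (w.coeff n) := by
      rw [phi_eq, Finset.sum_range_succ]
      have h0 : ∑ i ∈ range n,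
          (p : A) ^ i * (sLift p A (((G p A)^[n] x).coeff i)) ^ p ^ (n - i) = 0 := by
        apply Finset.sum_eq_zero
        intro i hi
        rw [Finset.mem_range] at hi
        rw [← hw, wlow i hi, sLift_zero,
          zero_pow (pow_ne_zero _ hp.out.ne_zero), mul_zero]
      rw [h0, zero_add, Nat.sub_self, pow_zero, pow_one, ← hw]
    have hdvd : (p : A) ^ (n + 1) ∣ (p : A) ^ n * sLift p A (w.coeff n) := by
      have h1 := hPhi x n
      rw [hx, zero_sub, dvd_neg, hphin] at h1
      exact h1
    obtain ⟨u, hu⟩ := hdvd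
    have hs : sLift p A (w.coeff n) = (p : A) * u := by
      apply cancel_p p A htf n
      rw [hu, pow_succ, mul_assoc]
    have hwn : w.coeff n = 0 := by
      have h2 := sLift_spec p A (w.coeff n)
      rw [hs] at h2
      rw [← h2]
      exact Ideal.Quotient.eq_zero_iff_mem.mpr
        (Ideal.mem_span_singleton.mpr (dvd_mul_right _ _))
    have h3 := coeff_G_iter_pow p A n n x
    rw [← hw, hwn, zero_pow (pow_ne_zero n hp.out.ne_zero)] at h3
    exact h3.symm
  have hall : ∀ n, x.coeff n = 0 := by
    intro n
    induction n using Nat.strong_induction_on with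
    | _ n ih => exact hz n ih
  apply WittVector.ext
  intro n
  rw [hall n, WittVector.zero_coeff]

lemma Phi_surj [IsHausdorff (Ideal.span {(p : A)}) A]
    (Phi : WittVector p (A ⧸ Ideal.span {(p : A)}) → A)
    (hPhi : ∀ x d, (p : A) ^ (d + 1) ∣ Phi x - phi p A d x)
    (hmk : ∀ x, Ideal.Quotient.mk (Ideal.span {(p : A)}) (Phi x) = x.coeff 0)
    (a : A) : ∃ x, Phi x = a := by
  have key : ∀ (x : WittVector p (A ⧸ Ideal.span {(p : A)})) (n : ℕ),
      (p : A) ^ (n + 1) ∣ a - Phi x →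
      ∃ c, (p : A) ^ (n + 2) ∣
        a - Phi (WittVector.mk p (Function.update x.coeff (n + 1) c)) := by
    intro x n hdvd
    obtain ⟨t, ht⟩ := hdvd
    set w := (G p A)^[n + 1] x with hw
    set c : A ⧸ Ideal.span {(p : A)} :=
      (Ideal.Quotient.mk (Ideal.span {(p : A)}) (sLift p A (w.coeff (n + 1)) + t)) ^ p ^ (n + 1)
      with hc
    refine ⟨c, ?_⟩
    set x' := WittVector.mk p (Function.update x.coeff (n + 1) c) with hx'
    have hagree : ∀ i, i ≤ n → x'.coeff i = x.coeff i := by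
      intro i hi
      rw [hx', WittVector.coeff_mk, Function.update_of_ne (by omega : i ≠ n + 1)]
    have hx'top : x'.coeff (n + 1) = c := by
      rw [hx', WittVector.coeff_mk, Function.update_self]
    set w' := (G p A)^[n + 1] x' with hw'
    have hw'low : ∀ i, i ≤ n → w'.coeff i = w.coeff i := by
      intro i hi
      rw [hw', hw]
      exact coeff_G_iter_congr p A (n + 1) i (hagree i hi)
    have hw'top : w'.coeff (n + 1)
        = Ideal.Quotient.mk (Ideal.span {(p : A)}) (sLift p A (w.coeff (n + 1)) + t) := by
      apply pow_p_iter_inj p A (n + 1)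
      rw [hw', coeff_G_iter_pow, hx'top, hc]
    have hphidiff : phi p A (n + 1) x' - phi p A (n + 1) x
        = (p : A) ^ (n + 1) * (sLift p A (w'.coeff (n + 1)) - sLift p A (w.coeff (n + 1))) := by
      have hx1 := Finset.sum_range_succ
        (fun i => (p : A) ^ i * (sLift p A (((G p A)^[n + 1] x').coeff i)) ^ p ^ (n + 1 - i))
        (n + 1)
      have hy1 := Finset.sum_range_succ
        (fun i => (p : A) ^ i * (sLift p A (((G p A)^[n + 1] x).coeff i)) ^ p ^ (n + 1 - i))
        (n + 1)
      rw [phi_eq, phi_eq, hx1, hy1]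
      have hsum : ∑ i ∈ range (n + 1),
            (p : A) ^ i * (sLift p A (((G p A)^[n + 1] x').coeff i)) ^ p ^ (n + 1 - i)
          = ∑ i ∈ range (n + 1),
            (p : A) ^ i * (sLift p A (((G p A)^[n + 1] x).coeff i)) ^ p ^ (n + 1 - i) := by
        apply Finset.sum_congr rfl
        intro i hi
        rw [Finset.mem_range, Nat.lt_succ_iff] at hi
        rw [← hw', ← hw, hw'low i hi]
      rw [hsum, Nat.sub_self, pow_zero, pow_one, pow_one, ← hw', ← hw]
      ring
    have hmod : ∃ u, sLift p A (w'.coeff (n + 1))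
        - (sLift p A (w.coeff (n + 1)) + t) = (p : A) * u := by
      have h1 : Ideal.Quotient.mk (Ideal.span {(p : A)}) (sLift p A (w'.coeff (n + 1)))
          = Ideal.Quotient.mk (Ideal.span {(p : A)}) (sLift p A (w.coeff (n + 1)) + t) := by
        rw [sLift_spec, hw'top]
      have h2 := Ideal.Quotient.eq.mp h1
      rwa [Ideal.mem_span_singleton] at h2
    obtain ⟨u, hu⟩ := hmod
    have e0 : sLift p A (w'.coeff (n + 1)) - sLift p A (w.coeff (n + 1))
        = t + (p : A) * u := by rw [← hu]; ring
    have h1 := hPhi x' (n + 1)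
    have h2 := hPhi x (n + 1)
    have heq : a - Phi x' = -((p : A) ^ (n + 2) * u)
        - (Phi x' - phi p A (n + 1) x') + (Phi x - phi p A (n + 1) x) := by
      have e1 : phi p A (n + 1) x' - phi p A (n + 1) x
          = (p : A) ^ (n + 1) * (t + (p : A) * u) := by rw [hphidiff, e0]
      have e2 : a - Phi x' = (a - Phi x) - (phi p A (n + 1) x' - phi p A (n + 1) x)
          - (Phi x' - phi p A (n + 1) x') + (Phi x - phi p A (n + 1) x) := by ring
      rw [e2, ht, e1, pow_succ]
      ring
    rw [heq]
    exact dvd_add (dvd_sub (dvd_neg.mpr (dvd_mul_right _ _)) h1) h2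
  obtain ⟨g, hg0, hgs⟩ : ∃ g : ℕ → WittVector p (A ⧸ Ideal.span {(p : A)}),
      g 0 = WittVector.mk p
        (fun i => if i = 0 then Ideal.Quotient.mk (Ideal.span {(p : A)}) a else 0) ∧
      ∀ n, g (n + 1) = if h : ∃ c, (p : A) ^ (n + 2) ∣
          a - Phi (WittVector.mk p (Function.update (g n).coeff (n + 1) c))
        then WittVector.mk p (Function.update (g n).coeff (n + 1) h.choose)
        else g n :=
    ⟨fun n => Nat.rec
      (WittVector.mk p
        (fun i => if i = 0 then Ideal.Quotient.mk (Ideal.span {(p : A)}) a else 0))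
      (fun n x => if h : ∃ c, (p : A) ^ (n + 2) ∣
          a - Phi (WittVector.mk p (Function.update x.coeff (n + 1) c))
        then WittVector.mk p (Function.update x.coeff (n + 1) h.choose)
        else x) n, rfl, fun n => rfl⟩
  have hInv : ∀ n, (p : A) ^ (n + 1) ∣ a - Phi (g n) := by
    intro n
    induction n with
    | zero =>
      have h1 : Ideal.Quotient.mk (Ideal.span {(p : A)}) (a - Phi (g 0)) = 0 := by
        rw [map_sub, hmk, hg0, WittVector.coeff_mk]
        simp
      have h2 := Ideal.Quotient.eq_zero_iff_mem.mp h1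
      rw [Ideal.mem_span_singleton] at h2
      simpa using h2
    | succ n ih =>
      have hex := key (g n) n ih
      rw [hgs n, dif_pos hex]
      exact hex.choose_spec
  have hagree_step : ∀ n i, i ≤ n → (g (n + 1)).coeff i = (g n).coeff i := by
    intro n i hi
    rw [hgs n]
    split_ifs with h
    · rw [WittVector.coeff_mk, Function.update_of_ne (by omega : i ≠ n + 1)]
    · rfl
  have hagree' : ∀ i m n, i ≤ m → m ≤ n → (g n).coeff i = (g m).coeff i := by
    intro i m n him hmn
    induction n, hmn using Nat.le_induction with
    | base => rfl
    | succ n hmn ih => rw [hagree_step n i (by omega), ih]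
  refine ⟨WittVector.mk p (fun i => (g i).coeff i), ?_⟩
  set xx := WittVector.mk p (fun i => (g i).coeff i) with hxx
  have hxg : ∀ n i, i ≤ n → xx.coeff i = (g n).coeff i := by
    intro n i hi
    rw [hxx, WittVector.coeff_mk]
    exact (hagree' i i n le_rfl hi).symm
  have hfinal : ∀ d : ℕ, (p : A) ^ (d + 1) ∣ a - Phi xx := by
    intro d
    have e : phi p A d xx = phi p A d (g d) := phi_congr p A d (fun i hi => hxg d i hi)
    have hrw : a - Phi xx = (a - Phi (g d)) + (Phi (g d) - phi p A d (g d))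
        - (Phi xx - phi p A d xx) := by rw [← e]; ring
    rw [hrw]
    exact dvd_sub (dvd_add (hInv d) (hPhi (g d) d)) (hPhi xx d)
  have := haus_dvd p A (a - Phi xx) hfinal
  have h5 := sub_eq_zero.mp this
  exact h5.symm

end Limit
theorem main [IsAdicComplete (Ideal.span {(p : A)}) A]
    (htf : ∀ a : A, (p : A) * a = 0 → a = 0)
    [CharP (A ⧸ Ideal.span {(p : A)}) p] [PerfectRing (A ⧸ Ideal.span {(p : A)}) p] :
    ∃ e : WittVector p (A ⧸ Ideal.span {(p : A)}) ≃+* A,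
      ∀ x : WittVector p (A ⧸ Ideal.span {(p : A)}),
        Ideal.Quotient.mk (Ideal.span {(p : A)}) (e x) = x.coeff 0 := by
  choose Phi hPhi using fun x => exists_Phi p A x
  have hmk : ∀ x, Ideal.Quotient.mk (Ideal.span {(p : A)}) (Phi x) = x.coeff 0 := by
    intro x
    have h0 := hPhi x 0
    rw [pow_one, phi_zero_eq] at h0
    obtain ⟨u, hu⟩ := h0
    have h1 : Phi x = sLift p A (x.coeff 0) + (p : A) * u := by rw [← hu]; ring
    have hp0 : Ideal.Quotient.mk (Ideal.span {(p : A)}) ((p : A)) = 0 :=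
      Ideal.Quotient.eq_zero_iff_mem.mpr (Ideal.mem_span_singleton_self _)
    rw [h1, map_add, map_mul, sLift_spec, hp0, zero_mul, add_zero]
  have hdall : ∀ b : A, (∀ d : ℕ, (p : A) ^ (d + 1) ∣ b) → b = 0 := haus_dvd p A
  have hadd : ∀ x y, Phi (x + y) = Phi x + Phi y := by
    intro x y
    refine sub_eq_zero.mp (hdall _ fun d => ?_)
    have h1 := hPhi (x + y) d
    have h2 := hPhi x d
    have h3 := hPhi y d
    have h4 := phi_add p A d x y
    have hrw : Phi (x + y) - (Phi x + Phi y)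
        = (Phi (x + y) - phi p A d (x + y)) - (Phi x - phi p A d x) - (Phi y - phi p A d y)
          + (phi p A d (x + y) - (phi p A d x + phi p A d y)) := by ring
    rw [hrw]
    exact dvd_add (dvd_sub (dvd_sub h1 h2) h3) h4
  have hmul : ∀ x y, Phi (x * y) = Phi x * Phi y := by
    intro x y
    refine sub_eq_zero.mp (hdall _ fun d => ?_)
    have h1 := hPhi (x * y) d
    have h2 := hPhi x d
    have h3 := hPhi y d
    have h4 := phi_mul p A d x y
    have hrw : Phi (x * y) - Phi x * Phi y
        = (Phi (x * y) - phi p A d (x * y))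
          - (Phi x - phi p A d x) * phi p A d y
          - Phi x * (Phi y - phi p A d y)
          + (phi p A d (x * y) - phi p A d x * phi p A d y) := by ring
    rw [hrw]
    exact dvd_add (dvd_sub (dvd_sub h1 (Dvd.dvd.mul_right h2 _)) (Dvd.dvd.mul_left h3 _)) h4
  have hone : Phi 1 = 1 := by
    refine sub_eq_zero.mp (hdall _ fun d => ?_)
    have h1 := hPhi 1 d
    have h4 := phi_one p A d
    have hrw : Phi 1 - 1 = (Phi 1 - phi p A d 1) + (phi p A d 1 - 1) := by ring
    rw [hrw]
    exact dvd_add h1 h4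
  have hsub : ∀ x y, Phi (x - y) = Phi x - Phi y := by
    intro x y
    have h1 := hadd (x - y) y
    rw [sub_add_cancel] at h1
    exact eq_sub_of_add_eq h1.symm
  have hinj : Function.Injective Phi := by
    intro x y hxy
    have h1 : Phi (x - y) = 0 := by rw [hsub, hxy, sub_self]
    have h2 := Phi_inj p A htf Phi hPhi h1
    exact sub_eq_zero.mp h2
  have hsurj : Function.Surjective Phi := fun a => Phi_surj p A Phi hPhi hmk a
  let e0 : WittVector p (A ⧸ Ideal.span {(p : A)}) →+* A :=
    RingHom.mk' (MonoidHom.mk (OneHom.mk Phi hone) hmul) hadd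
  exact ⟨RingEquiv.ofBijective e0 ⟨hinj, hsurj⟩, fun x => hmk x⟩

end Stmt14Aux

/-- for a `p`-torsion free, `p`-adically complete commutative ring `A` with
`A/p` a perfect `𝔽_p`-algebra, the `p`-typical Witt vectors `W_p(A/p)` are isomorphic to
`A` (by the inverse limit of the ghost maps; in particular the isomorphism reduces mod `p`
to the zeroth Witt component).  In particular `W_p(𝔽_p) ≅ ℤ_p`. -/
theorem stmt14 (p : ℕ) [hp : Fact p.Prime] (A : Type*) [CommRing A]
    (htf : ∀ a : A, (p : A) * a = 0 → a = 0)
    [IsAdicComplete (Ideal.span {(p : A)}) A]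
    (hperf : Function.Bijective
      (fun a : A ⧸ Ideal.span {(p : A)} => a ^ p)) :
    (∃ e : WittVector p (A ⧸ Ideal.span {(p : A)}) ≃+* A,
      ∀ x : WittVector p (A ⧸ Ideal.span {(p : A)}),
        Ideal.Quotient.mk (Ideal.span {(p : A)}) (e x) = x.coeff 0) ∧
    Nonempty (WittVector p (ZMod p) ≃+* ℤ_[p]) := by
  constructor
  · rcases subsingleton_or_nontrivial A with hA | hA
    · haveI : Subsingleton (A ⧸ Ideal.span {(p : A)}) :=
        Quotient.instSubsingletonQuotient _
      haveI : Subsingleton (WittVector p (A ⧸ Ideal.span {(p : A)})) :=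
        ⟨fun a b => WittVector.ext fun n => Subsingleton.elim _ _⟩
      refine ⟨{ toFun := fun _ => 0, invFun := fun _ => 0,
                left_inv := fun x => Subsingleton.elim _ _,
                right_inv := fun x => Subsingleton.elim _ _,
                map_mul' := fun _ _ => Subsingleton.elim _ _,
                map_add' := fun _ _ => Subsingleton.elim _ _ },
        fun x => Subsingleton.elim _ _⟩
    · haveI hnt : Nontrivial (A ⧸ Ideal.span {(p : A)}) := by
        rcases subsingleton_or_nontrivial (A ⧸ Ideal.span {(p : A)}) with h | h
        · exfalso
          have h1 : (p : A) ∣ 1 := by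
            have h2 : Ideal.Quotient.mk (Ideal.span {(p : A)}) (1 : A) = 0 :=
              Subsingleton.elim _ _
            have h3 := Ideal.Quotient.eq_zero_iff_mem.mp h2
            rwa [Ideal.mem_span_singleton] at h3
          obtain ⟨u, hu⟩ := h1
          have hall : ∀ a : A, a = 0 := by
            intro a
            apply Stmt14Aux.haus_dvd p A a
            intro d
            refine ⟨u ^ (d + 1) * a, ?_⟩
            rw [← mul_assoc, ← mul_pow, ← hu, one_pow, one_mul]
          exact one_ne_zero (hall 1)
        · exact h
      haveI hchar : CharP (A ⧸ Ideal.span {(p : A)}) p := by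
        apply (CharP.charP_iff_prime_eq_zero hp.out).mpr
        have : ((p : ℕ) : A ⧸ Ideal.span {(p : A)})
            = Ideal.Quotient.mk (Ideal.span {(p : A)}) ((p : A)) := by
          rw [map_natCast]
        rw [this]
        exact Ideal.Quotient.eq_zero_iff_mem.mpr (Ideal.mem_span_singleton_self _)
      haveI : ExpChar (A ⧸ Ideal.span {(p : A)}) p := ExpChar.prime hp.out
      haveI : PerfectRing (A ⧸ Ideal.span {(p : A)}) p := by
        constructor
        have hfr : ⇑(frobenius (A ⧸ Ideal.span {(p : A)}) p)
            = fun a : A ⧸ Ideal.span {(p : A)} => a ^ p :=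
          funext fun a => frobenius_def _ _
        exact hperf
      exact Stmt14Aux.main p A htf
  · exact ⟨WittVector.equiv p⟩
end
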